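/- arXiv:math/0512010 — 4 statements merged into one kernel-verified Lean document; each statement's English description precedes it below -/
import Mathlib

section
/- Let G₁ and G₂ be two independent random graphs on the vertex set {1,…,n}, each distributed as G(n, m(n)). For every ε > 0, if m(n) ≤ (1/2 − ε)n for all n, then the probability that G₁ and G₂ admit disjoint covers tends to 1 as n → ∞. -/
open Filter Finset

open scoped Classical

/-- Two hypergraphs (given by their edge sets) on the vertex set `{1,…,n}`
admit disjoint covers. -/
def DisjointCovers {n : ℕ} (H₁ H₂ : Finset (Finset (Fin n))) : Prop :=
  ∃ C₁ C₂ : Finset (Fin n), Disjoint C₁ C₂ ∧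
    (∀ e ∈ H₁, ∃ v ∈ e, v ∈ C₁) ∧ (∀ e ∈ H₂, ∃ v ∈ e, v ∈ C₂)

/-- The set of all `k`-uniform hypergraphs on `{1,…,n}` with exactly `m` edges;
the distribution `H_k(n,m)` is uniform on this set. -/
noncomputable def hypSpace (n k m : ℕ) : Finset (Finset (Finset (Fin n))) :=
  Finset.univ.filter (fun H => (∀ e ∈ H, e.card = k) ∧ H.card = m)

/-- The probability that two independent random `k`-uniform hypergraphs, each
distributed as `H_k(n,m)`, admit disjoint covers. -/
noncomputable def probDC (n k m : ℕ) : ℝ :=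
  (((hypSpace n k m ×ˢ hypSpace n k m).filter
      (fun p => DisjointCovers p.1 p.2)).card : ℝ) /
    ((hypSpace n k m ×ˢ hypSpace n k m).card : ℝ)

namespace DCAux

variable {n : ℕ}

abbrev Lit (n : ℕ) := Fin n × Bool

def negL (l : Lit n) : Lit n := (l.1, !l.2)

def stepRel (H₁ H₂ : Finset (Finset (Fin n))) (l l' : Lit n) : Prop :=
  l'.2 = !l.2 ∧ ({l.1, l'.1} : Finset (Fin n)) ∈ (if l'.2 then H₁ else H₂)

abbrev Reach (H₁ H₂ : Finset (Finset (Fin n))) := Relation.ReflTransGen (stepRel H₁ H₂)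

lemma stepRel_skew {H₁ H₂ : Finset (Finset (Fin n))} {l l' : Lit n}
    (h : stepRel H₁ H₂ l l') : stepRel H₁ H₂ (negL l') (negL l) := by
  obtain ⟨h1, h2⟩ := h
  refine ⟨by simp [negL, h1], ?_⟩
  have hb : (!l.2) = l'.2 := by simp [h1]
  simp only [negL]
  have he : (if (!l.2) = true then H₁ else H₂) = (if l'.2 = true then H₁ else H₂) := by rw [hb]
  have h3 : ({l'.1, l.1} : Finset (Fin n)) ∈ (if l'.2 = true then H₁ else H₂) := by
    rw [Finset.pair_comm]; exact h2
  rw [h1] at h3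
  exact h3

lemma Reach_skew {H₁ H₂ : Finset (Finset (Fin n))} {l l' : Lit n}
    (h : Reach H₁ H₂ l l') : Reach H₁ H₂ (negL l') (negL l) := by
  induction h with
  | refl => exact .refl
  | tail _ hbc ih => exact Relation.ReflTransGen.head (stepRel_skew hbc) ih

def IsClosed (H₁ H₂ : Finset (Finset (Fin n))) (T : Finset (Lit n)) : Prop :=
  ∀ l ∈ T, ∀ l', stepRel H₁ H₂ l l' → l' ∈ T

def IsCons (T : Finset (Lit n)) : Prop :=
  ∀ a : Fin n, ¬ (((a, true) ∈ T) ∧ ((a, false) ∈ T))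

lemma closed_reach {H₁ H₂ : Finset (Finset (Fin n))} {T : Finset (Lit n)}
    (hT : IsClosed H₁ H₂ T) {l l' : Lit n}
    (h : Reach H₁ H₂ l l') (hl : l ∈ T) : l' ∈ T := by
  induction h with
  | refl => exact hl
  | tail _ hbc ih => exact hT _ ih _ hbc

lemma disjointCovers_of_noContra (H₁ H₂ : Finset (Finset (Fin n)))
    (hc1 : ∀ e ∈ H₁, e.card = 2) (hc2 : ∀ e ∈ H₂, e.card = 2)
    (h : ∀ a : Fin n, ¬ (Reach H₁ H₂ (a, true) (a, false) ∧
          Reach H₁ H₂ (a, false) (a, true))) :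
    DisjointCovers H₁ H₂ := by
  classical
  set F : Finset (Finset (Lit n)) :=
    univ.filter (fun T => IsClosed H₁ H₂ T ∧ IsCons T) with hF
  have hFne : F.Nonempty := by
    refine ⟨∅, ?_⟩
    simp only [hF, mem_filter, mem_univ, true_and]
    exact ⟨fun l hl => by simp at hl, fun a ha => by simp at ha⟩
  obtain ⟨T, hTF, hTmax⟩ := F.exists_max_image (fun T => T.card) hFne
  have hTclosed : IsClosed H₁ H₂ T := ((mem_filter.1 hTF).2).1
  have hTcons : IsCons T := ((mem_filter.1 hTF).2).2
  -- totality
  have htot : ∀ v : Fin n, (v, true) ∈ T ∨ (v, false) ∈ T := by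
    by_contra hc
    push_neg at hc
    obtain ⟨v, hv1, hv2⟩ := hc
    -- choose a sign s with ¬ Reach (v,s) (v,!s)
    have hs : ∃ s : Bool, ¬ Reach H₁ H₂ (v, s) (v, !s) := by
      by_cases hr : Reach H₁ H₂ (v, true) (v, false)
      · exact ⟨false, fun hr' => h v ⟨hr, by simpa using hr'⟩⟩
      · exact ⟨true, by simpa using hr⟩
    obtain ⟨s, hsnr⟩ := hs
    set R : Finset (Lit n) := univ.filter (fun l' => Reach H₁ H₂ (v, s) l') with hR
    have hmemR : ∀ l', l' ∈ R ↔ Reach H₁ H₂ (v, s) l' := by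
      intro l'; simp [hR]
    set T' : Finset (Lit n) := T ∪ R with hT'
    have hT'closed : IsClosed H₁ H₂ T' := by
      intro l hl l' hstep
      rcases mem_union.1 hl with hl | hl
      · exact mem_union_left _ (hTclosed l hl l' hstep)
      · exact mem_union_right _ ((hmemR l').2 (((hmemR l).1 hl).tail hstep))
    have hvnotT : ∀ u : Bool, (v, u) ∉ T := by
      intro u; cases u
      · exact hv2
      · exact hv1
    have hT'cons : IsCons T' := by
      intro a ⟨hat, haf⟩
      rcases mem_union.1 hat with hat | hat <;> rcases mem_union.1 haf with haf | haf
      · exact hTcons a ⟨hat, haf⟩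
      · -- (a,true) ∈ T, Reach (v,s) (a,false)
        have h2 := Reach_skew ((hmemR _).1 haf)
        -- negL (a,false) = (a,true), negL (v,s) = (v,!s)
        have : ((v, !s) : Lit n) ∈ T := closed_reach hTclosed h2 (by simpa [negL] using hat)
        exact hvnotT _ this
      · have h2 := Reach_skew ((hmemR _).1 hat)
        have : ((v, !s) : Lit n) ∈ T := closed_reach hTclosed h2 (by simpa [negL] using haf)
        exact hvnotT _ this
      · have h1 := (hmemR _).1 hat
        have h2 := Reach_skew ((hmemR _).1 haf)
        have h2' : Reach H₁ H₂ (a, true) (v, !s) := by simpa [negL] using h2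
        exact hsnr (h1.trans h2')
    have hT'F : T' ∈ F := by
      simp only [hF, mem_filter, mem_univ, true_and]
      exact ⟨hT'closed, hT'cons⟩
    have hvs : (v, s) ∈ T' := mem_union_right _ ((hmemR _).2 .refl)
    have hlt : T.card < T'.card := by
      apply card_lt_card
      refine ⟨subset_union_left, fun hsub => ?_⟩
      exact hvnotT s (hsub hvs)
    exact absurd (hTmax T' hT'F) (by omega)
  -- build the covers
  set C : Finset (Fin n) := univ.filter (fun v => (v, true) ∈ T) with hC
  refine ⟨C, Cᶜ, disjoint_compl_right, ?_, ?_⟩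
  · intro e he
    obtain ⟨x, y, hxy, rfl⟩ := Finset.card_eq_two.1 (hc1 e he)
    by_cases hx : x ∈ C
    · exact ⟨x, by simp, hx⟩
    by_cases hy : y ∈ C
    · exact ⟨y, by simp, hy⟩
    exfalso
    have hxf : (x, false) ∈ T := by
      rcases htot x with h' | h'
      · exact absurd (by simpa [hC] using h') hx
      · exact h'
    have hstep : stepRel H₁ H₂ (x, false) (y, true) := ⟨by simp, by simpa using he⟩
    exact hy (by simpa [hC] using hTclosed _ hxf _ hstep)
  · intro e he
    obtain ⟨x, y, hxy, rfl⟩ := Finset.card_eq_two.1 (hc2 e he)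
    by_cases hx : x ∈ C
    · by_cases hy : y ∈ C
      · exfalso
        have hxt : (x, true) ∈ T := by simpa [hC] using hx
        have hstep : stepRel H₁ H₂ (x, true) (y, false) := ⟨by simp, by simpa using he⟩
        have hyf : (y, false) ∈ T := hTclosed _ hxt _ hstep
        have hyt : (y, true) ∈ T := by simpa [hC] using hy
        exact hTcons y ⟨hyt, hyf⟩
      · exact ⟨y, by simp, by simpa using hy⟩
    · exact ⟨x, by simp, by simpa using hx⟩



lemma reach_chain {H₁ H₂ : Finset (Finset (Fin n))} {x y : Lit n} (h : Reach H₁ H₂ x y) :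
    ∃ (k : ℕ) (g : ℕ → Lit n), g 0 = x ∧ g k = y ∧
      ∀ i < k, stepRel H₁ H₂ (g i) (g (i+1)) := by
  induction h with
  | refl => exact ⟨0, fun _ => x, rfl, rfl, by omega⟩
  | @tail b c hab hbc ih =>
    obtain ⟨k, g, h0, hk, hs⟩ := ih
    refine ⟨k+1, fun i => if i ≤ k then g i else c, by simp [h0], by simp, ?_⟩
    intro i hi
    rcases Nat.lt_or_ge i k with h' | h'
    · simpa [Nat.le_of_lt h', Nat.succ_le_of_lt h'] using hs i h'
    · have hik : i = k := by omega
      subst hik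
      simpa [hk] using hbc

lemma exists_badwalk {H₁ H₂ : Finset (Finset (Fin n))} {a : Fin n}
    (h1 : Reach H₁ H₂ (a, true) (a, false)) (h2 : Reach H₁ H₂ (a, false) (a, true)) :
    ∃ (L : ℕ) (W : ℕ → Lit n), 2 ≤ L ∧ (∀ i, stepRel H₁ H₂ (W i) (W (i+1))) ∧
      (∀ i, W (i + L) = W i) ∧
      ∃ p q : ℕ, (W p).1 = (W q).1 ∧ (W p).2 ≠ (W q).2 := by
  obtain ⟨k₁, g₁, hg10, hg1k, hs1⟩ := reach_chain h1
  obtain ⟨k₂, g₂, hg20, hg2k, hs2⟩ := reach_chain h2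
  have hk1 : 1 ≤ k₁ := by
    rcases Nat.eq_zero_or_pos k₁ with h | h
    · exfalso; rw [h] at hg1k; rw [hg10] at hg1k; simp at hg1k
    · exact h
  have hk2 : 1 ≤ k₂ := by
    rcases Nat.eq_zero_or_pos k₂ with h | h
    · exfalso; rw [h] at hg2k; rw [hg20] at hg2k; simp at hg2k
    · exact h
  set L := k₁ + k₂ with hLdef
  set h : ℕ → Lit n := fun i => if i < k₁ then g₁ i else g₂ (i - k₁) with hhdef
  have hL : 2 ≤ L := by omega
  have hh0 : h 0 = (a, true) := by
    have h0k : (0:ℕ) < k₁ := by omega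
    simp [hhdef, h0k, hg10]
  have hhL : h L = (a, true) := by
    have : ¬ L < k₁ := by omega
    simp [hhdef, this, hLdef, hg2k]
  have hhk1 : h k₁ = (a, false) := by
    have : ¬ k₁ < k₁ := by omega
    simp [hhdef, this, hg20]
  have hstep' : ∀ j < L, stepRel H₁ H₂ (h j) (h (j+1)) := by
    intro j hj
    rcases Nat.lt_or_ge (j+1) k₁ with h' | h'
    · have hjk : j < k₁ := by omega
      simpa [hhdef, hjk, h'] using hs1 j hjk
    · rcases Nat.lt_or_ge j k₁ with h'' | h''
      · have hjk : j + 1 = k₁ := by omega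
        have : h (j+1) = g₁ (j+1) := by
          have hnl : ¬ (j+1 < k₁) := by omega
          simp [hhdef, hnl, hjk, hg20, ← hg1k, hjk]
        rw [this]
        simpa [hhdef, h''] using hs1 j h''
      · have hnl : ¬ (j < k₁) := by omega
        have hnl2 : ¬ (j + 1 < k₁) := by omega
        have harith : j + 1 - k₁ = (j - k₁) + 1 := by omega
        have hlt : j - k₁ < k₂ := by omega
        simpa [hhdef, hnl, hnl2, harith] using hs2 _ hlt
  refine ⟨L, fun i => h (i % L), hL, ?_, ?_, L, k₁, ?_, ?_⟩
  · intro i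
    show stepRel H₁ H₂ (h (i % L)) (h ((i+1) % L))
    have hiL : i % L < L := Nat.mod_lt _ (by omega)
    rcases Nat.lt_or_ge (i % L + 1) L with h' | h'
    · have h1L : 1 % L = 1 := Nat.mod_eq_of_lt (by omega)
      have : (i+1) % L = i % L + 1 := by
        rw [Nat.add_mod_of_add_mod_lt (by omega)]
        omega
      rw [this]
      exact hstep' _ hiL
    · have he : i % L + 1 = L := by omega
      have h1L : 1 % L = 1 := Nat.mod_eq_of_lt (by omega)
      have : (i+1) % L = 0 := by
        rw [Nat.add_mod, h1L, he, Nat.mod_self]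
      rw [this]
      have := hstep' (i % L) hiL
      rw [he, hhL, ← hh0] at this
      exact this
  · intro i; show h ((i + L) % L) = h (i % L); rw [Nat.add_mod_right]
  · show (h (L % L)).1 = (h (k₁ % L)).1
    have e1 : L % L = 0 := Nat.mod_self _
    have e2 : k₁ % L = k₁ := Nat.mod_eq_of_lt (by omega)
    rw [e1, e2, hh0, hhk1]
  · show (h (L % L)).2 ≠ (h (k₁ % L)).2
    have e1 : L % L = 0 := Nat.mod_self _
    have e2 : k₁ % L = k₁ := Nat.mod_eq_of_lt (by omega)
    rw [e1, e2, hh0, hhk1]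
    simp




lemma step_var_ne {H₁ H₂ : Finset (Finset (Fin n))}
    (hc1 : ∀ e ∈ H₁, e.card = 2) (hc2 : ∀ e ∈ H₂, e.card = 2)
    {l l' : Lit n} (h : stepRel H₁ H₂ l l') : l.1 ≠ l'.1 := by
  obtain ⟨h1, h2⟩ := h
  intro heq
  have hcard : ({l.1, l'.1} : Finset (Fin n)).card = 2 := by
    split at h2
    · exact hc1 _ h2
    · exact hc2 _ h2
  rw [heq] at hcard
  simp at hcard

def sigfn (s : Bool) (j : ℕ) : Bool := if j % 2 = 0 then s else !s

lemma sigfn_zero (s : Bool) : sigfn s 0 = s := by simp [sigfn]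

lemma sigfn_succ (s : Bool) (j : ℕ) : sigfn s (j+1) = !(sigfn s j) := by
  rcases Nat.mod_two_eq_zero_or_one j with h | h
  · have h2 : (j+1) % 2 = 1 := by omega
    simp [sigfn, h, h2]
  · have h2 : (j+1) % 2 = 0 := by omega
    simp [sigfn, h, h2]

lemma sigfn_parity {s : Bool} {j k : ℕ} (h : sigfn s j = sigfn s k) : j % 2 = k % 2 := by
  rcases Nat.mod_two_eq_zero_or_one j with hj | hj <;>
    rcases Nat.mod_two_eq_zero_or_one k with hk | hk <;>
    simp [sigfn, hj, hk] at h ⊢ <;> omega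

/-- The colored-edge certificate set for a bicycle. -/
def certSet (u : ℕ → Fin n) (t a b : ℕ) (s : Bool) : Finset (Finset (Fin n) × Bool) :=
  insert ({u a, u 0}, s)
    (insert ({u (t-1), u b}, sigfn s t)
      ((Finset.range (t-1)).image
        (fun j => (({u j, u (j+1)} : Finset (Fin n)), sigfn s (j+1)))))

/-- A "bicycle" certificate: `t` distinct vertices carrying `t+1` distinct
alternatingly-colored clauses, all present in the pair of graphs. -/
def BadCert (H₁ H₂ : Finset (Finset (Fin n))) : Prop :=
  ∃ t : ℕ, 2 ≤ t ∧ t ≤ n ∧ ∃ u : ℕ → Fin n, (∀ j, u j = u (j % t)) ∧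
    ∃ a b : ℕ, a < t ∧ b < t ∧ ∃ s : Bool,
      (certSet u t a b s).card = t + 1 ∧
      ∀ c ∈ certSet u t a b s, c.1 ∈ (if c.2 then H₁ else H₂)

theorem badcert_of_badwalk {H₁ H₂ : Finset (Finset (Fin n))}
    (hc1 : ∀ e ∈ H₁, e.card = 2) (hc2 : ∀ e ∈ H₂, e.card = 2)
    (L : ℕ) (W : ℕ → Lit n) (hL : 2 ≤ L)
    (hW : ∀ i, stepRel H₁ H₂ (W i) (W (i+1)))
    (hper : ∀ i, W (i + L) = W i)
    (p q : ℕ) (hpq1 : (W p).1 = (W q).1) (hpq2 : (W p).2 ≠ (W q).2) :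
    BadCert H₁ H₂ := by
  classical
  have hrep : ∀ i : ℕ, ∃ j, 0 < j ∧ ∃ k, k < j ∧ (W (i+k)).1 = (W (i+j)).1 := by
    intro i
    have hcard : Fintype.card (Fin n) < Fintype.card (Fin (n+1)) := by simp
    obtain ⟨x, y, hxy, heq⟩ := Fintype.exists_ne_map_eq_of_card_lt
      (fun k : Fin (n+1) => (W (i + (k : ℕ))).1) hcard
    rcases Nat.lt_or_ge (x : ℕ) (y : ℕ) with h | h
    · exact ⟨y, by omega, x, h, heq⟩
    · have h' : (y : ℕ) < (x : ℕ) := by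
        rcases Nat.lt_or_ge (y : ℕ) (x : ℕ) with h2 | h2
        · exact h2
        · exact absurd (Fin.ext (by omega)) hxy
      exact ⟨x, by omega, y, h', heq.symm⟩
  set t : ℕ → ℕ := fun i => Nat.find (hrep i) with ht
  have tspec : ∀ i, 0 < t i ∧ ∃ k, k < t i ∧ (W (i+k)).1 = (W (i + t i)).1 :=
    fun i => Nat.find_spec (hrep i)
  have winj : ∀ i, ∀ k j, k < j → j < t i → (W (i+k)).1 ≠ (W (i+j)).1 := by
    intro i k j hkj hj heq
    exact Nat.find_min (hrep i) hj ⟨by omega, k, hkj, heq⟩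
  have t2 : ∀ i, 2 ≤ t i := by
    intro i
    have h1 := (tspec i).1
    by_contra hle
    have hte : t i = 1 := by omega
    obtain ⟨k, hk, heq⟩ := (tspec i).2
    rw [hte] at hk heq
    have hk0 : k = 0 := by omega
    rw [hk0] at heq
    exact step_var_ne hc1 hc2 (hW i) (by simpa using heq)
  have tper : ∀ i, t (i + L) = t i := by
    intro i
    have hWs : ∀ k, W (i + L + k) = W (i + k) := by
      intro k
      have h' : i + L + k = (i + k) + L := by ring
      rw [h', hper]
    apply le_antisymm
    · apply Nat.find_min'
      obtain ⟨h1, k, hk, heq⟩ := tspec i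
      exact ⟨h1, k, hk, by rw [hWs, hWs]; exact heq⟩
    · apply Nat.find_min'
      obtain ⟨h1, k, hk, heq⟩ := tspec (i+L)
      refine ⟨h1, k, hk, ?_⟩
      rw [← hWs, ← hWs]
      exact heq
  set BM : ℕ → Prop := fun j => ∃ k, k < t (j+1) ∧ (W j).1 = (W (j+1+k)).1 with hBM
  set Deg : ℕ → Prop :=
    fun j => W (j+1+t (j+1)) = W (j+1) ∧ W j = W (j + t (j+1)) with hDeg
  by_cases hex : ∃ j, BM j ∧ ¬ Deg j
  · -- nondegenerate window: build the certificate
    obtain ⟨j, hbmj, hndeg⟩ := hex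
    obtain ⟨ka, hka, hkaeq⟩ := hbmj
    set i := j + 1 with hi
    set tt := t i with htt
    obtain ⟨kb, hkb, hkbeq⟩ := (tspec i).2
    set s := (W i).2 with hs
    set u : ℕ → Fin n := fun r => (W (i + r % tt)).1 with hu
    have h2t : 2 ≤ tt := t2 i
    have hmod : ∀ r, r < tt → u r = (W (i+r)).1 := by
      intro r hr
      simp [hu, Nat.mod_eq_of_lt hr]
    have uinj : ∀ r r', r < tt → r' < tt → u r = u r' → r = r' := by
      intro r r' hr hr' heq
      rw [hmod r hr, hmod r' hr'] at heq
      rcases lt_trichotomy r r' with h | h | h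
      · exact absurd heq (winj i r r' h hr')
      · exact h
      · exact absurd heq.symm (winj i r' r h hr)
    have htn : tt ≤ n := by
      have hinj : Function.Injective (fun r : Fin tt => (W (i + (r : ℕ))).1) := by
        intro r r' heq
        exact Fin.ext (by
          have := uinj r r' r.2 r'.2 (by rw [hmod _ r.2, hmod _ r'.2]; exact heq)
          exact this)
      simpa using Fintype.card_le_of_injective _ hinj
    have hsig : ∀ r, (W (i+r)).2 = sigfn s r := by
      intro r
      induction r with
      | zero => simp [sigfn_zero, hs]
      | succ r ih =>
        have h' := (hW (i+r)).1
        have h'' : i + (r+1) = (i + r) + 1 := by ring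
        rw [h'', h', ih, sigfn_succ]
    -- the pieces
    have hka' : u ka = (W j).1 := by
      rw [hmod ka hka]
      have : i + ka = j + 1 + ka := by rw [hi]
      rw [this]
      exact hkaeq.symm
    have hu0 : u 0 = (W i).1 := by
      have := hmod 0 (by omega)
      simpa using this
    have hutt1 : u (tt - 1) = (W (j + tt)).1 := by
      rw [hmod (tt-1) (by omega)]
      have : i + (tt - 1) = j + tt := by omega
      rw [this]
    have hukb : u kb = (W (i + tt)).1 := by
      rw [hmod kb hkb]
      exact hkbeq
    have hsigtt : (W (i + tt)).2 = sigfn s tt := hsig tt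
    have hWj2 : (W j).2 = !s := by
      have h' := (hW j).1
      have : (W (j+1)).2 = s := rfl
      have h'' : (W i).2 = !(W j).2 := h'
      rw [hs, h'', Bool.not_not]
    -- presence of all certificate clauses
    have hpres : ∀ c ∈ certSet u tt ka kb s, c.1 ∈ (if c.2 then H₁ else H₂) := by
      intro c hc
      rcases Finset.mem_insert.1 hc with rfl | hc
      · -- e₀
        have hstep := hW j
        have hmem := hstep.2
        have h1 : (W (j+1)).2 = s := rfl
        rw [h1] at hmem
        simp only
        rw [hka', hu0]
        exact hmem
      rcases Finset.mem_insert.1 hc with rfl | hc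
      · -- e₁
        have hstep := hW (j + tt)
        have hmem := hstep.2
        have hidx : j + tt + 1 = i + tt := by omega
        rw [hidx] at hmem
        rw [hsigtt] at hmem
        simp only
        rw [hutt1, hukb]
        exact hmem
      · obtain ⟨j', hj', rfl⟩ := Finset.mem_image.1 hc
        have hj'lt : j' < tt - 1 := Finset.mem_range.1 hj'
        have hstep := hW (i + j')
        have hmem := hstep.2
        have hidx : i + j' + 1 = i + (j' + 1) := by ring
        rw [hidx] at hmem
        rw [hsig (j'+1)] at hmem
        simp only
        rw [hmod j' (by omega), hmod (j'+1) (by omega)]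
        exact hmem
    -- cardinality
    have hpairinj : ∀ r r', r < tt - 1 → r' < tt - 1 →
        ({u r, u (r+1)} : Finset (Fin n)) = {u r', u (r'+1)} → r = r' := by
      intro r r' hr hr' hpair
      have hm1 : u r ∈ ({u r', u (r'+1)} : Finset (Fin n)) := by
        rw [← hpair]; exact Finset.mem_insert_self _ _
      have hm2 : u (r+1) ∈ ({u r', u (r'+1)} : Finset (Fin n)) := by
        rw [← hpair]
        exact Finset.mem_insert_of_mem (Finset.mem_singleton_self _)
      rcases Finset.mem_insert.1 hm1 with h1 | h1 <;>
        [skip; rw [Finset.mem_singleton] at h1] <;>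
        rcases Finset.mem_insert.1 hm2 with h2 | h2 <;>
        [skip; rw [Finset.mem_singleton] at h2; skip; rw [Finset.mem_singleton] at h2]
      · exact uinj r r' (by omega) (by omega) h1
      · exact uinj r r' (by omega) (by omega) h1
      · have e1 := uinj r (r'+1) (by omega) (by omega) h1
        have e2 := uinj (r+1) r' (by omega) (by omega) h2
        omega
      · have e1 := uinj r (r'+1) (by omega) (by omega) h1
        have e2 := uinj (r+1) (r'+1) (by omega) (by omega) h2
        omega
    have himg : ((Finset.range (tt-1)).image
        (fun r => (({u r, u (r+1)} : Finset (Fin n)), sigfn s (r+1)))).card = tt - 1 := by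
      rw [Finset.card_image_of_injOn, Finset.card_range]
      intro r hr r' hr' heq
      have hpair : ({u r, u (r+1)} : Finset (Fin n)) = {u r', u (r'+1)} :=
        congrArg Prod.fst heq
      exact hpairinj r r' (Finset.mem_range.1 hr) (Finset.mem_range.1 hr') hpair
    have he1img : (({u (tt-1), u kb}, sigfn s tt) : Finset (Fin n) × Bool) ∉
        ((Finset.range (tt-1)).image
          (fun r => (({u r, u (r+1)} : Finset (Fin n)), sigfn s (r+1)))) := by
      intro hmem
      obtain ⟨r, hr, heq⟩ := Finset.mem_image.1 hmem
      have hrlt : r < tt - 1 := Finset.mem_range.1 hr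
      have hsigeq : sigfn s (r+1) = sigfn s tt := congrArg Prod.snd heq
      have hpar := sigfn_parity hsigeq
      have hpair : ({u r, u (r+1)} : Finset (Fin n)) = {u (tt-1), u kb} :=
        congrArg Prod.fst heq
      have hm : u (tt-1) ∈ ({u r, u (r+1)} : Finset (Fin n)) := by
        rw [hpair]; exact Finset.mem_insert_self _ _
      rcases Finset.mem_insert.1 hm with h1 | h1
      · have := uinj (tt-1) r (by omega) (by omega) h1
        omega
      · rw [Finset.mem_singleton] at h1
        have := uinj (tt-1) (r+1) (by omega) (by omega) h1
        omega
    have he0ne1 : (({u ka, u 0}, s) : Finset (Fin n) × Bool) ≠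
        ({u (tt-1), u kb}, sigfn s tt) := by
      intro heq
      have hsigeq : s = sigfn s tt := congrArg Prod.snd heq
      have hpar : 0 % 2 = tt % 2 := by
        have : sigfn s 0 = sigfn s tt := by rw [sigfn_zero]; exact hsigeq
        exact sigfn_parity this
      have hpair : ({u ka, u 0} : Finset (Fin n)) = {u (tt-1), u kb} :=
        congrArg Prod.fst heq
      -- derive ka = tt-1
      have hm : u (tt-1) ∈ ({u ka, u 0} : Finset (Fin n)) := by
        rw [hpair]; exact Finset.mem_insert_self _ _
      have hkatt : ka = tt - 1 := by
        rcases Finset.mem_insert.1 hm with h1 | h1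
        · have := uinj (tt-1) ka (by omega) (by omega) h1
          omega
        · rw [Finset.mem_singleton] at h1
          have := uinj (tt-1) 0 (by omega) (by omega) h1
          omega
      have hkb0 : kb = 0 := by
        have hm2 : u kb ∈ ({u ka, u 0} : Finset (Fin n)) := by
          rw [hpair]
          exact Finset.mem_insert_of_mem (Finset.mem_singleton_self _)
        rcases Finset.mem_insert.1 hm2 with h1 | h1
        · -- u kb = u ka : kb = ka = tt-1, pair degenerates
          exfalso
          have hkbka : kb = ka := uinj kb ka (by omega) (by omega) h1
          rw [hkatt] at hkbka
          rw [hkbka] at hpair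
          have : u 0 ∈ ({u (tt-1), u (tt-1)} : Finset (Fin n)) := by
            rw [← hpair]
            exact Finset.mem_insert_of_mem (Finset.mem_singleton_self _)
          simp only [Finset.insert_idem, Finset.mem_insert, Finset.mem_singleton] at this
          rcases this with h' | h' <;>
          · have := uinj 0 (tt-1) (by omega) (by omega) h'
            omega
        · rw [Finset.mem_singleton] at h1
          exact uinj kb 0 (by omega) (by omega) h1
      -- degenerate: contradiction
      apply hndeg
      constructor
      · -- W (j+1+tt) = W (j+1)
        have hf : (W (i + tt)).1 = (W i).1 := by
          rw [← hukb, hkb0, hu0]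
        have hsnd : (W (i + tt)).2 = (W i).2 := by
          rw [hsigtt, ← hsigeq]
        have : W (i + tt) = W i := Prod.ext hf hsnd
        exact this
      · -- W j = W (j + tt)
        have hf : (W j).1 = (W (j + tt)).1 := by
          rw [← hka', hkatt, hutt1]
        have hstt1 : sigfn s (tt - 1) = !s := by
          have h' : sigfn s ((tt-1)+1) = !(sigfn s (tt-1)) := sigfn_succ s (tt-1)
          have h'' : (tt-1)+1 = tt := by omega
          rw [h''] at h'
          rw [← hsigeq] at h'
          cases hb : sigfn s (tt-1)
          · rw [hb] at h'; simp at h'; rw [h']; rfl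
          · rw [hb] at h'; simp at h'; rw [h']; rfl
        have hsnd : (W j).2 = (W (j + tt)).2 := by
          have hidx : j + tt = i + (tt - 1) := by omega
          rw [hWj2, hidx, hsig (tt-1), hstt1]
        exact Prod.ext hf hsnd
    have he0rest : (({u ka, u 0}, s) : Finset (Fin n) × Bool) ∉
        insert (({u (tt-1), u kb}, sigfn s tt) : Finset (Fin n) × Bool)
          ((Finset.range (tt-1)).image
            (fun r => (({u r, u (r+1)} : Finset (Fin n)), sigfn s (r+1)))) := by
      intro hmem
      rcases Finset.mem_insert.1 hmem with h1 | h1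
      · exact he0ne1 h1
      obtain ⟨r, hr, heq⟩ := Finset.mem_image.1 h1
      have hrlt : r < tt - 1 := Finset.mem_range.1 hr
      have hsigeq : sigfn s (r+1) = s := congrArg Prod.snd heq
      have hpar : (r+1) % 2 = 0 % 2 := by
        have : sigfn s (r+1) = sigfn s 0 := by rw [sigfn_zero]; exact hsigeq
        exact sigfn_parity this
      have hpair : ({u r, u (r+1)} : Finset (Fin n)) = {u ka, u 0} :=
        congrArg Prod.fst heq
      have hm : u 0 ∈ ({u r, u (r+1)} : Finset (Fin n)) := by
        rw [hpair]
        exact Finset.mem_insert_of_mem (Finset.mem_singleton_self _)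
      rcases Finset.mem_insert.1 hm with h2 | h2
      · have := uinj 0 r (by omega) (by omega) h2
        omega
      · rw [Finset.mem_singleton] at h2
        have := uinj 0 (r+1) (by omega) (by omega) h2
        omega
    have hcard : (certSet u tt ka kb s).card = tt + 1 := by
      unfold certSet
      rw [Finset.card_insert_of_notMem he0rest,
        Finset.card_insert_of_notMem he1img, himg]
      omega
    have huper : ∀ r, u r = u (r % tt) := by
      intro r
      show (W (i + r % tt)).1 = (W (i + (r % tt) % tt)).1
      rw [Nat.mod_mod_of_dvd r (dvd_refl tt)]
    exact ⟨tt, h2t, htn, u, huper, ka, kb, hka, hkb, s, hcard, hpres⟩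
  · -- degenerate everywhere: walk is periodic with variable-distinct period, contradiction
    push_neg at hex
    have L1 : ∀ j, ¬ BM j → t (j+1) + 1 ≤ t j := by
      intro j hnbm
      by_contra hcon
      have hle : t j ≤ t (j+1) := by omega
      obtain ⟨hq0, k, hk, heq⟩ := tspec j
      by_cases hk0 : k = 0
      · subst hk0
        apply hnbm
        refine ⟨t j - 1, by omega, ?_⟩
        have hidx : j + 1 + (t j - 1) = j + t j := by omega
        rw [hidx]
        simpa using heq
      · have hidx1 : j + k = j + 1 + (k - 1) := by omega
        have hidx2 : j + t j = j + 1 + (t j - 1) := by omega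
        rw [hidx1, hidx2] at heq
        exact winj (j+1) (k-1) (t j - 1) (by omega) (by omega) heq
    have L2 : ∀ j, BM j → Deg j → t (j+1) ≤ t j := by
      intro j hbm hdeg
      by_contra hcon
      have hlt : t j < t (j+1) := by omega
      obtain ⟨hq0, k, hk, heq⟩ := tspec j
      by_cases hk0 : k = 0
      · subst hk0
        have hd2 := hdeg.2
        have heq2 : (W (j + t (j+1))).1 = (W (j + t j)).1 := by
          rw [← hd2]
          simpa using heq
        have hidx1 : j + t (j+1) = j + 1 + (t (j+1) - 1) := by
          have := t2 (j+1); omega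
        have hidx2 : j + t j = j + 1 + (t j - 1) := by omega
        rw [hidx1, hidx2] at heq2
        exact winj (j+1) (t j - 1) (t (j+1) - 1) (by omega)
          (by have := t2 (j+1); omega) heq2.symm
      · have hidx1 : j + k = j + 1 + (k - 1) := by omega
        have hidx2 : j + t j = j + 1 + (t j - 1) := by omega
        rw [hidx1, hidx2] at heq
        exact winj (j+1) (k-1) (t j - 1) (by omega) (by omega) heq
    have hanti : ∀ j, t (j+1) ≤ t j := by
      intro j
      by_cases hbm : BM j
      · exact L2 j hbm (hex j hbm)
      · have := L1 j hbm; omega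
    have hmono : ∀ d a, t (a + d) ≤ t a := by
      intro d
      induction d with
      | zero => intro a; simp
      | succ d ih =>
        intro a
        have h1 : t (a + (d+1)) ≤ t (a + d) := by
          have : a + (d + 1) = (a + d) + 1 := by ring
          rw [this]
          exact hanti (a + d)
        exact le_trans h1 (ih a)
    have tLk : ∀ k, t (L * k) = t 0 := by
      intro k
      induction k with
      | zero => simp
      | succ k ih =>
        have : L * (k+1) = L * k + L := by ring
        rw [this, tper, ih]
    have tconst : ∀ j, t j = t 0 := by
      intro j
      apply le_antisymm
      · have := hmono j 0; simpa using this
      · have h1 : t (L * j) ≤ t j := by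
          have hj : j + (L * j - j) = L * j := by
            have : j ≤ L * j := Nat.le_mul_of_pos_left j (by omega)
            omega
          rw [← hj]
          exact hmono _ j
        rw [tLk j] at h1
        exact h1
    have allBM : ∀ j, BM j := by
      intro j
      by_contra hnbm
      have := L1 j hnbm
      have e1 := tconst j
      have e2 := tconst (j+1)
      omega
    set T0 := t 0 with hT0
    have hT02 : 2 ≤ T0 := t2 0
    have hper0 : ∀ j, W (j + T0) = W j := by
      intro j
      have hd := (hex j (allBM j)).2
      rw [tconst (j+1)] at hd
      exact hd.symm
    have Wmod : ∀ r, W r = W (r % T0) := by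
      intro r
      induction r using Nat.strong_induction_on with
      | _ r ih =>
        rcases Nat.lt_or_ge r T0 with h | h
        · rw [Nat.mod_eq_of_lt h]
        · have h1 := hper0 (r - T0)
          have h2 : (r - T0) + T0 = r := by omega
          rw [h2] at h1
          rw [h1, ih (r - T0) (by omega)]
          rw [Nat.mod_eq_sub_mod h]
    exfalso
    have h1 : W p = W (p % T0) := Wmod p
    have h2 : W q = W (q % T0) := Wmod q
    have hne : p % T0 ≠ q % T0 := by
      intro h
      apply hpq2
      rw [h1, h2, h]
    have hp' : p % T0 < T0 := Nat.mod_lt _ (by omega)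
    have hq' : q % T0 < T0 := Nat.mod_lt _ (by omega)
    have hv : (W (p % T0)).1 = (W (q % T0)).1 := by
      rw [← h1, ← h2]; exact hpq1
    rcases lt_trichotomy (p % T0) (q % T0) with h | h | h
    · have := winj 0 (p % T0) (q % T0) h (by exact hq')
      apply this
      simpa using hv
    · exact hne h
    · have := winj 0 (q % T0) (p % T0) h (by exact hp')
      apply this
      simpa using hv.symm

theorem badCert_of_not_DC {H₁ H₂ : Finset (Finset (Fin n))}
    (hc1 : ∀ e ∈ H₁, e.card = 2) (hc2 : ∀ e ∈ H₂, e.card = 2)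
    (hnd : ¬ DisjointCovers H₁ H₂) : BadCert H₁ H₂ := by
  have hcon : ∃ a : Fin n, Reach H₁ H₂ (a, true) (a, false) ∧
      Reach H₁ H₂ (a, false) (a, true) := by
    by_contra hno
    exact hnd (disjointCovers_of_noContra H₁ H₂ hc1 hc2 (not_exists.1 hno))
  obtain ⟨a, h1, h2⟩ := hcon
  obtain ⟨L, W, hL, hW, hper, p, q, hpq1, hpq2⟩ := exists_badwalk h1 h2
  exact badcert_of_badwalk hc1 hc2 L W hL hW hper p q hpq1 hpq2





/-- all 2-element subsets of `Fin n` -/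
noncomputable def PP (n : ℕ) : Finset (Finset (Fin n)) :=
  (Finset.univ : Finset (Fin n)).powersetCard 2

lemma hypSpace_eq (n m : ℕ) : hypSpace n 2 m = (PP n).powersetCard m := by
  ext H
  simp only [hypSpace, Finset.mem_filter, Finset.mem_univ, true_and,
    Finset.mem_powersetCard, PP]
  constructor
  · rintro ⟨h1, h2⟩
    exact ⟨fun e he => by simp [Finset.mem_powersetCard, h1 e he], h2⟩
  · rintro ⟨h1, h2⟩
    refine ⟨fun e he => ?_, h2⟩
    have := h1 he
    rw [Finset.mem_powersetCard] at this
    exact this.2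

lemma card_hypSpace (n m : ℕ) : (hypSpace n 2 m).card = (Nat.choose n 2).choose m := by
  rw [hypSpace_eq, Finset.card_powersetCard]
  congr 1
  simp [PP, Finset.card_powersetCard]

lemma mem_hypSpace_card {m : ℕ} {H : Finset (Finset (Fin n))} (h : H ∈ hypSpace n 2 m) :
    (∀ e ∈ H, e.card = 2) ∧ H.card = m := by
  simpa [hypSpace] using h

lemma countContain (m : ℕ) (A : Finset (Finset (Fin n))) (hA : A ⊆ PP n) (hAm : A.card ≤ m) :
    ((hypSpace n 2 m).filter (fun H => A ⊆ H)).card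
      = (Nat.choose n 2 - A.card).choose (m - A.card) := by
  classical
  have key : ((hypSpace n 2 m).filter (fun H => A ⊆ H)).card
      = (((PP n) \ A).powersetCard (m - A.card)).card := by
    apply Finset.card_bij' (fun H _ => H \ A) (fun B _ => B ∪ A)
    · intro H hH
      rw [Finset.mem_filter] at hH
      obtain ⟨hH1, hH2⟩ := hH
      rw [hypSpace_eq, Finset.mem_powersetCard] at hH1
      rw [Finset.mem_powersetCard]
      constructor
      · exact Finset.sdiff_subset_sdiff hH1.1 (le_refl _)
      · rw [Finset.card_sdiff_of_subset hH2, hH1.2]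
    · intro B hB
      rw [Finset.mem_powersetCard] at hB
      have hdisj : Disjoint B A := Finset.disjoint_of_subset_left hB.1 Finset.sdiff_disjoint
      rw [Finset.mem_filter]
      refine ⟨?_, Finset.subset_union_right⟩
      rw [hypSpace_eq, Finset.mem_powersetCard]
      constructor
      · exact Finset.union_subset (hB.1.trans Finset.sdiff_subset) hA
      · rw [Finset.card_union_of_disjoint hdisj, hB.2]
        omega
    · intro H hH
      rw [Finset.mem_filter] at hH
      exact Finset.sdiff_union_of_subset hH.2
    · intro B hB
      rw [Finset.mem_powersetCard] at hB
      have hdisj : Disjoint B A := Finset.disjoint_of_subset_left hB.1 Finset.sdiff_disjoint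
      exact Finset.union_sdiff_cancel_right hdisj
  rw [key, Finset.card_powersetCard, Finset.card_sdiff_of_subset hA]
  congr 1
  simp [PP, Finset.card_powersetCard]



lemma choose_ratio (N M : ℕ) (h2m : 2 * M ≤ N) :
    ∀ k ≤ M, (((N - k).choose (M - k) : ℝ))
      ≤ ((M : ℝ) / ((N : ℝ) - M))^k * (N.choose M) := by
  intro k
  induction k with
  | zero => intro _; simp
  | succ k ih =>
    intro hk1
    have hk : k ≤ M := by omega
    have hM1 : 1 ≤ M := by omega
    have hkN : k + 1 < N := by omega
    have hid : (N - k) * ((N - k - 1).choose (M - k - 1))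
        = (N - k).choose (M - k) * (M - k) := by
      have h := Nat.add_one_mul_choose_eq (N - k - 1) (M - k - 1)
      have e1 : N - k - 1 + 1 = N - k := by omega
      have e2 : M - k - 1 + 1 = M - k := by omega
      rw [e1, e2] at h
      exact h
    -- cast to ℝ
    have hidR : ((N : ℝ) - k) * (((N - (k+1)).choose (M - (k+1)) : ℕ) : ℝ)
        = ((N - k).choose (M - k) : ℝ) * ((M : ℝ) - k) := by
      have e3 : N - (k+1) = N - k - 1 := by omega
      have e4 : M - (k+1) = M - k - 1 := by omega
      rw [e3, e4]
      have hcast := congrArg (fun x : ℕ => (x : ℝ)) hid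
      push_cast [Nat.cast_sub (by omega : k ≤ N), Nat.cast_sub (by omega : k ≤ M)] at hcast
      exact hcast
    have hNk : (0:ℝ) < (N : ℝ) - k := by
      have : (k:ℝ) < N := by exact_mod_cast (by omega : k < N)
      linarith
    have hNM : (0:ℝ) < (N : ℝ) - M := by
      have h1 : (2 * M : ℝ) ≤ N := by exact_mod_cast h2m
      have h2 : (1:ℝ) ≤ M := by exact_mod_cast hM1
      linarith
    have hfrac : ((M:ℝ) - k) / ((N:ℝ) - k) ≤ (M:ℝ) / ((N:ℝ) - M) := by
      rw [div_le_div_iff₀ hNk hNM]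
      have hkM : (k:ℝ) ≤ M := by exact_mod_cast hk
      have hMN : (M:ℝ) ≤ N := by
        have h0 : (0:ℝ) ≤ (M:ℝ) := Nat.cast_nonneg M
        have h1 : (2 * M : ℝ) ≤ N := by exact_mod_cast h2m
        linarith
      have h0M : (0:ℝ) ≤ M := by positivity
      have h0k : (0:ℝ) ≤ k := by positivity
      nlinarith [mul_nonneg h0k (sub_nonneg.2 hMN), mul_nonneg h0k h0M]
    have hX : (((N - (k+1)).choose (M - (k+1)) : ℕ) : ℝ)
        = ((N - k).choose (M - k) : ℝ) * (((M:ℝ) - k) / ((N:ℝ) - k)) := by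
      field_simp
      linarith [hidR]
    rw [hX]
    have hY0 : (0:ℝ) ≤ ((N - k).choose (M - k) : ℝ) := by positivity
    have step : ((N - k).choose (M - k) : ℝ) * (((M:ℝ) - k) / ((N:ℝ) - k))
        ≤ ((N - k).choose (M - k) : ℝ) * ((M:ℝ) / ((N:ℝ) - M)) :=
      mul_le_mul_of_nonneg_left hfrac hY0
    calc ((N - k).choose (M - k) : ℝ) * (((M:ℝ) - k) / ((N:ℝ) - k))
        ≤ ((N - k).choose (M - k) : ℝ) * ((M:ℝ) / ((N:ℝ) - M)) := step
      _ ≤ (((M : ℝ) / ((N : ℝ) - M))^k * (N.choose M)) * ((M:ℝ) / ((N:ℝ) - M)) := by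
          apply mul_le_mul_of_nonneg_right (ih hk)
          positivity
      _ = ((M : ℝ) / ((N : ℝ) - M))^(k+1) * (N.choose M) := by ring

lemma filter_superset_card_le (mm : ℕ) (h2m : 2 * mm ≤ Nat.choose n 2)
    (A : Finset (Finset (Fin n))) :
    (((hypSpace n 2 mm).filter (fun H => A ⊆ H)).card : ℝ)
      ≤ ((mm : ℝ) / ((Nat.choose n 2 : ℝ) - mm))^A.card * ((hypSpace n 2 mm).card : ℝ) := by
  classical
  set N := Nat.choose n 2 with hN
  have hlam0 : (0:ℝ) ≤ (mm : ℝ) / ((N : ℝ) - mm) := by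
    rcases Nat.eq_zero_or_pos mm with h | h
    · simp [h]
    · apply div_nonneg (by positivity)
      have : (2*mm : ℝ) ≤ N := by exact_mod_cast h2m
      have : (mm:ℝ) ≤ (N:ℝ) - mm := by linarith
      have h0 : (0:ℝ) < mm := by exact_mod_cast h
      linarith
  by_cases hA : A ⊆ PP n ∧ A.card ≤ mm
  · rw [countContain mm A hA.1 hA.2, card_hypSpace]
    exact choose_ratio N mm h2m A.card hA.2
  · have hempty : ((hypSpace n 2 mm).filter (fun H => A ⊆ H)) = ∅ := by
      rw [Finset.filter_eq_empty_iff]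
      intro H hH hsub
      apply hA
      have hmem := hH
      rw [hypSpace_eq, Finset.mem_powersetCard] at hmem
      exact ⟨hsub.trans hmem.1, by rw [← hmem.2]; exact Finset.card_le_card hsub⟩
    rw [hempty]
    simp only [Finset.card_empty, Nat.cast_zero]
    positivity




noncomputable def lam (n mm : ℕ) : ℝ := (mm : ℝ) / ((Nat.choose n 2 : ℝ) - mm)

lemma lam_nonneg (mm : ℕ) (h2m : 2 * mm ≤ Nat.choose n 2) : 0 ≤ lam n mm := by
  rcases Nat.eq_zero_or_pos mm with h | h
  · simp [lam, h]
  · apply div_nonneg (by positivity)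
    have h1 : (2 * mm : ℝ) ≤ (Nat.choose n 2 : ℝ) := by exact_mod_cast h2m
    have h0 : (0:ℝ) < mm := by exact_mod_cast h
    linarith

lemma event_card_le (mm : ℕ) (h2m : 2 * mm ≤ Nat.choose n 2)
    (t : ℕ) (u : ℕ → Fin n) (a b : ℕ) (s : Bool) :
    ((((hypSpace n 2 mm) ×ˢ (hypSpace n 2 mm)).filter
        (fun p => (certSet u t a b s).card = t + 1 ∧
          ∀ c ∈ certSet u t a b s, c.1 ∈ (if c.2 then p.1 else p.2))).card : ℝ)
      ≤ (lam n mm)^(t+1) * ((hypSpace n 2 mm).card : ℝ)^2 := by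
  classical
  have hlam0 : 0 ≤ lam n mm := lam_nonneg mm h2m
  by_cases hcard : (certSet u t a b s).card = t + 1
  swap
  · have hempty : (((hypSpace n 2 mm) ×ˢ (hypSpace n 2 mm)).filter
        (fun p => (certSet u t a b s).card = t + 1 ∧
          ∀ c ∈ certSet u t a b s, c.1 ∈ (if c.2 then p.1 else p.2))) = ∅ := by
      rw [Finset.filter_eq_empty_iff]
      intro p _ hp
      exact hcard hp.1
    rw [hempty]
    simp only [Finset.card_empty, Nat.cast_zero]
    positivity
  · set S := certSet u t a b s with hS
    set A := (S.filter (fun c => c.2 = true)).image Prod.fst with hA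
    set B := (S.filter (fun c => ¬ (c.2 = true))).image Prod.fst with hB
    have hAinj : Set.InjOn (Prod.fst : Finset (Fin n) × Bool → Finset (Fin n)) ↑(S.filter (fun c => c.2 = true)) := by
      intro c hc c' hc' heq
      have h1 : c.2 = true := (Finset.mem_filter.1 hc).2
      have h2 : c'.2 = true := (Finset.mem_filter.1 hc').2
      exact Prod.ext heq (by rw [h1, h2])
    have hBinj : Set.InjOn (Prod.fst : Finset (Fin n) × Bool → Finset (Fin n)) ↑(S.filter (fun c => ¬ (c.2 = true))) := by
      intro c hc c' hc' heq
      have h1 : c.2 = false := by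
        have := (Finset.mem_filter.1 hc).2; simpa using this
      have h2 : c'.2 = false := by
        have := (Finset.mem_filter.1 hc').2; simpa using this
      exact Prod.ext heq (by rw [h1, h2])
    have hABcard : A.card + B.card = t + 1 := by
      rw [hA, hB, Finset.card_image_of_injOn hAinj, Finset.card_image_of_injOn hBinj]
      rw [Finset.card_filter_add_card_filter_not]
      exact hcard
    have hsub : (((hypSpace n 2 mm) ×ˢ (hypSpace n 2 mm)).filter
        (fun p => (certSet u t a b s).card = t + 1 ∧
          ∀ c ∈ certSet u t a b s, c.1 ∈ (if c.2 then p.1 else p.2)))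
        ⊆ ((hypSpace n 2 mm).filter (fun H => A ⊆ H)) ×ˢ
          ((hypSpace n 2 mm).filter (fun H => B ⊆ H)) := by
      intro p hp
      rw [Finset.mem_filter] at hp
      obtain ⟨hps, _, hpres⟩ := hp
      obtain ⟨hp1, hp2⟩ := Finset.mem_product.1 hps
      rw [Finset.mem_product]
      constructor
      · rw [Finset.mem_filter]
        refine ⟨hp1, fun x hx => ?_⟩
        obtain ⟨c, hc, rfl⟩ := Finset.mem_image.1 hx
        have hcS := (Finset.mem_filter.1 hc).1
        have hc2 := (Finset.mem_filter.1 hc).2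
        have := hpres c hcS
        rwa [hc2, if_pos rfl] at this
      · rw [Finset.mem_filter]
        refine ⟨hp2, fun x hx => ?_⟩
        obtain ⟨c, hc, rfl⟩ := Finset.mem_image.1 hx
        have hcS := (Finset.mem_filter.1 hc).1
        have hc2 : c.2 = false := by
          have := (Finset.mem_filter.1 hc).2; simpa using this
        have := hpres c hcS
        rw [hc2] at this
        simpa using this
    calc ((((hypSpace n 2 mm) ×ˢ (hypSpace n 2 mm)).filter
        (fun p => (certSet u t a b s).card = t + 1 ∧
          ∀ c ∈ certSet u t a b s, c.1 ∈ (if c.2 then p.1 else p.2))).card : ℝ)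
        ≤ ((((hypSpace n 2 mm).filter (fun H => A ⊆ H)) ×ˢ
            ((hypSpace n 2 mm).filter (fun H => B ⊆ H))).card : ℝ) := by
          exact_mod_cast Finset.card_le_card hsub
      _ = (((hypSpace n 2 mm).filter (fun H => A ⊆ H)).card : ℝ) *
          (((hypSpace n 2 mm).filter (fun H => B ⊆ H)).card : ℝ) := by
          rw [Finset.card_product]; push_cast; ring
      _ ≤ ((lam n mm)^A.card * ((hypSpace n 2 mm).card : ℝ)) *
          ((lam n mm)^B.card * ((hypSpace n 2 mm).card : ℝ)) := by
          have b1 := filter_superset_card_le (n := n) mm h2m A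
          have b2 := filter_superset_card_le (n := n) mm h2m B
          have n1 : (0:ℝ) ≤ (((hypSpace n 2 mm).filter (fun H => B ⊆ H)).card : ℝ) :=
            Nat.cast_nonneg _
          have n2 : (0:ℝ) ≤ (lam n mm)^A.card * ((hypSpace n 2 mm).card : ℝ) :=
            mul_nonneg (pow_nonneg hlam0 _) (Nat.cast_nonneg _)
          exact mul_le_mul b1 b2 n1 n2
      _ = (lam n mm)^(A.card + B.card) * ((hypSpace n 2 mm).card : ℝ)^2 := by
          rw [pow_add]; ring
      _ = (lam n mm)^(t+1) * ((hypSpace n 2 mm).card : ℝ)^2 := by rw [hABcard]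

noncomputable def liftg {n t : ℕ} (ht : 0 < t) (g : Fin t → Fin n) : ℕ → Fin n :=
  fun j => g ⟨j % t, Nat.mod_lt _ ht⟩

lemma bad_subset (mm : ℕ) :
    ((hypSpace n 2 mm) ×ˢ (hypSpace n 2 mm)).filter (fun p => ¬ DisjointCovers p.1 p.2)
      ⊆ (Finset.Icc 2 n).attach.biUnion (fun tp =>
          (Finset.univ : Finset ((Fin tp.1 → Fin n) × (Fin tp.1 × Fin tp.1) × Bool)).biUnion
            (fun w => ((hypSpace n 2 mm) ×ˢ (hypSpace n 2 mm)).filter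
              (fun p => (certSet (liftg (Nat.lt_of_lt_of_le Nat.zero_lt_two
                    (Finset.mem_Icc.1 tp.2).1) w.1) tp.1 w.2.1.1 w.2.1.2 w.2.2).card = tp.1 + 1 ∧
                ∀ c ∈ certSet (liftg (Nat.lt_of_lt_of_le Nat.zero_lt_two
                    (Finset.mem_Icc.1 tp.2).1) w.1) tp.1 w.2.1.1 w.2.1.2 w.2.2,
                  c.1 ∈ (if c.2 then p.1 else p.2)))) := by
  classical
  intro p hp
  rw [Finset.mem_filter] at hp
  obtain ⟨hps, hdc⟩ := hp
  obtain ⟨hp1, hp2⟩ := Finset.mem_product.1 hps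
  have hc1 := (mem_hypSpace_card hp1).1
  have hc2 := (mem_hypSpace_card hp2).1
  obtain ⟨t, h2t, htn, u, huper, a, b, ha, hb, s, hSc, hSp⟩ :=
    badCert_of_not_DC hc1 hc2 hdc
  rw [Finset.mem_biUnion]
  refine ⟨⟨t, Finset.mem_Icc.2 ⟨h2t, htn⟩⟩, Finset.mem_attach _ _, ?_⟩
  rw [Finset.mem_biUnion]
  refine ⟨((fun r : Fin t => u (r : ℕ)), (⟨a, ha⟩, ⟨b, hb⟩), s), Finset.mem_univ _, ?_⟩
  rw [Finset.mem_filter]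
  refine ⟨hps, ?_⟩
  have hueq : liftg (t := t) (Nat.lt_of_lt_of_le Nat.zero_lt_two
      (Finset.mem_Icc.1 (Finset.mem_Icc.2 ⟨h2t, htn⟩)).1) (fun r : Fin t => u (r : ℕ)) = u := by
    funext j
    show u (j % t) = u j
    exact (huper j).symm
  rw [hueq]
  exact ⟨hSc, hSp⟩





lemma bad_card_le (mm : ℕ) (h2m : 2 * mm ≤ Nat.choose n 2) :
    ((((hypSpace n 2 mm) ×ˢ (hypSpace n 2 mm)).filter
        (fun p => ¬ DisjointCovers p.1 p.2)).card : ℝ)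
      ≤ (∑ t ∈ Finset.Icc 2 n, ((n:ℝ)^t * ((t:ℝ)*(t:ℝ)*2)) * (lam n mm)^(t+1))
        * ((hypSpace n 2 mm).card : ℝ)^2 := by
  classical
  have step1 := Finset.card_le_card (bad_subset (n := n) mm)
  have step2 := Finset.card_biUnion_le (s := (Finset.Icc 2 n).attach)
    (t := fun tp => (Finset.univ :
        Finset ((Fin tp.1 → Fin n) × (Fin tp.1 × Fin tp.1) × Bool)).biUnion
      (fun w => ((hypSpace n 2 mm) ×ˢ (hypSpace n 2 mm)).filter
        (fun p => (certSet (liftg (Nat.lt_of_lt_of_le Nat.zero_lt_two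
              (Finset.mem_Icc.1 tp.2).1) w.1) tp.1 w.2.1.1 w.2.1.2 w.2.2).card = tp.1 + 1 ∧
          ∀ c ∈ certSet (liftg (Nat.lt_of_lt_of_le Nat.zero_lt_two
              (Finset.mem_Icc.1 tp.2).1) w.1) tp.1 w.2.1.1 w.2.1.2 w.2.2,
            c.1 ∈ (if c.2 then p.1 else p.2))))
  have hchain : ((((hypSpace n 2 mm) ×ˢ (hypSpace n 2 mm)).filter
        (fun p => ¬ DisjointCovers p.1 p.2)).card : ℝ)
      ≤ ∑ tp ∈ (Finset.Icc 2 n).attach,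
          ∑ w ∈ (Finset.univ :
            Finset ((Fin tp.1 → Fin n) × (Fin tp.1 × Fin tp.1) × Bool)),
            ((((hypSpace n 2 mm) ×ˢ (hypSpace n 2 mm)).filter
              (fun p => (certSet (liftg (Nat.lt_of_lt_of_le Nat.zero_lt_two
                    (Finset.mem_Icc.1 tp.2).1) w.1) tp.1 w.2.1.1 w.2.1.2 w.2.2).card
                  = tp.1 + 1 ∧
                ∀ c ∈ certSet (liftg (Nat.lt_of_lt_of_le Nat.zero_lt_two
                    (Finset.mem_Icc.1 tp.2).1) w.1) tp.1 w.2.1.1 w.2.1.2 w.2.2,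
                  c.1 ∈ (if c.2 then p.1 else p.2))).card : ℝ) := by
    have h3 : ∀ tp ∈ (Finset.Icc 2 n).attach, True := fun _ _ => trivial
    calc ((((hypSpace n 2 mm) ×ˢ (hypSpace n 2 mm)).filter
          (fun p => ¬ DisjointCovers p.1 p.2)).card : ℝ)
        ≤ (((Finset.Icc 2 n).attach.biUnion _).card : ℝ) := by exact_mod_cast step1
      _ ≤ ∑ tp ∈ (Finset.Icc 2 n).attach, (((Finset.univ :
            Finset ((Fin tp.1 → Fin n) × (Fin tp.1 × Fin tp.1) × Bool)).biUnion _).card : ℝ) := by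
          exact_mod_cast step2
      _ ≤ _ := by
          apply Finset.sum_le_sum
          intro tp _
          exact_mod_cast Finset.card_biUnion_le
  refine hchain.trans ?_
  have hperterm : ∀ tp ∈ (Finset.Icc 2 n).attach,
      ∑ w ∈ (Finset.univ :
        Finset ((Fin tp.1 → Fin n) × (Fin tp.1 × Fin tp.1) × Bool)),
        ((((hypSpace n 2 mm) ×ˢ (hypSpace n 2 mm)).filter
          (fun p => (certSet (liftg (Nat.lt_of_lt_of_le Nat.zero_lt_two
                (Finset.mem_Icc.1 tp.2).1) w.1) tp.1 w.2.1.1 w.2.1.2 w.2.2).card = tp.1 + 1 ∧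
            ∀ c ∈ certSet (liftg (Nat.lt_of_lt_of_le Nat.zero_lt_two
                (Finset.mem_Icc.1 tp.2).1) w.1) tp.1 w.2.1.1 w.2.1.2 w.2.2,
              c.1 ∈ (if c.2 then p.1 else p.2))).card : ℝ)
      ≤ ((n:ℝ)^tp.1 * ((tp.1:ℝ)*(tp.1:ℝ)*2)) * (lam n mm)^(tp.1+1)
          * ((hypSpace n 2 mm).card : ℝ)^2 := by
    intro tp _
    have hbound : ∀ w ∈ (Finset.univ :
        Finset ((Fin tp.1 → Fin n) × (Fin tp.1 × Fin tp.1) × Bool)),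
        ((((hypSpace n 2 mm) ×ˢ (hypSpace n 2 mm)).filter
          (fun p => (certSet (liftg (Nat.lt_of_lt_of_le Nat.zero_lt_two
                (Finset.mem_Icc.1 tp.2).1) w.1) tp.1 w.2.1.1 w.2.1.2 w.2.2).card = tp.1 + 1 ∧
            ∀ c ∈ certSet (liftg (Nat.lt_of_lt_of_le Nat.zero_lt_two
                (Finset.mem_Icc.1 tp.2).1) w.1) tp.1 w.2.1.1 w.2.1.2 w.2.2,
              c.1 ∈ (if c.2 then p.1 else p.2))).card : ℝ)
        ≤ (lam n mm)^(tp.1+1) * ((hypSpace n 2 mm).card : ℝ)^2 := by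
      intro w _
      exact event_card_le mm h2m tp.1 _ _ _ _
    calc _ ≤ ∑ _w ∈ (Finset.univ :
          Finset ((Fin tp.1 → Fin n) × (Fin tp.1 × Fin tp.1) × Bool)),
          (lam n mm)^(tp.1+1) * ((hypSpace n 2 mm).card : ℝ)^2 :=
        Finset.sum_le_sum hbound
      _ = ((n:ℝ)^tp.1 * ((tp.1:ℝ)*(tp.1:ℝ)*2)) * (lam n mm)^(tp.1+1)
          * ((hypSpace n 2 mm).card : ℝ)^2 := by
        rw [Finset.sum_const, Finset.card_univ]
        have hcard : Fintype.card ((Fin tp.1 → Fin n) × (Fin tp.1 × Fin tp.1) × Bool)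
            = n ^ tp.1 * (tp.1 * tp.1 * 2) := by
          simp [Fintype.card_fun]
        rw [hcard, nsmul_eq_mul]
        push_cast
        ring
  calc (∑ tp ∈ (Finset.Icc 2 n).attach, ∑ w ∈ (Finset.univ :
        Finset ((Fin tp.1 → Fin n) × (Fin tp.1 × Fin tp.1) × Bool)), _)
      ≤ ∑ tp ∈ (Finset.Icc 2 n).attach,
        ((n:ℝ)^tp.1 * ((tp.1:ℝ)*(tp.1:ℝ)*2)) * (lam n mm)^(tp.1+1)
          * ((hypSpace n 2 mm).card : ℝ)^2 := Finset.sum_le_sum hperterm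
    _ = (∑ t ∈ Finset.Icc 2 n, ((n:ℝ)^t * ((t:ℝ)*(t:ℝ)*2)) * (lam n mm)^(t+1))
        * ((hypSpace n 2 mm).card : ℝ)^2 := by
        rw [Finset.sum_mul]
        exact Finset.sum_attach (Finset.Icc 2 n)
          (fun t => ((n:ℝ)^t * ((t:ℝ)*(t:ℝ)*2)) * (lam n mm)^(t+1)
            * ((hypSpace n 2 mm).card : ℝ)^2)




set_option maxHeartbeats 1600000 in
lemma per_n_bound (ε : ℝ) (hε : 0 < ε) (hhalf : ε ≤ 1/2) (N M : ℕ)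
    (h5 : 5 ≤ N) (hNe : 2/ε ≤ (N:ℝ)) (hmR : (M:ℝ) ≤ (1/2 - ε) * N)
    (K : ℝ) (hK : ∑ t ∈ Finset.Icc 2 N, (t:ℝ)^2 * (1-ε)^t ≤ K) (hK0 : 0 ≤ K) :
    1 - 2*K/((N:ℝ) - 2) ≤ probDC N 2 M ∧ probDC N 2 M ≤ 1 := by
  classical
  have hN0 : (0:ℝ) ≤ N := Nat.cast_nonneg N
  have h2mn : 2 * M ≤ N := by
    have h1 : (2 * M : ℝ) ≤ (1 - 2*ε) * N := by push_cast; linarith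
    have h2 : ((1:ℝ) - 2*ε) * N ≤ N := by nlinarith
    exact_mod_cast h1.trans h2
  set C2 := Nat.choose N 2 with hC2def
  have hdvd : 2 ∣ N * (N - 1) := by
    have h := Nat.even_mul_succ_self (N - 1)
    have e : (N - 1) + 1 = N := by omega
    rw [e] at h
    rw [Nat.mul_comm]
    exact h.two_dvd
  have h2C : C2 * 2 = N * (N - 1) := by
    rw [hC2def, Nat.choose_two_right]
    exact Nat.div_mul_cancel hdvd
  have hNP : N * 4 ≤ N * (N - 1) := Nat.mul_le_mul_left N (by omega)
  have hC2N : 2 * N ≤ C2 := by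
    have h' : N * 4 ≤ C2 * 2 := by rw [h2C]; exact hNP
    omega
  have h2mC : 2 * M ≤ C2 := by omega
  have hMC : M ≤ C2 := by omega
  have hC2R : (C2:ℝ) * 2 = (N:ℝ) * ((N:ℝ) - 1) := by
    have hcst := congrArg (fun x : ℕ => (x:ℝ)) h2C
    push_cast [Nat.cast_sub (by omega : 1 ≤ N)] at hcst
    exact hcst
  have hN5 : (5:ℝ) ≤ N := by exact_mod_cast h5
  have hMR2 : (M:ℝ) ≤ (N:ℝ)/2 := by nlinarith
  have hden : (N:ℝ) * ((N:ℝ) - 2) / 2 ≤ (C2:ℝ) - M := by nlinarith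
  have hdenpos : (0:ℝ) < (C2:ℝ) - M := by nlinarith
  set lamv := lam N M with hlamv
  have hlam_eq : lamv = (M:ℝ) / ((C2:ℝ) - M) := rfl
  have hlam0 : 0 ≤ lamv := lam_nonneg M h2mC
  have hNlam2 : (0:ℝ) < (N:ℝ) - 2 := by linarith
  have hlam_le : lamv ≤ 1/((N:ℝ)-2) := by
    rw [hlam_eq]
    have hc : (0:ℝ) < (N:ℝ)*((N:ℝ)-2)/2 := by nlinarith
    have step : (M:ℝ)/((C2:ℝ)-M) ≤ ((N:ℝ)/2)/((N:ℝ)*((N:ℝ)-2)/2) :=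
      div_le_div₀ (by positivity) hMR2 hc hden
    refine step.trans ?_
    rw [div_le_div_iff₀ hc hNlam2]
    nlinarith
  have hεN : 2 ≤ ε * N := by
    rw [div_le_iff₀ hε] at hNe
    linarith
  have hnlam : (N:ℝ) * lamv ≤ 1 - ε := by
    rw [hlam_eq, mul_div_assoc']
    rw [div_le_iff₀ hdenpos]
    have hM0 : (0:ℝ) ≤ M := Nat.cast_nonneg M
    have hint1 : (N:ℝ) * (M:ℝ) ≤ (N:ℝ) * ((1/2 - ε) * N) :=
      mul_le_mul_of_nonneg_left hmR hN0
    have hint2 : (1 - ε) * ((N:ℝ) * ((N:ℝ) - 2) / 2) ≤ (1 - ε) * ((C2:ℝ) - M) :=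
      mul_le_mul_of_nonneg_left hden (by linarith)
    have hint3 : (0:ℝ) ≤ (N:ℝ) * (ε * (N:ℝ) - 2 + 2*ε) :=
      mul_nonneg hN0 (by linarith)
    nlinarith
  set Tot := (hypSpace N 2 M).card with hTotdef
  have hTotC : Tot = C2.choose M := card_hypSpace N M
  have hTpos : 0 < Tot := by rw [hTotC]; exact Nat.choose_pos hMC
  have hTR : (0:ℝ) < (Tot:ℝ) := by exact_mod_cast hTpos
  have hprodcard : ((hypSpace N 2 M ×ˢ hypSpace N 2 M).card : ℝ) = (Tot:ℝ)^2 := by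
    rw [Finset.card_product]
    push_cast
    ring
  have hbad := bad_card_le (n := N) M h2mC
  have hsum_le : (∑ t ∈ Finset.Icc 2 N, ((N:ℝ)^t * ((t:ℝ)*(t:ℝ)*2)) * lamv^(t+1))
      ≤ 2 * lamv * K := by
    have hterm : ∀ t ∈ Finset.Icc 2 N, ((N:ℝ)^t * ((t:ℝ)*(t:ℝ)*2)) * lamv^(t+1)
        ≤ 2 * lamv * ((t:ℝ)^2 * (1-ε)^t) := by
      intro t _
      have h1 : ((N:ℝ)*lamv)^t ≤ (1-ε)^t :=
        pow_le_pow_left₀ (by positivity) hnlam t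
      have h2 : ((N:ℝ)^t * ((t:ℝ)*(t:ℝ)*2)) * lamv^(t+1)
          = 2 * lamv * (((t:ℝ)^2) * ((N:ℝ)*lamv)^t) := by
        rw [mul_pow, pow_succ]
        ring
      rw [h2]
      have h3 : (0:ℝ) ≤ 2 * lamv := by linarith
      exact mul_le_mul_of_nonneg_left
        (mul_le_mul_of_nonneg_left h1 (by positivity)) h3
    calc ∑ t ∈ Finset.Icc 2 N, ((N:ℝ)^t * ((t:ℝ)*(t:ℝ)*2)) * lamv^(t+1)
        ≤ ∑ t ∈ Finset.Icc 2 N, 2 * lamv * ((t:ℝ)^2 * (1-ε)^t) :=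
          Finset.sum_le_sum hterm
      _ = 2 * lamv * ∑ t ∈ Finset.Icc 2 N, ((t:ℝ)^2 * (1-ε)^t) := by
          rw [Finset.mul_sum]
      _ ≤ 2 * lamv * K := mul_le_mul_of_nonneg_left hK (by linarith)
  have hbad2 : ((((hypSpace N 2 M) ×ˢ (hypSpace N 2 M)).filter
      (fun p => ¬ DisjointCovers p.1 p.2)).card : ℝ) ≤ 2*lamv*K * (Tot:ℝ)^2 := by
    refine hbad.trans ?_
    exact mul_le_mul_of_nonneg_right hsum_le (pow_nonneg (Nat.cast_nonneg _) 2)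
  have hsplit : (((hypSpace N 2 M) ×ˢ (hypSpace N 2 M)).filter
      (fun p => DisjointCovers p.1 p.2)).card +
      (((hypSpace N 2 M) ×ˢ (hypSpace N 2 M)).filter
      (fun p => ¬ DisjointCovers p.1 p.2)).card = Tot * Tot := by
    rw [Finset.card_filter_add_card_filter_not, Finset.card_product]
  have hgoodR : ((((hypSpace N 2 M) ×ˢ (hypSpace N 2 M)).filter
      (fun p => DisjointCovers p.1 p.2)).card : ℝ)
      = (Tot:ℝ)^2 - ((((hypSpace N 2 M) ×ˢ (hypSpace N 2 M)).filter
      (fun p => ¬ DisjointCovers p.1 p.2)).card : ℝ) := by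
    have hcst := congrArg (fun x : ℕ => (x:ℝ)) hsplit
    push_cast at hcst
    nlinarith [hcst]
  have hprobform : probDC N 2 M = ((((hypSpace N 2 M) ×ˢ (hypSpace N 2 M)).filter
      (fun p => DisjointCovers p.1 p.2)).card : ℝ) / (Tot:ℝ)^2 := by
    simp only [probDC]
    rw [hprodcard]
  set G := ((((hypSpace N 2 M) ×ˢ (hypSpace N 2 M)).filter
      (fun p => DisjointCovers p.1 p.2)).card : ℝ) with hGdef
  set Bd := ((((hypSpace N 2 M) ×ˢ (hypSpace N 2 M)).filter
      (fun p => ¬ DisjointCovers p.1 p.2)).card : ℝ) with hBdef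
  rw [hprobform]
  clear_value G Bd
  have hT2 : (0:ℝ) < (Tot:ℝ)^2 := pow_pos hTR 2
  constructor
  · rw [le_div_iff₀ hT2]
    have hb3 : Bd ≤ (2*K/((N:ℝ)-2)) * (Tot:ℝ)^2 := by
      refine hbad2.trans ?_
      have : 2*lamv*K ≤ 2*K/((N:ℝ)-2) := by
        have h1 : lamv * K ≤ (1/((N:ℝ)-2)) * K :=
          mul_le_mul_of_nonneg_right hlam_le hK0
        calc 2*lamv*K = 2*(lamv*K) := by ring
          _ ≤ 2*((1/((N:ℝ)-2))*K) := by linarith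
          _ = 2*K/((N:ℝ)-2) := by ring
      exact mul_le_mul_of_nonneg_right this (le_of_lt hT2)
    rw [hgoodR]
    have hexp : (1 - 2*K/((N:ℝ) - 2)) * (Tot:ℝ)^2
        = (Tot:ℝ)^2 - (2*K/((N:ℝ)-2)) * (Tot:ℝ)^2 := by ring
    rw [hexp]
    linarith [hb3]
  · rw [div_le_one hT2]
    have hle := Finset.card_filter_le ((hypSpace N 2 M) ×ˢ (hypSpace N 2 M))
      (fun p => DisjointCovers p.1 p.2)
    have hfin : G ≤ (((hypSpace N 2 M) ×ˢ (hypSpace N 2 M)).card : ℝ) := by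
      rw [hGdef]
      exact_mod_cast hle
    rw [hprodcard] at hfin
    exact hfin


end DCAux


/-- If `m(n) ≤ (1/2 − ε)n`, two independent random graphs distributed as
`G(n, m(n))` admit disjoint covers with probability tending to `1`. -/
theorem disjoint_covers_graphs_subcritical (ε : ℝ) (hε : 0 < ε) (m : ℕ → ℕ)
    (hm : ∀ n, (m n : ℝ) ≤ (1 / 2 - ε) * n) :
    Tendsto (fun n => probDC n 2 (m n)) atTop (nhds 1) := by
  classical
  by_cases hhalf : ε ≤ 1/2
  · have hsum : Summable (fun t : ℕ => (t:ℝ)^2 * (1-ε)^t) := by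
      have h1 : ‖(1:ℝ) - ε‖ < 1 := by
        rw [Real.norm_eq_abs, abs_lt]
        constructor <;> linarith
      exact summable_pow_mul_geometric_of_norm_lt_one 2 h1
    set K := ∑' t : ℕ, (t:ℝ)^2 * (1-ε)^t with hKdef
    have hterm0 : ∀ t : ℕ, (0:ℝ) ≤ (t:ℝ)^2 * (1-ε)^t :=
      fun t => mul_nonneg (by positivity) (pow_nonneg (by linarith) t)
    have hK0 : 0 ≤ K := tsum_nonneg hterm0
    have hKb : ∀ N : ℕ, ∑ t ∈ Finset.Icc 2 N, (t:ℝ)^2 * (1-ε)^t ≤ K :=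
      fun N => Summable.sum_le_tsum _ (fun i _ => hterm0 i) hsum
    have hev : ∀ᶠ (N : ℕ) in atTop,
        1 - 2*K/((N:ℝ) - 2) ≤ probDC N 2 (m N) ∧ probDC N 2 (m N) ≤ 1 := by
      filter_upwards [Filter.eventually_ge_atTop 5,
        Filter.Tendsto.eventually_ge_atTop tendsto_natCast_atTop_atTop (2/ε)] with N h5 hNe
      exact DCAux.per_n_bound ε hε hhalf N (m N) h5 hNe (hm N) K (hKb N) hK0
    have hlim : Tendsto (fun N : ℕ => 1 - 2*K/((N:ℝ)-2)) atTop (nhds 1) := by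
      have h1 : Tendsto (fun N : ℕ => ((N:ℝ) - 2)) atTop atTop := by
        simpa [sub_eq_add_neg] using
          tendsto_atTop_add_const_right atTop (-2 : ℝ) tendsto_natCast_atTop_atTop
      have h2 : Tendsto (fun N : ℕ => ((N:ℝ)-2)⁻¹) atTop (nhds 0) := h1.inv_tendsto_atTop
      have h3 : Tendsto (fun N : ℕ => 2*K/((N:ℝ)-2)) atTop (nhds 0) := by
        have h4 := h2.const_mul (2*K)
        simpa [div_eq_mul_inv, mul_comm] using h4
      have h5 : Tendsto (fun N : ℕ => (1:ℝ) - 2*K/((N:ℝ)-2)) atTop (nhds (1-0)) :=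
        (tendsto_const_nhds : Tendsto (fun _ : ℕ => (1:ℝ)) atTop (nhds 1)).sub h3
      simpa using h5
    exact tendsto_of_tendsto_of_tendsto_of_le_of_le' hlim tendsto_const_nhds
      (hev.mono fun N h => h.1) (hev.mono fun N h => h.2)
  · exfalso
    have h1 := hm 1
    have h0 : (0:ℝ) ≤ (m 1 : ℝ) := Nat.cast_nonneg _
    push_cast at h1
    linarith
end

section
/- Fix an integer k ≥ 3 and a real r > 2^{k−1} ln 2. Let H₁ and H₂ be two independent random k-uniform hypergraphs, each distributed as H_k(n, ⌊rn⌋). Then the probability that H₁ and H₂ admit disjoint covers tends to 0 as n → ∞. -/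
open Filter Finset

open scoped Classical

lemma dF_ratio (m : ℕ) : ∀ a N : ℕ, a ≤ N →
    a.descFactorial m * N ^ m ≤ a ^ m * N.descFactorial m := by
  induction m with
  | zero => intro a N h; simp
  | succ m ih =>
    intro a N h
    rw [Nat.descFactorial_succ, Nat.descFactorial_succ, pow_succ, pow_succ]
    have h1 : (a - m) * N ≤ a * (N - m) := by
      rcases le_or_gt a m with hm | hm
      · simp [Nat.sub_eq_zero_of_le hm]
      · have hmN : m ≤ N := le_of_lt (lt_of_lt_of_le hm h)
        zify [hm.le, hmN]
        nlinarith [mul_le_mul_of_nonneg_right (show (a:ℤ) ≤ N by exact_mod_cast h)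
          (show (0:ℤ) ≤ m by positivity)]
    have key := Nat.mul_le_mul h1 (ih a N h)
    calc (a - m) * a.descFactorial m * (N ^ m * N)
        = ((a - m) * N) * (a.descFactorial m * N ^ m) := by ring
      _ ≤ (a * (N - m)) * (a ^ m * N.descFactorial m) := key
      _ = a ^ m * a * ((N - m) * N.descFactorial m) := by ring

lemma choose_ratio_le (m a N : ℕ) (hN : 0 < N) (h : a ≤ N) :
    (a.choose m : ℝ) ≤ ((a : ℝ) / N) ^ m * N.choose m := by
  have hd := dF_ratio m a N h
  rw [Nat.descFactorial_eq_factorial_mul_choose, Nat.descFactorial_eq_factorial_mul_choose] at hd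
  have hdr : (m.factorial : ℝ) * a.choose m * N ^ m ≤ a ^ m * (m.factorial * N.choose m) := by
    exact_mod_cast hd
  have hNpow : (0:ℝ) < (N:ℝ) ^ m := by positivity
  have hf : (0:ℝ) < (m.factorial : ℝ) := by exact_mod_cast m.factorial_pos
  rw [div_pow, div_mul_eq_mul_div, le_div_iff₀ hNpow]
  nlinarith

lemma pascal_step (k a b : ℕ) (h : a < b) :
    (a+1).choose k + (b-1).choose k ≤ a.choose k + b.choose k := by
  cases k with
  | zero => simp
  | succ j =>
    have hb : b = (b-1)+1 := by omega
    have e1 : (a+1).choose (j+1) = a.choose j + a.choose (j+1) := Nat.choose_succ_succ a j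
    have e2 : b.choose (j+1) = (b-1).choose j + (b-1).choose (j+1) := by
      conv_lhs => rw [hb]
      exact Nat.choose_succ_succ (b-1) j
    have e3 := Nat.choose_le_choose j (show a ≤ b - 1 by omega)
    omega

lemma choose_convex (k n : ℕ) : ∀ j a b, a + b = n → a ≤ b → n/2 - a = j →
    2 * (n/2).choose k ≤ a.choose k + b.choose k := by
  intro j
  induction j with
  | zero =>
    intro a b hab h hj
    have ha : a = n/2 := by omega
    have hb : n/2 ≤ b := by omega
    have h2 := Nat.choose_le_choose k hb
    rw [ha]
    omega
  | succ j ih =>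
    intro a b hab h hj
    have h1 : a < b := by omega
    have h2 := pascal_step k a b h1
    have h3 := ih (a+1) (b-1) (by omega) (by omega) (by omega)
    omega

noncomputable def edgeSet (n k : ℕ) (C : Finset (Fin n)) : Finset (Finset (Fin n)) :=
  ((Finset.univ : Finset (Fin n)).powersetCard k).filter (fun e => ∃ v ∈ e, v ∈ C)

noncomputable def covSet (n k m : ℕ) (C : Finset (Fin n)) : Finset (Finset (Finset (Fin n))) :=
  (hypSpace n k m).filter (fun H => ∀ e ∈ H, ∃ v ∈ e, v ∈ C)

lemma hypSpace_card (n k m : ℕ) : (hypSpace n k m).card = (n.choose k).choose m := by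
  have h : hypSpace n k m
      = Finset.powersetCard m ((Finset.univ : Finset (Fin n)).powersetCard k) := by
    ext H
    simp only [hypSpace, mem_filter, mem_univ, true_and, Finset.mem_powersetCard,
      Finset.subset_iff, mem_univ]
    constructor
    · rintro ⟨h1, h2⟩
      exact ⟨fun e he => ⟨fun v _ => trivial, h1 e he⟩, h2⟩
    · rintro ⟨h1, h2⟩
      exact ⟨fun e he => (h1 he).2, h2⟩
  rw [h, card_powersetCard, card_powersetCard, card_univ, Fintype.card_fin]

lemma edgeSet_card (n k : ℕ) (C : Finset (Fin n)) :
    (edgeSet n k C).card = n.choose k - (n - C.card).choose k := by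
  have hsub : (Cᶜ).powersetCard k ⊆ (Finset.univ : Finset (Fin n)).powersetCard k :=
    Finset.powersetCard_mono (subset_univ _)
  have h : edgeSet n k C
      = (Finset.univ : Finset (Fin n)).powersetCard k \ (Cᶜ).powersetCard k := by
    ext e
    rw [Finset.mem_sdiff]
    simp only [edgeSet, mem_filter, mem_sdiff, Finset.mem_powersetCard]
    constructor
    · rintro ⟨⟨hsu, hk⟩, v, hv, hvC⟩
      refine ⟨⟨hsu, hk⟩, fun hmem => ?_⟩
      exact (Finset.mem_compl.1 (hmem.1 hv)) hvC
    · rintro ⟨⟨hsu, hk⟩, hnot⟩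
      refine ⟨⟨hsu, hk⟩, ?_⟩
      by_contra hc
      push_neg at hc
      exact hnot ⟨fun v hv => Finset.mem_compl.2 (hc v hv), hk⟩
  rw [h, card_sdiff_of_subset hsub, card_powersetCard, card_powersetCard, card_univ, Fintype.card_fin,
    card_compl, Fintype.card_fin]

lemma covSet_card (n k m : ℕ) (C : Finset (Fin n)) :
    (covSet n k m C).card = (n.choose k - (n - C.card).choose k).choose m := by
  have h : covSet n k m C = Finset.powersetCard m (edgeSet n k C) := by
    ext H
    simp only [covSet, hypSpace, edgeSet, mem_filter, mem_univ, true_and,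
      Finset.mem_powersetCard, Finset.subset_iff]
    constructor
    · rintro ⟨⟨h1, h2⟩, h3⟩
      exact ⟨fun e he => ⟨⟨fun v _ => trivial, h1 e he⟩, h3 e he⟩, h2⟩
    · rintro ⟨h1, h2⟩
      exact ⟨⟨fun e he => (h1 he).1.2, h2⟩, fun e he => (h1 he).2⟩
  rw [h, card_powersetCard, edgeSet_card]

lemma count_bound (n k m : ℕ) :
    (((hypSpace n k m ×ˢ hypSpace n k m).filter (fun p => DisjointCovers p.1 p.2)).card)
      ≤ ∑ C : Finset (Fin n), (covSet n k m C).card * (covSet n k m Cᶜ).card := by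
  have hsub : ((hypSpace n k m ×ˢ hypSpace n k m).filter (fun p => DisjointCovers p.1 p.2))
      ⊆ Finset.univ.biUnion (fun C : Finset (Fin n) => covSet n k m C ×ˢ covSet n k m Cᶜ) := by
    intro p hp
    rw [mem_filter] at hp
    obtain ⟨hmem, C₁, C₂, hdisj, h1, h2⟩ := hp
    rw [Finset.mem_product] at hmem
    rw [Finset.mem_biUnion]
    refine ⟨C₁, mem_univ _, ?_⟩
    rw [Finset.mem_product]
    constructor
    · rw [covSet, mem_filter]; exact ⟨hmem.1, h1⟩
    · rw [covSet, mem_filter]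
      refine ⟨hmem.2, fun e he => ?_⟩
      obtain ⟨v, hv, hvC⟩ := h2 e he
      exact ⟨v, hv, Finset.mem_compl.2 (Finset.disjoint_right.1 hdisj hvC)⟩
  calc _ ≤ _ := Finset.card_le_card hsub
    _ ≤ ∑ C : Finset (Fin n), (covSet n k m C ×ˢ covSet n k m Cᶜ).card :=
        Finset.card_biUnion_le
    _ = _ := by simp [Finset.card_product]

lemma probDC_nonneg (n k m : ℕ) : 0 ≤ probDC n k m := by
  unfold probDC; positivity

lemma probDC_le_one (n k m : ℕ) : probDC n k m ≤ 1 := by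
  unfold probDC
  apply div_le_one_of_le₀
  · exact_mod_cast Finset.card_le_card (Finset.filter_subset _ _)
  · positivity

lemma master (n k m : ℕ) (hm : 1 ≤ m) :
    probDC n k m ≤ 2 ^ n * ((1 - ((n/2).choose k : ℝ) / (n.choose k)) ^ 2) ^ m := by
  set N := n.choose k with hNdef
  set g : ℝ := (((n/2).choose k : ℝ)) / (N : ℝ) with hgdef
  by_cases hD : ((hypSpace n k m).card : ℝ) = 0
  · have h0 : probDC n k m = 0 := by
      unfold probDC
      rw [Finset.card_product]
      push_cast
      rw [hD]
      simp
    rw [h0]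
    positivity
  · -- nonempty case
    have hCm0 : N.choose m ≠ 0 := by
      rw [hypSpace_card] at hD; exact_mod_cast hD
    have hmN : m ≤ N := by
      by_contra hc
      exact hCm0 (Nat.choose_eq_zero_of_lt (by omega))
    have hNpos : 0 < N := lt_of_lt_of_le hm hmN
    have hCm : (0:ℝ) < (N.choose m : ℝ) := by
      exact_mod_cast Nat.pos_of_ne_zero hCm0
    have hg0 : 0 ≤ g := by positivity
    have hg1 : g ≤ 1 := by
      rw [hgdef, div_le_one (by exact_mod_cast hNpos)]
      exact_mod_cast Nat.choose_le_choose k (Nat.div_le_self n 2)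
    have key : ∀ C : Finset (Fin n),
        ((covSet n k m C).card : ℝ) * ((covSet n k m Cᶜ).card : ℝ)
          ≤ ((1 - g) ^ 2) ^ m * ((N.choose m : ℝ)) ^ 2 := by
      intro C
      rw [covSet_card, covSet_card]
      have hcc : (Cᶜ).card = n - C.card := by
        rw [Finset.card_compl, Fintype.card_fin]
      rw [hcc]
      have hcn : C.card ≤ n := by
        simpa using Finset.card_le_univ C
      have hnn : n - (n - C.card) = C.card := by omega
      rw [hnn]
      set c := C.card
      set A := N - (n-c).choose k with hAdef
      set B := N - c.choose k with hBdef
      have hchle1 : (n-c).choose k ≤ N := Nat.choose_le_choose k (Nat.sub_le n c)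
      have hchle2 : c.choose k ≤ N := Nat.choose_le_choose k hcn
      have hA : A ≤ N := Nat.sub_le _ _
      have hB : B ≤ N := Nat.sub_le _ _
      have r1 := choose_ratio_le m A N hNpos hA
      have r2 := choose_ratio_le m B N hNpos hB
      have hconv : 2 * (n/2).choose k ≤ c.choose k + (n-c).choose k := by
        rcases le_total c (n-c) with h | h
        · exact choose_convex k n _ c (n-c) (by omega) h rfl
        · have := choose_convex k n _ (n-c) c (by omega) h rfl
          omega
      set x : ℝ := (((n-c).choose k : ℝ)) / N with hxdef
      set y : ℝ := ((c.choose k : ℝ)) / N with hydef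
      have hNr : (0:ℝ) < (N:ℝ) := by exact_mod_cast hNpos
      have castA : (A:ℝ) / N = 1 - x := by
        rw [hAdef, hxdef, Nat.cast_sub hchle1]
        field_simp
      have castB : (B:ℝ) / N = 1 - y := by
        rw [hBdef, hydef, Nat.cast_sub hchle2]
        field_simp
      have hx0 : 0 ≤ x := by positivity
      have hy0 : 0 ≤ y := by positivity
      have hx1 : x ≤ 1 := by
        rw [hxdef, div_le_one hNr]; exact_mod_cast hchle1
      have hy1 : y ≤ 1 := by
        rw [hydef, div_le_one hNr]; exact_mod_cast hchle2
      have hgxy : 2 * g ≤ x + y := by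
        rw [hgdef, hxdef, hydef, ← add_div, ← mul_div_assoc]
        have hc' : (2 * (n/2).choose k : ℝ) ≤ ((n-c).choose k : ℝ) + (c.choose k : ℝ) := by
          exact_mod_cast (by omega : 2 * (n/2).choose k ≤ (n-c).choose k + c.choose k)
        gcongr
      have prod : ((A:ℝ)/N) * ((B:ℝ)/N) ≤ (1 - g)^2 := by
        rw [castA, castB]
        have h1 : (1-x)*(1-y) ≤ (1-(x+y)/2)^2 := by nlinarith [sq_nonneg (x-y)]
        have h2 : (0:ℝ) ≤ 1-(x+y)/2 := by linarith
        have h3 : 1-(x+y)/2 ≤ 1-g := by linarith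
        calc (1-x)*(1-y) ≤ (1-(x+y)/2)^2 := h1
          _ ≤ (1-g)^2 := by nlinarith
      calc ((A.choose m : ℝ)) * ((B.choose m : ℝ))
          ≤ (((A:ℝ)/N)^m * N.choose m) * (((B:ℝ)/N)^m * N.choose m) := by
            apply mul_le_mul r1 r2 (by positivity) (by positivity)
        _ = (((A:ℝ)/N) * ((B:ℝ)/N))^m * ((N.choose m : ℝ))^2 := by
            rw [mul_pow]; ring
        _ ≤ ((1 - g)^2)^m * ((N.choose m : ℝ))^2 := by
            apply mul_le_mul_of_nonneg_right _ (sq_nonneg _)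
            exact pow_le_pow_left₀ (by positivity) prod m
    have sum_bound :
        ((((hypSpace n k m ×ˢ hypSpace n k m).filter
            (fun p => DisjointCovers p.1 p.2)).card : ℝ))
          ≤ 2^n * (((1-g)^2)^m * ((N.choose m : ℝ))^2) := by
      have h1 : ((((hypSpace n k m ×ˢ hypSpace n k m).filter
            (fun p => DisjointCovers p.1 p.2)).card : ℝ))
          ≤ ((∑ C : Finset (Fin n), (covSet n k m C).card * (covSet n k m Cᶜ).card : ℕ) : ℝ) := by
        exact_mod_cast count_bound n k m
      refine h1.trans ?_
      push_cast
      calc ∑ C : Finset (Fin n), ((covSet n k m C).card : ℝ) * ((covSet n k m Cᶜ).card : ℝ)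
          ≤ ∑ _C : Finset (Fin n), ((1-g)^2)^m * ((N.choose m : ℝ))^2 :=
            Finset.sum_le_sum (fun C _ => key C)
        _ = 2^n * (((1-g)^2)^m * ((N.choose m : ℝ))^2) := by
            rw [Finset.sum_const, Finset.card_univ, Fintype.card_finset, Fintype.card_fin,
              nsmul_eq_mul]
            push_cast
            ring
    unfold probDC
    rw [Finset.card_product, hypSpace_card]
    push_cast
    rw [div_le_iff₀ (mul_pos hCm hCm)]
    refine sum_bound.trans (le_of_eq (by ring))

lemma dF_lb : ∀ (k m : ℕ), (m + 1 - k)^k ≤ m.descFactorial k := by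
  intro k
  induction k with
  | zero => intro m; simp
  | succ k ih =>
    intro m
    rw [Nat.descFactorial_succ]
    have hmk : m + 1 - (k+1) = m - k := by omega
    have h1 : (m + 1 - (k+1))^(k+1) = (m - k) * (m - k)^k := by
      rw [hmk, pow_succ, mul_comm]
    rw [h1]
    exact Nat.mul_le_mul_left _ ((Nat.pow_le_pow_left (by omega) k).trans (ih m))

lemma g_lb (k n : ℕ) (h : 2*k + 2 ≤ n) :
    ((1:ℝ)/2 - (k:ℝ)/n) ^ k ≤ ((n/2).choose k : ℝ) / (n.choose k) := by
  have hn0 : (0:ℝ) < n := by exact_mod_cast (show 0 < n by omega)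
  have hkn : k ≤ n := by omega
  have hCpos : (0:ℝ) < (n.choose k : ℝ) := by exact_mod_cast Nat.choose_pos hkn
  have hfpos : (0:ℝ) < (k.factorial : ℝ) := by exact_mod_cast k.factorial_pos
  have hhalf : (0:ℝ) ≤ (n:ℝ)/2 - k := by
    have : (2*k+2 : ℝ) ≤ n := by exact_mod_cast h
    linarith
  -- nat facts
  have c1 : ((n.choose k : ℝ)) * (k.factorial : ℝ) ≤ (n:ℝ)^k := by
    have : n.choose k * k.factorial ≤ n ^ k := by
      have := Nat.descFactorial_le_pow n k
      rw [Nat.descFactorial_eq_factorial_mul_choose] at this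
      linarith
    exact_mod_cast this
  have c2 : ((n:ℝ)/2 - k)^k ≤ ((n/2).choose k : ℝ) * (k.factorial : ℝ) := by
    have nat2 : (n/2 + 1 - k)^k ≤ (n/2).choose k * k.factorial := by
      have h1 := dF_lb k (n/2)
      rw [Nat.descFactorial_eq_factorial_mul_choose] at h1
      linarith
    have cast2 : ((n:ℝ)/2 - k) ≤ ((n/2 + 1 - k : ℕ) : ℝ) := by
      have hk2 : k ≤ n/2 + 1 := by omega
      have h2n : n ≤ 2*(n/2)+1 := by omega
      have h2n' : (n:ℝ) ≤ 2*((n/2 : ℕ):ℝ)+1 := by exact_mod_cast h2n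
      push_cast [hk2]
      linarith
    calc ((n:ℝ)/2 - k)^k ≤ (((n/2 + 1 - k : ℕ) : ℝ))^k :=
          pow_le_pow_left₀ hhalf cast2 k
      _ ≤ ((n/2).choose k : ℝ) * (k.factorial : ℝ) := by exact_mod_cast nat2
  have e : ((1:ℝ)/2 - (k:ℝ)/n) = ((n:ℝ)/2 - k)/n := by
    field_simp
  rw [e, div_pow, le_div_iff₀ hCpos]
  have step : (((n:ℝ)/2-k)^k/(n:ℝ)^k * ((n.choose k : ℝ) * (k.factorial : ℝ)))
      ≤ ((n/2).choose k : ℝ) * (k.factorial : ℝ) := by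
    calc (((n:ℝ)/2-k)^k/(n:ℝ)^k * ((n.choose k : ℝ) * (k.factorial : ℝ)))
        ≤ (((n:ℝ)/2-k)^k/(n:ℝ)^k * (n:ℝ)^k) := by
          apply mul_le_mul_of_nonneg_left c1 (by positivity)
      _ = ((n:ℝ)/2-k)^k := div_mul_cancel₀ _ (by positivity)
      _ ≤ _ := c2
  have := (mul_le_mul_iff_of_pos_right hfpos).1 (by linarith [step] : (((n:ℝ)/2-k)^k/(n:ℝ)^k * (n.choose k : ℝ)) * (k.factorial : ℝ) ≤ ((n/2).choose k : ℝ) * (k.factorial : ℝ))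
  linarith

/-- For `k ≥ 3` and `r > 2^(k−1) ln 2`, two independent random `k`-uniform
hypergraphs distributed as `H_k(n, ⌊rn⌋)` admit disjoint covers with
probability tending to `0`. -/
theorem no_disjoint_covers_above_threshold (k : ℕ) (hk : 3 ≤ k) (r : ℝ)
    (hr : (2 : ℝ) ^ (k - 1) * Real.log 2 < r) :
    Tendsto (fun n => probDC n k ⌊r * n⌋₊) atTop (nhds 0) := by
  have hlog2 : 0 < Real.log 2 := Real.log_pos (by norm_num)
  have hrpos : 0 < r := lt_trans (by positivity) hr
  have h4le : (4:ℝ) ≤ 2^(k-1) := by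
    calc (4:ℝ) = 2^2 := by norm_num
      _ ≤ 2^(k-1) := pow_le_pow_right₀ (by norm_num) (by omega)
  have hr1 : (1:ℝ) ≤ r := by
    have hl : (0.6931471803:ℝ) < Real.log 2 := Real.log_two_gt_d9
    nlinarith
  set δ : ℝ := 2*r*((1:ℝ)/2)^k - Real.log 2 with hδdef
  clear_value δ
  have h2k : (2:ℝ)^(k-1) * 2 = 2^k := by
    rw [← pow_succ]
    congr 1
    omega
  have h2kpos : (0:ℝ) < 2^k := by positivity
  have hδpos : 0 < δ := by
    have hp : ((1:ℝ)/2)^k = 1/2^k := by rw [div_pow, one_pow]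
    have hkey : Real.log 2 * 2^k < 2*r := by nlinarith
    rw [hδdef, hp, sub_pos]
    rw [show (2:ℝ)*r*(1/2^k) = (2*r)/2^k by ring, lt_div_iff₀ h2kpos]
    linarith
  have T1 : Tendsto (fun n : ℕ => ((⌊r * (n:ℝ)⌋₊ : ℝ)/(n:ℝ))) atTop (nhds r) :=
    (tendsto_nat_floor_mul_div_atTop hrpos.le).comp tendsto_natCast_atTop_atTop
  have T2 : Tendsto (fun n : ℕ => ((k:ℝ)/(n:ℝ))) atTop (nhds 0) :=
    tendsto_const_div_atTop_nhds_zero_nat (k:ℝ)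
  have T3 : Tendsto (fun n : ℕ => ((1:ℝ)/2 - (k:ℝ)/n)^k) atTop (nhds (((1:ℝ)/2)^k)) := by
    have h := ((tendsto_const_nhds (x := (1:ℝ)/2) (f := (atTop : Filter ℕ))).sub T2).pow k
    simpa using h
  have TA : Tendsto (fun n : ℕ =>
      Real.log 2 - 2 * ((⌊r*(n:ℝ)⌋₊:ℝ)/n) * ((1:ℝ)/2 - (k:ℝ)/n)^k) atTop (nhds (-δ)) := by
    have h := (tendsto_const_nhds (x := Real.log 2) (f := (atTop : Filter ℕ))).sub
      (((tendsto_const_nhds (x := (2:ℝ)) (f := (atTop : Filter ℕ))).mul T1).mul T3)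
    rw [show (-δ) = Real.log 2 - 2*r*((1:ℝ)/2)^k by rw [hδdef]; ring]
    exact h
  have hev1 : ∀ᶠ n : ℕ in atTop,
      Real.log 2 - 2 * ((⌊r*(n:ℝ)⌋₊:ℝ)/n) * ((1:ℝ)/2 - (k:ℝ)/n)^k ≤ -δ/2 :=
    TA.eventually_le_const (by linarith)
  have hev2 : ∀ᶠ n : ℕ in atTop, 2*k+2 ≤ n := eventually_atTop.2 ⟨2*k+2, fun n hn => hn⟩
  have hmain : ∀ᶠ n : ℕ in atTop, probDC n k ⌊r*(n:ℝ)⌋₊ ≤ Real.exp (-δ/2 * n) := by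
    filter_upwards [hev1, hev2] with n hA hn
    set m := ⌊r*(n:ℝ)⌋₊ with hm
    have hn0 : 0 < n := by omega
    have hnr : (0:ℝ) < n := by exact_mod_cast hn0
    have hm1 : 1 ≤ m := by
      apply Nat.le_floor
      have : (1:ℝ) ≤ (n:ℝ) := by exact_mod_cast hn0
      push_cast
      nlinarith
    set g : ℝ := (((n/2).choose k : ℝ))/((n.choose k : ℕ) : ℝ) with hg
    have hkn : k ≤ n := by omega
    have hCpos : (0:ℝ) < ((n.choose k : ℕ) : ℝ) := by exact_mod_cast Nat.choose_pos hkn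
    have hgub : g ≤ 1 := by
      rw [hg, div_le_one hCpos]
      exact_mod_cast Nat.choose_le_choose k (Nat.div_le_self n 2)
    have hg0 : 0 ≤ g := by positivity
    have hglb : ((1:ℝ)/2 - (k:ℝ)/n)^k ≤ g := g_lb k n hn
    have h1 : probDC n k m ≤ 2^n * ((1-g)^2)^m := master n k m hm1
    have h2 : ((1-g)^2)^m = (1-g)^(2*m) := by rw [pow_mul]
    have h3 : (1-g)^(2*m) ≤ Real.exp (-g)^(2*m) :=
      pow_le_pow_left₀ (by linarith) (by linarith [Real.add_one_le_exp (-g)]) _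
    have h4 : Real.exp (-g)^(2*m) = Real.exp (-g * (2*m)) := by
      rw [← Real.exp_nat_mul]
      congr 1
      push_cast
      ring
    have h5 : (2:ℝ)^n = Real.exp (n * Real.log 2) := by
      rw [Real.exp_nat_mul, Real.exp_log] <;> norm_num
    calc probDC n k m ≤ 2^n * ((1-g)^2)^m := h1
      _ = Real.exp ((n:ℝ)*Real.log 2) * (1-g)^(2*m) := by rw [h2, h5]
      _ ≤ Real.exp ((n:ℝ)*Real.log 2) * Real.exp (-g*(2*m)) :=
          mul_le_mul_of_nonneg_left (h3.trans_eq h4) (Real.exp_nonneg _)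
      _ = Real.exp ((n:ℝ)*Real.log 2 - 2*(m:ℝ)*g) := by
          rw [← Real.exp_add]
          congr 1
          ring
      _ ≤ Real.exp (-δ/2 * n) := by
          apply Real.exp_le_exp.2
          have hmr : (0:ℝ) ≤ (m:ℝ) := by positivity
          have hb1 : (n:ℝ)*Real.log 2 - 2*(m:ℝ)*g
              ≤ (n:ℝ)*Real.log 2 - 2*(m:ℝ)*(((1:ℝ)/2 - (k:ℝ)/n)^k) := by
            nlinarith [hglb]
          have hb2 : (n:ℝ)*Real.log 2 - 2*(m:ℝ)*(((1:ℝ)/2 - (k:ℝ)/n)^k)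
              = (n:ℝ) * (Real.log 2 - 2*((m:ℝ)/n)*(((1:ℝ)/2 - (k:ℝ)/n)^k)) := by
            field_simp
          have hb3 : (n:ℝ) * (Real.log 2 - 2*((m:ℝ)/n)*(((1:ℝ)/2 - (k:ℝ)/n)^k))
              ≤ (n:ℝ) * (-δ/2) := mul_le_mul_of_nonneg_left hA (le_of_lt hnr)
          calc (n:ℝ)*Real.log 2 - 2*(m:ℝ)*g ≤ _ := hb1
            _ = _ := hb2
            _ ≤ (n:ℝ) * (-δ/2) := hb3
            _ = -δ/2 * n := by ring
  have hexp0 : Tendsto (fun n : ℕ => Real.exp (-δ/2 * n)) atTop (nhds 0) := by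
    have h1 : (fun n : ℕ => Real.exp (-δ/2 * n)) = (fun n : ℕ => (Real.exp (-δ/2))^n) := by
      funext n
      rw [← Real.exp_nat_mul]
      congr 1
      ring
    rw [h1]
    exact tendsto_pow_atTop_nhds_zero_of_lt_one (Real.exp_nonneg _)
      (Real.exp_lt_one_iff.2 (by linarith))
  exact tendsto_of_tendsto_of_tendsto_of_le_of_le' tendsto_const_nhds hexp0
    (Eventually.of_forall (fun n => probDC_nonneg n k _)) hmain
end

section
/- Fix an integer k ≥ 2 and constants t ∈ ℕ and c > 0, and let p(n) ≤ c·n^{1−k} for all n. Let H₁ and H₂ be two independent random k-uniform hypergraphs on vertex set {1,…,n}, each distributed as H_k(n, p(n)). Then with probability tending to 1 as n → ∞, for every set B ⊆ {1,…,n} with |B| ≤ t, the subhypergraphs of H₁ and of H₂ consisting of the edges entirely contained in B admit disjoint covers. -/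
open Filter Finset

open scoped Classical

/-- All possible edges of a `k`-uniform hypergraph on `{1,…,n}`. -/
noncomputable def allEdges (n k : ℕ) : Finset (Finset (Fin n)) :=
  Finset.univ.filter (fun e => e.card = k)

/-- The probability, under two independent copies of the binomial random
`k`-uniform hypergraph `H_k(n,p)` (each possible edge present independently
with probability `p`), that the pair `(H₁, H₂)` satisfies `P`. -/
noncomputable def probPair (n k : ℕ) (p : ℝ)
    (P : Finset (Finset (Fin n)) → Finset (Finset (Fin n)) → Prop) : ℝ :=
  ∑ H₁ ∈ (allEdges n k).powerset, ∑ H₂ ∈ (allEdges n k).powerset,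
    if P H₁ H₂ then
      (p ^ H₁.card * (1 - p) ^ ((allEdges n k).card - H₁.card)) *
        (p ^ H₂.card * (1 - p) ^ ((allEdges n k).card - H₂.card))
    else 0

/-! ### Auxiliary lemmas about weighted sums over powersets -/

/-- Real-valued indicator of a proposition. -/
noncomputable def ind (P : Prop) : ℝ := if P then 1 else 0

lemma ind_nonneg (P : Prop) : 0 ≤ ind P := by
  unfold ind; split_ifs <;> norm_num

lemma ind_of_true {P : Prop} (h : P) : ind P = 1 := by
  unfold ind; rw [if_pos h]

lemma ind_not (P : Prop) : ind (¬ P) = 1 - ind P := by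
  unfold ind; by_cases h : P <;> simp [h]

lemma ind_and (P Q : Prop) : ind (P ∧ Q) = ind P * ind Q := by
  unfold ind; by_cases h : P <;> by_cases h' : Q <;> simp [h, h']

lemma ind_le_ind {P Q : Prop} (h : P → Q) : ind P ≤ ind Q := by
  unfold ind
  split_ifs with h1 h2 h2
  · exact le_rfl
  · exact absurd (h h1) h2
  · norm_num
  · exact le_rfl

lemma sum_weights {α : Type*} [DecidableEq α] (E : Finset α) (p : ℝ) :
    ∑ H ∈ E.powerset, p ^ H.card * (1 - p) ^ (E.card - H.card) = 1 := by
  have h := Finset.prod_add (fun _ : α => p) (fun _ : α => (1 : ℝ) - p) E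
  simp only [Finset.prod_const] at h
  have h1 : (p + (1 - p)) = (1 : ℝ) := by ring
  rw [h1, one_pow] at h
  rw [show (∑ H ∈ E.powerset, p ^ H.card * (1 - p) ^ (E.card - H.card))
      = ∑ H ∈ E.powerset, p ^ H.card * (1 - p) ^ ((E \ H).card) from
    Finset.sum_congr rfl fun H hH => by
      rw [Finset.card_sdiff_of_subset (Finset.mem_powerset.mp hH)], ← h]

lemma sum_weights_filter {α : Type*} [DecidableEq α] (E F : Finset α) (hF : F ⊆ E) (p : ℝ) :
    ∑ H ∈ E.powerset.filter (fun H => F ⊆ H), p ^ H.card * (1 - p) ^ (E.card - H.card)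
      = p ^ F.card := by
  have key : ∑ H ∈ E.powerset.filter (fun H => F ⊆ H),
      p ^ H.card * (1 - p) ^ (E.card - H.card)
      = ∑ G ∈ (E \ F).powerset, p ^ (F.card + G.card) * (1 - p) ^ ((E \ F).card - G.card) := by
    refine Finset.sum_nbij' (fun H => H \ F) (fun G => G ∪ F) ?_ ?_ ?_ ?_ ?_
    · intro H hH
      rw [Finset.mem_filter, Finset.mem_powerset] at hH
      exact Finset.mem_powerset.mpr (Finset.sdiff_subset_sdiff hH.1 le_rfl)
    · intro G hG
      rw [Finset.mem_powerset] at hG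
      rw [Finset.mem_filter, Finset.mem_powerset]
      exact ⟨Finset.union_subset (hG.trans (Finset.sdiff_subset)) hF,
        Finset.subset_union_right⟩
    · intro H hH
      rw [Finset.mem_filter] at hH
      exact Finset.sdiff_union_of_subset hH.2
    · intro G hG
      rw [Finset.mem_powerset] at hG
      have hd : Disjoint G F := Finset.disjoint_of_subset_left hG Finset.sdiff_disjoint
      show (G ∪ F) \ F = G
      rw [Finset.union_sdiff_distrib, Finset.sdiff_self, Finset.union_empty,
        Finset.sdiff_eq_self_of_disjoint hd]
    · intro H hH
      rw [Finset.mem_filter, Finset.mem_powerset] at hH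
      have h1 : (H \ F).card = H.card - F.card := Finset.card_sdiff_of_subset hH.2
      have h2 : F.card ≤ H.card := Finset.card_le_card hH.2
      have h3 : H.card ≤ E.card := Finset.card_le_card hH.1
      have h4 : (E \ F).card = E.card - F.card := Finset.card_sdiff_of_subset hF
      have h5 : H.card = F.card + (H \ F).card := by omega
      have h6 : E.card - H.card = (E \ F).card - (H \ F).card := by omega
      rw [h6, ← h5]
  rw [key]
  have : ∀ G ∈ (E \ F).powerset,
      p ^ (F.card + G.card) * (1 - p) ^ ((E \ F).card - G.card)
        = p ^ F.card * (p ^ G.card * (1 - p) ^ ((E \ F).card - G.card)) := by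
    intro G _; rw [pow_add]; ring
  rw [Finset.sum_congr rfl this, ← Finset.mul_sum, sum_weights, mul_one]

lemma sum_weights_subset {α : Type*} [DecidableEq α] (E F : Finset α) (hF : F ⊆ E) (p : ℝ) :
    ∑ H ∈ E.powerset, ind (F ⊆ H) * (p ^ H.card * (1 - p) ^ (E.card - H.card))
      = p ^ F.card := by
  classical
  have h1 : ∑ H ∈ E.powerset, ind (F ⊆ H) * (p ^ H.card * (1 - p) ^ (E.card - H.card))
      = ∑ H ∈ E.powerset.filter (fun H => F ⊆ H),
          p ^ H.card * (1 - p) ^ (E.card - H.card) := by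
    rw [Finset.sum_filter]
    refine Finset.sum_congr rfl fun H _ => ?_
    unfold ind
    split_ifs
    · rw [one_mul]
    · rw [zero_mul]
  rw [h1, sum_weights_filter E F hF]

/-! ### Basic properties of `probPair` -/

section probPair

variable {n k : ℕ} {p : ℝ}

/-- The weight of a hypergraph. -/
noncomputable def wt (n k : ℕ) (p : ℝ) (H : Finset (Finset (Fin n))) : ℝ :=
  p ^ H.card * (1 - p) ^ ((allEdges n k).card - H.card)

lemma wt_nonneg (hp0 : 0 ≤ p) (hp1 : p ≤ 1) (H : Finset (Finset (Fin n))) :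
    0 ≤ wt n k p H :=
  mul_nonneg (pow_nonneg hp0 _) (pow_nonneg (by linarith) _)

lemma probPair_eq_ind (P : Finset (Finset (Fin n)) → Finset (Finset (Fin n)) → Prop) :
    probPair n k p P = ∑ H₁ ∈ (allEdges n k).powerset, ∑ H₂ ∈ (allEdges n k).powerset,
      ind (P H₁ H₂) * (wt n k p H₁ * wt n k p H₂) := by
  unfold probPair wt ind
  refine Finset.sum_congr rfl fun H₁ _ => Finset.sum_congr rfl fun H₂ _ => ?_
  split_ifs
  · rw [one_mul]
  · rw [zero_mul]

lemma sum_wt : ∑ H ∈ (allEdges n k).powerset, wt n k p H = 1 := sum_weights _ p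

lemma probPair_nonneg (hp0 : 0 ≤ p) (hp1 : p ≤ 1)
    (P : Finset (Finset (Fin n)) → Finset (Finset (Fin n)) → Prop) :
    0 ≤ probPair n k p P := by
  rw [probPair_eq_ind]
  refine Finset.sum_nonneg fun H₁ _ => Finset.sum_nonneg fun H₂ _ => ?_
  exact mul_nonneg (ind_nonneg _)
    (mul_nonneg (wt_nonneg hp0 hp1 H₁) (wt_nonneg hp0 hp1 H₂))

lemma probPair_eq_one_sub (P : Finset (Finset (Fin n)) → Finset (Finset (Fin n)) → Prop) :
    probPair n k p P = 1 - probPair n k p (fun H₁ H₂ => ¬ P H₁ H₂) := by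
  rw [probPair_eq_ind, probPair_eq_ind]
  have hpt : ∀ H₁ H₂ : Finset (Finset (Fin n)),
      ind (¬ P H₁ H₂) * (wt n k p H₁ * wt n k p H₂)
        = wt n k p H₁ * wt n k p H₂ - ind (P H₁ H₂) * (wt n k p H₁ * wt n k p H₂) := by
    intro H₁ H₂; rw [ind_not]; ring
  have hw : ∑ H₁ ∈ (allEdges n k).powerset, ∑ H₂ ∈ (allEdges n k).powerset,
      wt n k p H₁ * wt n k p H₂ = 1 := by
    have : ∀ H₁ ∈ (allEdges n k).powerset,
        ∑ H₂ ∈ (allEdges n k).powerset, wt n k p H₁ * wt n k p H₂ = wt n k p H₁ := by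
      intro H₁ _; rw [← Finset.mul_sum, sum_wt, mul_one]
    rw [Finset.sum_congr rfl this, sum_wt]
  calc ∑ H₁ ∈ (allEdges n k).powerset, ∑ H₂ ∈ (allEdges n k).powerset,
        ind (P H₁ H₂) * (wt n k p H₁ * wt n k p H₂)
      = 1 - (∑ H₁ ∈ (allEdges n k).powerset, ∑ H₂ ∈ (allEdges n k).powerset,
          (wt n k p H₁ * wt n k p H₂ - ind (P H₁ H₂) * (wt n k p H₁ * wt n k p H₂))) := by
        rw [show (∑ H₁ ∈ (allEdges n k).powerset, ∑ H₂ ∈ (allEdges n k).powerset,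
            (wt n k p H₁ * wt n k p H₂ - ind (P H₁ H₂) * (wt n k p H₁ * wt n k p H₂)))
          = (∑ H₁ ∈ (allEdges n k).powerset, ∑ H₂ ∈ (allEdges n k).powerset,
              wt n k p H₁ * wt n k p H₂)
            - ∑ H₁ ∈ (allEdges n k).powerset, ∑ H₂ ∈ (allEdges n k).powerset,
              ind (P H₁ H₂) * (wt n k p H₁ * wt n k p H₂) from by
          rw [← Finset.sum_sub_distrib]
          exact Finset.sum_congr rfl fun H₁ _ => Finset.sum_sub_distrib _ _, hw]
        ring
    _ = 1 - (∑ H₁ ∈ (allEdges n k).powerset, ∑ H₂ ∈ (allEdges n k).powerset,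
          ind (¬ P H₁ H₂) * (wt n k p H₁ * wt n k p H₂)) := by
        rw [Finset.sum_congr rfl fun H₁ _ => Finset.sum_congr rfl fun H₂ _ => (hpt H₁ H₂).symm]

lemma probPair_mono (hp0 : 0 ≤ p) (hp1 : p ≤ 1)
    {P Q : Finset (Finset (Fin n)) → Finset (Finset (Fin n)) → Prop}
    (h : ∀ H₁ ∈ (allEdges n k).powerset, ∀ H₂ ∈ (allEdges n k).powerset,
      P H₁ H₂ → Q H₁ H₂) :
    probPair n k p P ≤ probPair n k p Q := by
  rw [probPair_eq_ind, probPair_eq_ind]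
  refine Finset.sum_le_sum fun H₁ h₁ => Finset.sum_le_sum fun H₂ h₂ => ?_
  exact mul_le_mul_of_nonneg_right (ind_le_ind (h H₁ h₁ H₂ h₂))
    (mul_nonneg (wt_nonneg hp0 hp1 H₁) (wt_nonneg hp0 hp1 H₂))

lemma probPair_union_bound (hp0 : 0 ≤ p) (hp1 : p ≤ 1) {ι : Type*}
    (I : Finset ι)
    (Q : ι → Finset (Finset (Fin n)) → Finset (Finset (Fin n)) → Prop) :
    probPair n k p (fun H₁ H₂ => ∃ i ∈ I, Q i H₁ H₂)
      ≤ ∑ i ∈ I, probPair n k p (fun H₁ H₂ => Q i H₁ H₂) := by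
  rw [probPair_eq_ind,
    Finset.sum_congr rfl fun (i : ι) (_ : i ∈ I) => probPair_eq_ind (n := n) (k := k) (p := p)
      (fun H₁ H₂ => Q i H₁ H₂)]
  have hind : ∀ H₁ H₂ : Finset (Finset (Fin n)),
      ind (∃ i ∈ I, Q i H₁ H₂) ≤ ∑ i ∈ I, ind (Q i H₁ H₂) := by
    intro H₁ H₂
    by_cases h : ∃ i ∈ I, Q i H₁ H₂
    · obtain ⟨i, hi, hQ⟩ := h
      rw [ind_of_true ⟨i, hi, hQ⟩, ← ind_of_true hQ]
      exact Finset.single_le_sum (f := fun i => ind (Q i H₁ H₂)) (fun j _ => ind_nonneg _) hi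
    · rw [show ind (∃ i ∈ I, Q i H₁ H₂) = 0 from by unfold ind; rw [if_neg h]]
      exact Finset.sum_nonneg fun j _ => ind_nonneg _
  calc ∑ H₁ ∈ (allEdges n k).powerset, ∑ H₂ ∈ (allEdges n k).powerset,
        ind (∃ i ∈ I, Q i H₁ H₂) * (wt n k p H₁ * wt n k p H₂)
      ≤ ∑ H₁ ∈ (allEdges n k).powerset, ∑ H₂ ∈ (allEdges n k).powerset,
          ∑ i ∈ I, ind (Q i H₁ H₂) * (wt n k p H₁ * wt n k p H₂) := by
        refine Finset.sum_le_sum fun H₁ _ => Finset.sum_le_sum fun H₂ _ => ?_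
        rw [← Finset.sum_mul]
        exact mul_le_mul_of_nonneg_right (hind H₁ H₂)
          (mul_nonneg (wt_nonneg hp0 hp1 H₁) (wt_nonneg hp0 hp1 H₂))
    _ = ∑ i ∈ I, ∑ H₁ ∈ (allEdges n k).powerset, ∑ H₂ ∈ (allEdges n k).powerset,
          ind (Q i H₁ H₂) * (wt n k p H₁ * wt n k p H₂) := by
        rw [Finset.sum_congr rfl fun (H₁ : Finset (Finset (Fin n)))
          (_ : H₁ ∈ (allEdges n k).powerset) => Finset.sum_comm, Finset.sum_comm]

lemma probPair_subsets (F₁ F₂ : Finset (Finset (Fin n)))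
    (h₁ : F₁ ⊆ allEdges n k) (h₂ : F₂ ⊆ allEdges n k) :
    probPair n k p (fun H₁ H₂ => F₁ ⊆ H₁ ∧ F₂ ⊆ H₂) = p ^ F₁.card * p ^ F₂.card := by
  rw [probPair_eq_ind]
  have point : ∀ H₁ H₂ : Finset (Finset (Fin n)),
      ind (F₁ ⊆ H₁ ∧ F₂ ⊆ H₂) * (wt n k p H₁ * wt n k p H₂)
        = (ind (F₁ ⊆ H₁) * wt n k p H₁) * (ind (F₂ ⊆ H₂) * wt n k p H₂) := by
    intro H₁ H₂; rw [ind_and]; ring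
  have hsub : ∀ F : Finset (Finset (Fin n)), F ⊆ allEdges n k →
      ∑ H ∈ (allEdges n k).powerset, ind (F ⊆ H) * wt n k p H = p ^ F.card := by
    intro F hF
    exact sum_weights_subset _ F hF p
  calc ∑ H₁ ∈ (allEdges n k).powerset, ∑ H₂ ∈ (allEdges n k).powerset,
        ind (F₁ ⊆ H₁ ∧ F₂ ⊆ H₂) * (wt n k p H₁ * wt n k p H₂)
      = ∑ H₁ ∈ (allEdges n k).powerset,
          (ind (F₁ ⊆ H₁) * wt n k p H₁) * p ^ F₂.card := by
        refine Finset.sum_congr rfl fun H₁ _ => ?_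
        rw [Finset.sum_congr rfl fun H₂ _ => point H₁ H₂, ← Finset.mul_sum, hsub F₂ h₂]
    _ = p ^ F₁.card * p ^ F₂.card := by
        rw [← Finset.sum_mul, hsub F₁ h₁]

end probPair

/-! ### The Hall-type combinatorial lemma -/

lemma good_implies_disjointCovers {n t : ℕ} (H₁ H₂ : Finset (Finset (Fin n)))
    (hgood : ∀ S : Finset (Fin n), S.card ≤ t →
      (H₁.filter (fun e => e ⊆ S)).card + (H₂.filter (fun e => e ⊆ S)).card ≤ S.card) :
    ∀ B : Finset (Fin n), B.card ≤ t →
      DisjointCovers (H₁.filter (fun e => e ⊆ B)) (H₂.filter (fun e => e ⊆ B)) := by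
  intro B hB
  set A : Finset (Finset (Fin n) × Bool) :=
    (H₁.filter (fun e => e ⊆ B)) ×ˢ {true} ∪ (H₂.filter (fun e => e ⊆ B)) ×ˢ {false} with hA
  have hmemA : ∀ y : Finset (Fin n) × Bool, y ∈ A ↔
      ((y.1 ∈ H₁ ∧ y.1 ⊆ B) ∧ y.2 = true) ∨ ((y.1 ∈ H₂ ∧ y.1 ⊆ B) ∧ y.2 = false) := by
    intro y
    rw [hA, Finset.mem_union, Finset.mem_product, Finset.mem_product,
      Finset.mem_filter, Finset.mem_filter, Finset.mem_singleton, Finset.mem_singleton]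
  have hall : ∀ s : Finset ↥A,
      s.card ≤ (s.biUnion fun x => (x : Finset (Fin n) × Bool).1).card := by
    intro s
    have hUB : (s.biUnion fun x => (x : Finset (Fin n) × Bool).1) ⊆ B := by
      intro v hv
      rw [Finset.mem_biUnion] at hv
      obtain ⟨x, _, hvx⟩ := hv
      rcases (hmemA _).mp x.2 with h | h
      · exact h.1.2 hvx
      · exact h.1.2 hvx
    have hUt : (s.biUnion fun x => (x : Finset (Fin n) × Bool).1).card ≤ t :=
      (Finset.card_le_card hUB).trans hB
    have key := hgood _ hUt
    have hinj : s.card ≤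
        ((H₁.filter (fun e => e ⊆ s.biUnion fun x => (x : Finset (Fin n) × Bool).1))
            ×ˢ ({true} : Finset Bool)
          ∪ (H₂.filter (fun e => e ⊆ s.biUnion fun x => (x : Finset (Fin n) × Bool).1))
            ×ˢ ({false} : Finset Bool)).card := by
      refine Finset.card_le_card_of_injOn (fun x => (x : Finset (Fin n) × Bool)) ?_ ?_
      · intro x hx
        have hsub : (x : Finset (Fin n) × Bool).1 ⊆
            s.biUnion fun x => (x : Finset (Fin n) × Bool).1 :=
          Finset.subset_biUnion_of_mem (fun x : ↥A => (x : Finset (Fin n) × Bool).1) hx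
        rw [Finset.mem_coe, Finset.mem_union, Finset.mem_product, Finset.mem_product]
        rcases (hmemA _).mp x.2 with h | h
        · left
          exact ⟨Finset.mem_filter.mpr ⟨h.1.1, hsub⟩, by simp [h.2]⟩
        · right
          exact ⟨Finset.mem_filter.mpr ⟨h.1.1, hsub⟩, by simp [h.2]⟩
      · intro x _ y _ hxy
        exact Subtype.ext hxy
    have hcard : ((H₁.filter (fun e => e ⊆ s.biUnion fun x => (x : Finset (Fin n) × Bool).1))
            ×ˢ ({true} : Finset Bool)
          ∪ (H₂.filter (fun e => e ⊆ s.biUnion fun x => (x : Finset (Fin n) × Bool).1))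
            ×ˢ ({false} : Finset Bool)).card
        ≤ (H₁.filter (fun e => e ⊆ s.biUnion fun x => (x : Finset (Fin n) × Bool).1)).card
          + (H₂.filter (fun e => e ⊆ s.biUnion fun x => (x : Finset (Fin n) × Bool).1)).card := by
      refine (Finset.card_union_le _ _).trans ?_
      simp [Finset.card_product]
    omega
  obtain ⟨f, hfinj, hfmem⟩ :=
    (Finset.all_card_le_biUnion_card_iff_exists_injective
      (fun x : ↥A => (x : Finset (Fin n) × Bool).1)).mp hall
  refine ⟨(A.attach.filter (fun x => x.1.2 = true)).image f,
    (A.attach.filter (fun x => x.1.2 = false)).image f, ?_, ?_, ?_⟩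
  · rw [Finset.disjoint_left]
    intro v hv1 hv2
    simp only [Finset.mem_image, Finset.mem_filter] at hv1 hv2
    obtain ⟨x, ⟨_, hxt⟩, hfx⟩ := hv1
    obtain ⟨y, ⟨_, hyt⟩, hfy⟩ := hv2
    have hxy : x = y := hfinj (hfx.trans hfy.symm)
    rw [hxy, hyt] at hxt
    exact Bool.noConfusion hxt
  · intro e he
    have hAe : (e, true) ∈ A :=
      (hmemA _).mpr (Or.inl ⟨Finset.mem_filter.mp he, rfl⟩)
    refine ⟨f ⟨(e, true), hAe⟩, hfmem _, ?_⟩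
    exact Finset.mem_image.mpr ⟨⟨(e, true), hAe⟩,
      Finset.mem_filter.mpr ⟨Finset.mem_attach _ _, rfl⟩, rfl⟩
  · intro e he
    have hAe : (e, false) ∈ A :=
      (hmemA _).mpr (Or.inr ⟨Finset.mem_filter.mp he, rfl⟩)
    refine ⟨f ⟨(e, false), hAe⟩, hfmem _, ?_⟩
    exact Finset.mem_image.mpr ⟨⟨(e, false), hAe⟩,
      Finset.mem_filter.mpr ⟨Finset.mem_attach _ _, rfl⟩, rfl⟩

/-- For `k ≥ 2`, fixed `t` and `c > 0`, if `p(n) ≤ c·n^(1−k)`, then with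
probability tending to `1` every set `B` of at most `t` vertices is such that
the edges of `H₁` and of `H₂` spanned inside `B` admit disjoint covers. -/
theorem small_sets_have_disjoint_covers (k : ℕ) (hk : 2 ≤ k) (t : ℕ)
    (c : ℝ) (hc : 0 < c) (p : ℕ → ℝ) (hp0 : ∀ n, 0 ≤ p n) (hp1 : ∀ n, p n ≤ 1)
    (hp : ∀ n, p n ≤ c * (n : ℝ) ^ (1 - (k : ℤ))) :
    Tendsto (fun n => probPair n k (p n)
        (fun H₁ H₂ => ∀ B : Finset (Fin n), B.card ≤ t →
          DisjointCovers (H₁.filter (fun e => e ⊆ B))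
            (H₂.filter (fun e => e ⊆ B))))
      atTop (nhds 1) := by
  classical
  set K : ℝ := ((2 ^ 2 ^ t * 2 ^ 2 ^ t : ℕ) : ℝ) with hK
  have hK0 : 0 ≤ K := by positivity
  -- The main per-`n` bound on the probability of failure.
  have main : ∀ n : ℕ,
      probPair n k (p n) (fun H₁ H₂ => ¬ (∀ B : Finset (Fin n), B.card ≤ t →
        DisjointCovers (H₁.filter (fun e => e ⊆ B)) (H₂.filter (fun e => e ⊆ B))))
      ≤ K * p n * (1 + p n) ^ n := by
    intro n
    have hq0 := hp0 n
    have hq1 := hp1 n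
    set q := p n with hqdef
    set 𝒮 : Finset (Finset (Fin n)) :=
      Finset.univ.filter (fun S => S.card ≤ t) with h𝒮
    -- Step A: failure implies some small set spans too many edges.
    have stepA : probPair n k q (fun H₁ H₂ => ¬ (∀ B : Finset (Fin n), B.card ≤ t →
          DisjointCovers (H₁.filter (fun e => e ⊆ B)) (H₂.filter (fun e => e ⊆ B))))
        ≤ probPair n k q (fun H₁ H₂ => ∃ S ∈ 𝒮,
            S.card + 1 ≤ (H₁.filter (fun e => e ⊆ S)).card
              + (H₂.filter (fun e => e ⊆ S)).card) := by
      refine probPair_mono hq0 hq1 ?_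
      intro H₁ _ H₂ _ hnot
      by_contra hno
      push_neg at hno
      refine hnot (good_implies_disjointCovers H₁ H₂ ?_)
      intro S hSt
      have := hno S (Finset.mem_filter.mpr ⟨Finset.mem_univ _, hSt⟩)
      omega
    -- Step B: union bound over the small sets.
    have stepB : probPair n k q (fun H₁ H₂ => ∃ S ∈ 𝒮,
          S.card + 1 ≤ (H₁.filter (fun e => e ⊆ S)).card
            + (H₂.filter (fun e => e ⊆ S)).card)
        ≤ ∑ S ∈ 𝒮, probPair n k q (fun H₁ H₂ =>
            S.card + 1 ≤ (H₁.filter (fun e => e ⊆ S)).card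
              + (H₂.filter (fun e => e ⊆ S)).card) :=
      probPair_union_bound hq0 hq1 𝒮 _
    -- Step C: first-moment bound for a fixed small set `S`.
    have stepC : ∀ S ∈ 𝒮, probPair n k q (fun H₁ H₂ =>
          S.card + 1 ≤ (H₁.filter (fun e => e ⊆ S)).card
            + (H₂.filter (fun e => e ⊆ S)).card)
        ≤ K * q ^ (S.card + 1) := by
      intro S hS
      have hSt : S.card ≤ t := (Finset.mem_filter.mp hS).2
      set ES : Finset (Finset (Fin n)) := (allEdges n k).filter (fun e => e ⊆ S) with hES
      set Pairs : Finset (Finset (Finset (Fin n)) × Finset (Finset (Fin n))) :=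
        (ES.powerset ×ˢ ES.powerset).filter
          (fun q' => q'.1.card + q'.2.card = S.card + 1) with hPairs
      have hC1 : probPair n k q (fun H₁ H₂ =>
            S.card + 1 ≤ (H₁.filter (fun e => e ⊆ S)).card
              + (H₂.filter (fun e => e ⊆ S)).card)
          ≤ probPair n k q (fun H₁ H₂ => ∃ q' ∈ Pairs, q'.1 ⊆ H₁ ∧ q'.2 ⊆ H₂) := by
        refine probPair_mono hq0 hq1 ?_
        intro H₁ hH₁ H₂ hH₂ hbad
        rw [Finset.mem_powerset] at hH₁ hH₂
        set G₁ := H₁.filter (fun e => e ⊆ S) with hG₁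
        set G₂ := H₂.filter (fun e => e ⊆ S) with hG₂
        set a := min G₁.card (S.card + 1) with ha
        have ha1 : a ≤ G₁.card := min_le_left _ _
        have ha2 : a ≤ S.card + 1 := min_le_right _ _
        have ha3 : a = G₁.card ∨ a = S.card + 1 := min_choice _ _
        obtain ⟨F₁, hF₁sub, hF₁card⟩ := Finset.exists_subset_card_eq ha1
        have hb : S.card + 1 - a ≤ G₂.card := by omega
        obtain ⟨F₂, hF₂sub, hF₂card⟩ := Finset.exists_subset_card_eq hb
        have hG₁ES : G₁ ⊆ ES := Finset.filter_subset_filter _ hH₁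
        have hG₂ES : G₂ ⊆ ES := Finset.filter_subset_filter _ hH₂
        refine ⟨(F₁, F₂), ?_, hF₁sub.trans (Finset.filter_subset _ _),
          hF₂sub.trans (Finset.filter_subset _ _)⟩
        rw [hPairs, Finset.mem_filter, Finset.mem_product]
        refine ⟨⟨Finset.mem_powerset.mpr (hF₁sub.trans hG₁ES),
          Finset.mem_powerset.mpr (hF₂sub.trans hG₂ES)⟩, ?_⟩
        simp only [hF₁card, hF₂card]
        omega
      have hC2 : probPair n k q (fun H₁ H₂ => ∃ q' ∈ Pairs, q'.1 ⊆ H₁ ∧ q'.2 ⊆ H₂)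
          ≤ ∑ q' ∈ Pairs, probPair n k q (fun H₁ H₂ => q'.1 ⊆ H₁ ∧ q'.2 ⊆ H₂) :=
        probPair_union_bound hq0 hq1 Pairs _
      have hC3 : ∀ q' ∈ Pairs, probPair n k q (fun H₁ H₂ => q'.1 ⊆ H₁ ∧ q'.2 ⊆ H₂)
          = q ^ (S.card + 1) := by
        intro q' hq'
        rw [hPairs, Finset.mem_filter, Finset.mem_product] at hq'
        have hsub1 : q'.1 ⊆ allEdges n k :=
          (Finset.mem_powerset.mp hq'.1.1).trans (Finset.filter_subset _ _)
        have hsub2 : q'.2 ⊆ allEdges n k :=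
          (Finset.mem_powerset.mp hq'.1.2).trans (Finset.filter_subset _ _)
        rw [probPair_subsets _ _ hsub1 hsub2, ← pow_add, hq'.2]
      have hcardPairs : (Pairs.card : ℝ) ≤ K := by
        have h1 : ES ⊆ S.powerset := by
          intro e he
          rw [hES, Finset.mem_filter] at he
          exact Finset.mem_powerset.mpr he.2
        have h2 : ES.card ≤ 2 ^ t := by
          calc ES.card ≤ S.powerset.card := Finset.card_le_card h1
            _ = 2 ^ S.card := Finset.card_powerset S
            _ ≤ 2 ^ t := Nat.pow_le_pow_right (by norm_num) hSt
        have h3 : Pairs.card ≤ 2 ^ 2 ^ t * 2 ^ 2 ^ t := by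
          calc Pairs.card ≤ (ES.powerset ×ˢ ES.powerset).card :=
              Finset.card_le_card (Finset.filter_subset _ _)
            _ = 2 ^ ES.card * 2 ^ ES.card := by
                rw [Finset.card_product, Finset.card_powerset]
            _ ≤ 2 ^ 2 ^ t * 2 ^ 2 ^ t :=
              Nat.mul_le_mul (Nat.pow_le_pow_right (by norm_num) h2)
                (Nat.pow_le_pow_right (by norm_num) h2)
        rw [hK]
        exact_mod_cast h3
      calc probPair n k q (fun H₁ H₂ =>
            S.card + 1 ≤ (H₁.filter (fun e => e ⊆ S)).card
              + (H₂.filter (fun e => e ⊆ S)).card)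
          ≤ ∑ q' ∈ Pairs, probPair n k q (fun H₁ H₂ => q'.1 ⊆ H₁ ∧ q'.2 ⊆ H₂) :=
            hC1.trans hC2
        _ = Pairs.card • q ^ (S.card + 1) := by
            rw [Finset.sum_congr rfl hC3, Finset.sum_const]
        _ = (Pairs.card : ℝ) * q ^ (S.card + 1) := nsmul_eq_mul _ _
        _ ≤ K * q ^ (S.card + 1) :=
            mul_le_mul_of_nonneg_right hcardPairs (pow_nonneg hq0 _)
    -- Step D: summing the bound.
    have stepD : ∑ S ∈ 𝒮, K * q ^ (S.card + 1) ≤ K * q * (1 + q) ^ n := by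
      have hpt : ∀ S ∈ 𝒮, K * q ^ (S.card + 1) = (K * q) * q ^ S.card := by
        intro S _; rw [pow_succ]; ring
      rw [Finset.sum_congr rfl hpt, ← Finset.mul_sum]
      refine mul_le_mul_of_nonneg_left ?_ (mul_nonneg hK0 hq0)
      have hle : ∑ S ∈ 𝒮, q ^ S.card
          ≤ ∑ S ∈ (Finset.univ : Finset (Finset (Fin n))), q ^ S.card := by
        refine Finset.sum_le_sum_of_subset_of_nonneg ?_ (fun _ _ _ => pow_nonneg hq0 _)
        rw [h𝒮]; exact Finset.filter_subset _ _
      have hco : ∑ S ∈ (Finset.univ : Finset (Finset (Fin n))), q ^ S.card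
          = (1 + q) ^ n := by
        have h := Finset.prod_add (fun _ : Fin n => q) (fun _ : Fin n => (1 : ℝ)) Finset.univ
        simp only [Finset.prod_const, one_pow, mul_one, Finset.card_univ,
          Fintype.card_fin] at h
        rw [Finset.powerset_univ] at h
        rw [← h, add_comm]
      exact hle.trans (le_of_eq hco)
    calc probPair n k q (fun H₁ H₂ => ¬ (∀ B : Finset (Fin n), B.card ≤ t →
          DisjointCovers (H₁.filter (fun e => e ⊆ B)) (H₂.filter (fun e => e ⊆ B))))
        ≤ ∑ S ∈ 𝒮, probPair n k q (fun H₁ H₂ =>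
            S.card + 1 ≤ (H₁.filter (fun e => e ⊆ S)).card
              + (H₂.filter (fun e => e ⊆ S)).card) := stepA.trans stepB
      _ ≤ ∑ S ∈ 𝒮, K * q ^ (S.card + 1) := Finset.sum_le_sum stepC
      _ ≤ K * q * (1 + q) ^ n := stepD
  -- The probability of failure tends to zero.
  have hzero : Tendsto (fun n => probPair n k (p n)
      (fun H₁ H₂ => ¬ (∀ B : Finset (Fin n), B.card ≤ t →
        DisjointCovers (H₁.filter (fun e => e ⊆ B)) (H₂.filter (fun e => e ⊆ B)))))
      atTop (nhds 0) := by
    refine squeeze_zero' (Eventually.of_forall fun n => probPair_nonneg (hp0 n) (hp1 n) _)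
      ?_ (tendsto_const_div_atTop_nhds_zero_nat (K * c * Real.exp c))
    filter_upwards [eventually_ge_atTop 1] with n hn
    have h1 : (1 : ℝ) ≤ (n : ℝ) := by exact_mod_cast hn
    have hn0 : (0 : ℝ) < (n : ℝ) := by linarith
    refine (main n).trans ?_
    have hpn : p n ≤ c / n := by
      refine (hp n).trans ?_
      have hz : (n : ℝ) ^ (1 - (k : ℤ)) ≤ (n : ℝ) ^ (-1 : ℤ) :=
        zpow_le_zpow_right₀ h1 (by omega)
      calc c * (n : ℝ) ^ (1 - (k : ℤ)) ≤ c * (n : ℝ) ^ (-1 : ℤ) :=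
          mul_le_mul_of_nonneg_left hz hc.le
        _ = c / n := by rw [zpow_neg_one]; ring
    have hexp : (1 + p n) ^ n ≤ Real.exp c := by
      have h2 : 1 + p n ≤ Real.exp (p n) := by
        have := Real.add_one_le_exp (p n); linarith
      have h3 : (n : ℝ) * p n ≤ c := by
        have h4 : (n : ℝ) * p n ≤ (n : ℝ) * (c * (n : ℝ) ^ (1 - (k : ℤ))) :=
          mul_le_mul_of_nonneg_left (hp n) (by positivity)
        have h5 : (n : ℝ) * (c * (n : ℝ) ^ (1 - (k : ℤ))) = c * (n : ℝ) ^ (2 - (k : ℤ)) := by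
          rw [show (2 - (k : ℤ)) = 1 + (1 - (k : ℤ)) by ring,
            zpow_add₀ (ne_of_gt hn0), zpow_one]
          ring
        have h6 : (n : ℝ) ^ (2 - (k : ℤ)) ≤ 1 :=
          zpow_le_one_of_nonpos₀ h1 (by omega)
        calc (n : ℝ) * p n ≤ c * (n : ℝ) ^ (2 - (k : ℤ)) := h5 ▸ h4
          _ ≤ c * 1 := mul_le_mul_of_nonneg_left h6 hc.le
          _ = c := mul_one c
      calc (1 + p n) ^ n ≤ Real.exp (p n) ^ n :=
          pow_le_pow_left₀ (by have := hp0 n; linarith) h2 n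
        _ = Real.exp ((n : ℝ) * p n) := (Real.exp_nat_mul _ n).symm
        _ ≤ Real.exp c := Real.exp_le_exp.mpr h3
    have hfin : K * p n * (1 + p n) ^ n ≤ K * (c / (n : ℝ)) * Real.exp c := by
      refine mul_le_mul (mul_le_mul_of_nonneg_left hpn hK0) hexp
        (pow_nonneg (by have := hp0 n; linarith) n) (by positivity)
    have heq2 : K * (c / (n : ℝ)) * Real.exp c = K * c * Real.exp c / (n : ℝ) := by ring
    exact hfin.trans_eq heq2
  have heq : (fun n => probPair n k (p n)
      (fun H₁ H₂ => ∀ B : Finset (Fin n), B.card ≤ t →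
        DisjointCovers (H₁.filter (fun e => e ⊆ B)) (H₂.filter (fun e => e ⊆ B))))
      = fun n => 1 - probPair n k (p n)
        (fun H₁ H₂ => ¬ (∀ B : Finset (Fin n), B.card ≤ t →
          DisjointCovers (H₁.filter (fun e => e ⊆ B)) (H₂.filter (fun e => e ⊆ B)))) :=
    funext fun n => probPair_eq_one_sub _
  rw [heq]
  have := (tendsto_const_nhds (x := (1 : ℝ)) (f := atTop)).sub hzero
  simpa using this
end

section
/- Fix a real c with 0 < c < 1, and let G₁ and G₂ be two independent random graphs on vertex set {1,…,n}, each distributed as G(n, p) with p = c/n; colour the edges of G₁ red and the edges of G₂ blue. Then for all sufficiently large n, the probability that G = G₁ ∪ G₂ contains no alternating cycle (even or odd, of any length) is at least e^{−4/(1−c)}; in particular, with probability at least e^{−4/(1−c)} > 0 the graphs G₁ and G₂ admit disjoint covers. -/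
open Filter Finset

open scoped Classical

/-- The colour of the `i`-th edge of an alternating sequence whose first edge
has colour `b` (`true` = red, `false` = blue). -/
def altColour (b : Bool) (i : ℕ) : Bool := if Even i then b else !b

/-- `v 0, v 1, …, v (m-1)` is an alternating cycle of length `m` in the
coloured graph whose red edges are `H₁` and blue edges are `H₂`, the first
edge `{v 0, v 1}` having colour `b`: the vertices are distinct and the colours
of consecutive edges alternate around the cycle.  For even `m` this is an even
alternating cycle; for odd `m` the two edges at `v 0` both get colour `b`
(an odd alternating cycle, with the roles of red and blue possibly swapped). -/
def IsAltCycle {n : ℕ} (H₁ H₂ : Finset (Finset (Fin n))) (b : Bool) (m : ℕ)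
    (v : ℕ → Fin n) : Prop :=
  (∀ i < m, ∀ j < m, v i = v j → i = j) ∧
  ∀ i < m, ({v i, v ((i + 1) % m)} : Finset (Fin n)) ∈
    (if altColour b i then H₁ else H₂)

/-- The coloured graph `H₁ ∪ H₂` contains an alternating cycle (even or odd,
of any length). -/
def HasAltCycle {n : ℕ} (H₁ H₂ : Finset (Finset (Fin n))) : Prop :=
  ∃ (b : Bool) (m : ℕ) (v : ℕ → Fin n), 2 ≤ m ∧ IsAltCycle H₁ H₂ b m v

/-! ### Auxiliary machinery -/

section Aux

/-- classical indicator of a proposition -/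
noncomputable def cind (Q : Prop) : ℝ := if Q then 1 else 0

lemma cind_nonneg (Q : Prop) : 0 ≤ cind Q := by unfold cind; split <;> norm_num

lemma cind_le_one (Q : Prop) : cind Q ≤ 1 := by unfold cind; split <;> norm_num

lemma cind_eq_one {Q : Prop} (h : Q) : cind Q = 1 := by unfold cind; exact if_pos h

lemma cind_eq_zero {Q : Prop} (h : ¬ Q) : cind Q = 0 := by unfold cind; exact if_neg h

lemma cind_le {Q R : Prop} (h : Q → R) : cind Q ≤ cind R := by
  unfold cind
  by_cases hq : Q
  · rw [if_pos hq, if_pos (h hq)]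
  · rw [if_neg hq]
    split <;> norm_num

lemma cind_spec (Q : Prop) [Decidable Q] : cind Q = if Q then 1 else 0 := by
  unfold cind
  by_cases h : Q <;> simp [h]

lemma cind_not (Q : Prop) : cind (¬ Q) = 1 - cind Q := by
  unfold cind
  by_cases hq : Q
  · rw [if_pos hq, if_neg (not_not_intro hq)]; norm_num
  · rw [if_neg hq, if_pos hq]; norm_num

noncomputable def bwt {α : Type*} (A : Finset α) (p : ℝ) (S : Finset α) : ℝ :=
  p ^ S.card * (1 - p) ^ (A.card - S.card)

noncomputable def bmu {α : Type*} (A : Finset α) (p : ℝ) (f : Finset α → ℝ) : ℝ :=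
  ∑ S ∈ A.powerset, bwt A p S * f S

lemma bwt_nonneg {α : Type*} {A : Finset α} {p : ℝ} (h0 : 0 ≤ p) (h1 : p ≤ 1)
    (S : Finset α) : 0 ≤ bwt A p S := by
  unfold bwt
  exact mul_nonneg (pow_nonneg h0 _) (pow_nonneg (by linarith) _)

lemma bmu_total {α : Type*} (A : Finset α) (p : ℝ) :
    bmu A p (fun _ => 1) = 1 := by
  unfold bmu bwt
  have h := Finset.prod_add (fun _ : α => p) (fun _ : α => 1 - p) A
  simp only [Finset.prod_const] at h
  have : ∀ S ∈ A.powerset, p ^ S.card * (1 - p) ^ (A.card - S.card) * 1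
      = p ^ S.card * (1 - p) ^ (A \ S).card := by
    intro S hS
    rw [Finset.card_sdiff_of_subset (Finset.mem_powerset.mp hS), mul_one]
  rw [Finset.sum_congr rfl this, ← h]
  simp

lemma bmu_mono {α : Type*} {A : Finset α} {p : ℝ} (h0 : 0 ≤ p) (h1 : p ≤ 1)
    {f g : Finset α → ℝ} (hfg : ∀ S, f S ≤ g S) : bmu A p f ≤ bmu A p g := by
  refine Finset.sum_le_sum fun S _ => ?_
  exact mul_le_mul_of_nonneg_left (hfg S) (bwt_nonneg h0 h1 S)

lemma harris {α : Type*} {p : ℝ} (h0 : 0 ≤ p) (h1 : p ≤ 1)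
    (A : Finset α) (f g : Finset α → ℝ) (hf : ∀ S T : Finset α, S ⊆ T → f T ≤ f S)
    (hg : ∀ S T : Finset α, S ⊆ T → g T ≤ g S) :
    bmu A p f * bmu A p g ≤ bmu A p (fun S => f S * g S) := by
  induction A using Finset.induction generalizing f g with
  | empty => simp [bmu, bwt]
  | @insert a A ha ih =>
    have hinj : ∀ S ∈ A.powerset, ∀ T ∈ A.powerset, insert a S = insert a T → S = T := by
      intro S hS T hT h
      have haS : a ∉ S := fun h' => ha ((Finset.mem_powerset.mp hS) h')
      have haT : a ∉ T := fun h' => ha ((Finset.mem_powerset.mp hT) h')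
      rw [← Finset.erase_insert haS, ← Finset.erase_insert haT, h]
    have hdisj : Disjoint A.powerset (A.powerset.image (insert a)) := by
      rw [Finset.disjoint_left]
      intro S hS hS'
      obtain ⟨T, hT, rfl⟩ := Finset.mem_image.mp hS'
      exact ha ((Finset.mem_powerset.mp hS) (Finset.mem_insert_self a T))
    have hsplit : ∀ h : Finset α → ℝ,
        bmu (insert a A) p h = (1 - p) * bmu A p h + p * bmu A p (fun S => h (insert a S)) := by
      intro h
      unfold bmu
      rw [Finset.powerset_insert, Finset.sum_union hdisj, Finset.sum_image hinj]
      rw [Finset.mul_sum, Finset.mul_sum]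
      congr 1
      · refine Finset.sum_congr rfl fun S hS => ?_
        have hle : S.card ≤ A.card := Finset.card_le_card (Finset.mem_powerset.mp hS)
        have : (insert a A).card - S.card = (A.card - S.card) + 1 := by
          rw [Finset.card_insert_of_notMem ha]; omega
        unfold bwt
        rw [Finset.card_insert_of_notMem ha] at this ⊢
        rw [this, pow_succ]
        ring
      · refine Finset.sum_congr rfl fun S hS => ?_
        have haS : a ∉ S := fun h' => ha ((Finset.mem_powerset.mp hS) h')
        have hle : S.card ≤ A.card := Finset.card_le_card (Finset.mem_powerset.mp hS)
        unfold bwt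
        rw [Finset.card_insert_of_notMem ha, Finset.card_insert_of_notMem haS,
          pow_succ]
        have : A.card + 1 - (S.card + 1) = A.card - S.card := by omega
        rw [this]
        ring
    rw [hsplit f, hsplit g, hsplit (fun S => f S * g S)]
    set f0 := bmu A p f
    set f1 := bmu A p (fun S => f (insert a S))
    set g0 := bmu A p g
    set g1 := bmu A p (fun S => g (insert a S))
    have hf1 : ∀ S T : Finset α, S ⊆ T → f (insert a T) ≤ f (insert a S) :=
      fun S T h => hf _ _ (Finset.insert_subset_insert a h)
    have hg1 : ∀ S T : Finset α, S ⊆ T → g (insert a T) ≤ g (insert a S) :=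
      fun S T h => hg _ _ (Finset.insert_subset_insert a h)
    have ih0 : f0 * g0 ≤ bmu A p (fun S => f S * g S) := ih f g hf hg
    have ih1 : f1 * g1 ≤ bmu A p (fun S => f (insert a S) * g (insert a S)) :=
      ih _ _ hf1 hg1
    have hf10 : f1 ≤ f0 := bmu_mono h0 h1 (fun S => hf S (insert a S) (Finset.subset_insert a S))
    have hg10 : g1 ≤ g0 := bmu_mono h0 h1 (fun S => hg S (insert a S) (Finset.subset_insert a S))
    have key : ((1-p) * f0 + p * f1) * ((1-p) * g0 + p * g1) ≤
        (1-p) * (f0 * g0) + p * (f1 * g1) := by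
      nlinarith [mul_nonneg (mul_nonneg h0 (by linarith : (0:ℝ) ≤ 1 - p))
        (mul_nonneg (sub_nonneg.mpr hf10) (sub_nonneg.mpr hg10))]
    calc ((1-p) * f0 + p * f1) * ((1-p) * g0 + p * g1)
        ≤ (1-p) * (f0 * g0) + p * (f1 * g1) := key
      _ ≤ (1-p) * bmu A p (fun S => f S * g S)
            + p * bmu A p (fun S => f (insert a S) * g (insert a S)) := by
          have hp1 : (0:ℝ) ≤ 1 - p := by linarith
          gcongr

noncomputable def bmu2 {α : Type*} (A : Finset α) (p : ℝ)
    (F : Finset α → Finset α → ℝ) : ℝ :=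
  bmu A p (fun S => bmu A p (fun T => F S T))

/-- antitone in each variable -/
def Anti2 {α : Type*} (F : Finset α → Finset α → ℝ) : Prop :=
  ∀ S S' T T' : Finset α, S ⊆ S' → T ⊆ T' → F S' T' ≤ F S T

lemma harris2 {α : Type*} {p : ℝ} (h0 : 0 ≤ p) (h1 : p ≤ 1)
    (A : Finset α) (F G : Finset α → Finset α → ℝ) (hF : Anti2 F) (hG : Anti2 G) :
    bmu2 A p F * bmu2 A p G ≤ bmu2 A p (fun S T => F S T * G S T) := by
  have inner : ∀ S, bmu A p (fun T => F S T) * bmu A p (fun T => G S T)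
      ≤ bmu A p (fun T => F S T * G S T) := fun S =>
    harris h0 h1 A _ _ (fun T T' h => hF S S T T' (le_refl _) h)
      (fun T T' h => hG S S T T' (le_refl _) h)
  have outer : bmu A p (fun S => bmu A p (fun T => F S T))
      * bmu A p (fun S => bmu A p (fun T => G S T))
      ≤ bmu A p (fun S => bmu A p (fun T => F S T) * bmu A p (fun T => G S T)) :=
    harris h0 h1 A _ _
      (fun S S' h => bmu_mono h0 h1 (fun T => hF S S' T T h (le_refl _)))
      (fun S S' h => bmu_mono h0 h1 (fun T => hG S S' T T h (le_refl _)))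
  calc bmu2 A p F * bmu2 A p G
      ≤ bmu A p (fun S => bmu A p (fun T => F S T) * bmu A p (fun T => G S T)) := outer
    _ ≤ bmu2 A p (fun S T => F S T * G S T) :=
        bmu_mono h0 h1 (fun S => inner S)

lemma bmu2_nonneg {α : Type*} {p : ℝ} (h0 : 0 ≤ p) (h1 : p ≤ 1) (A : Finset α)
    {F : Finset α → Finset α → ℝ} (hF : ∀ S T, 0 ≤ F S T) : 0 ≤ bmu2 A p F := by
  refine Finset.sum_nonneg fun S _ => mul_nonneg (bwt_nonneg h0 h1 S) ?_
  exact Finset.sum_nonneg fun T _ => mul_nonneg (bwt_nonneg h0 h1 T) (hF S T)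

lemma bmu2_total {α : Type*} (A : Finset α) (p : ℝ) :
    bmu2 A p (fun _ _ => 1) = 1 := by
  unfold bmu2
  have h : (fun S : Finset α => bmu A p (fun _ => (1:ℝ))) = fun _ => (1:ℝ) :=
    funext fun S => bmu_total A p
  rw [h]
  exact bmu_total A p

lemma bmu2_mono {α : Type*} {A : Finset α} {p : ℝ} (h0 : 0 ≤ p) (h1 : p ≤ 1)
    {F G : Finset α → Finset α → ℝ} (h : ∀ S T, F S T ≤ G S T) :
    bmu2 A p F ≤ bmu2 A p G :=
  bmu_mono h0 h1 (fun S => bmu_mono h0 h1 (fun T => h S T))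

lemma harris_prod {α ι : Type*} {p : ℝ} (h0 : 0 ≤ p) (h1 : p ≤ 1)
    (A : Finset α) (I : Finset ι) (F : ι → Finset α → Finset α → ℝ)
    (hA : ∀ i ∈ I, Anti2 (F i)) (hnn : ∀ i ∈ I, ∀ S T, 0 ≤ F i S T) :
    ∏ i ∈ I, bmu2 A p (F i) ≤ bmu2 A p (fun S T => ∏ i ∈ I, F i S T) := by
  induction I using Finset.induction with
  | empty => simp [bmu2, bmu_total A p]
  | @insert j I hj ih =>
    rw [Finset.prod_insert hj]
    have hrest : ∏ i ∈ I, bmu2 A p (F i) ≤ bmu2 A p (fun S T => ∏ i ∈ I, F i S T) :=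
      ih (fun i hi => hA i (Finset.mem_insert_of_mem hi))
        (fun i hi => hnn i (Finset.mem_insert_of_mem hi))
    have hj' : 0 ≤ bmu2 A p (F j) :=
      bmu2_nonneg h0 h1 A (hnn j (Finset.mem_insert_self j I))
    have hAnti : Anti2 (fun S T => ∏ i ∈ I, F i S T) := by
      intro S S' T T' hS hT
      refine Finset.prod_le_prod (fun i hi => hnn i (Finset.mem_insert_of_mem hi) S' T')
        (fun i hi => hA i (Finset.mem_insert_of_mem hi) S S' T T' hS hT)
    calc bmu2 A p (F j) * ∏ i ∈ I, bmu2 A p (F i)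
        ≤ bmu2 A p (F j) * bmu2 A p (fun S T => ∏ i ∈ I, F i S T) := by
          exact mul_le_mul_of_nonneg_left hrest hj'
      _ ≤ bmu2 A p (fun S T => F j S T * ∏ i ∈ I, F i S T) :=
          harris2 h0 h1 A _ _ (hA j (Finset.mem_insert_self j I)) hAnti
      _ = bmu2 A p (fun S T => ∏ i ∈ insert j I, F i S T) := by
          simp only [Finset.prod_insert hj]

lemma bmu_subset_ind {α : Type*} (A : Finset α) (p : ℝ) {S : Finset α} (hS : S ⊆ A) :
    bmu A p (fun H => cind (S ⊆ H)) = p ^ S.card := by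
  unfold bmu
  simp only [cind_spec]
  rw [show (∑ H ∈ A.powerset, bwt A p H * if S ⊆ H then 1 else 0)
      = ∑ H ∈ A.powerset.filter (fun H => S ⊆ H), bwt A p H by
    rw [Finset.sum_filter]
    exact Finset.sum_congr rfl fun H _ => by split <;> simp]
  have himg : A.powerset.filter (fun H => S ⊆ H)
      = (A \ S).powerset.image (fun K => S ∪ K) := by
    ext H
    simp only [Finset.mem_filter, Finset.mem_powerset, Finset.mem_image]
    constructor
    · rintro ⟨hHA, hSH⟩
      exact ⟨H \ S, by
        refine ⟨Finset.sdiff_subset_sdiff hHA (le_refl _), ?_⟩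
        rw [Finset.union_sdiff_of_subset hSH]⟩
    · rintro ⟨K, hK, rfl⟩
      constructor
      · exact Finset.union_subset hS (hK.trans Finset.sdiff_subset)
      · exact Finset.subset_union_left
  rw [himg, Finset.sum_image]
  · have hcard : ∀ K ∈ (A \ S).powerset, bwt A p (S ∪ K)
        = p ^ S.card * bwt (A \ S) p K := by
      intro K hK
      have hK' : K ⊆ A \ S := Finset.mem_powerset.mp hK
      have hdisj : Disjoint S K :=
        Finset.disjoint_left.mpr fun a haS haK =>
          (Finset.mem_sdiff.mp (hK' haK)).2 haS
      unfold bwt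
      rw [Finset.card_union_of_disjoint hdisj, Finset.card_sdiff_of_subset hS]
      have hSA : S.card ≤ A.card := Finset.card_le_card hS
      have hKA : K.card ≤ A.card - S.card := by
        have := Finset.card_le_card hK'
        rwa [Finset.card_sdiff_of_subset hS] at this
      rw [show A.card - (S.card + K.card) = A.card - S.card - K.card by omega]
      ring
    rw [Finset.sum_congr rfl hcard, ← Finset.mul_sum]
    have := bmu_total (A \ S) p
    unfold bmu at this
    simp only [mul_one] at this
    rw [this, mul_one]
  · intro K hK K' hK' h
    have h1 : Disjoint S K := Finset.disjoint_left.mpr fun a haS haK =>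
      (Finset.mem_sdiff.mp ((Finset.mem_powerset.mp hK) haK)).2 haS
    have h2 : Disjoint S K' := Finset.disjoint_left.mpr fun a haS haK =>
      (Finset.mem_sdiff.mp ((Finset.mem_powerset.mp hK') haK)).2 haS
    have : (S ∪ K) \ S = (S ∪ K') \ S := by rw [show S ∪ K = S ∪ K' from h]
    rwa [Finset.union_sdiff_cancel_left h1, Finset.union_sdiff_cancel_left h2] at this

lemma bmu_const_mul {α : Type*} (A : Finset α) (p : ℝ) (cc : ℝ) (g : Finset α → ℝ) :
    bmu A p (fun T => cc * g T) = cc * bmu A p g := by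
  unfold bmu
  rw [Finset.mul_sum]
  exact Finset.sum_congr rfl fun S _ => by ring

lemma bmu_mul_const {α : Type*} (A : Finset α) (p : ℝ) (cc : ℝ) (g : Finset α → ℝ) :
    bmu A p (fun T => g T * cc) = bmu A p g * cc := by
  unfold bmu
  rw [Finset.sum_mul]
  exact Finset.sum_congr rfl fun S _ => by ring

lemma bmu_one_sub {α : Type*} (A : Finset α) (p : ℝ) (f : Finset α → ℝ) :
    bmu A p (fun S => 1 - f S) = 1 - bmu A p f := by
  have h1 : ∀ S : Finset α, bwt A p S * (1 - f S) = bwt A p S * 1 - bwt A p S * f S :=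
    fun S => by ring
  unfold bmu
  rw [Finset.sum_congr rfl fun S _ => h1 S, Finset.sum_sub_distrib]
  have := bmu_total A p
  unfold bmu at this
  rw [this]

lemma bmu2_factor {α : Type*} (A : Finset α) (p : ℝ) (f g : Finset α → ℝ) :
    bmu2 A p (fun S T => f S * g T) = bmu A p f * bmu A p g := by
  unfold bmu2
  have h1 : ∀ S, bmu A p (fun T => f S * g T) = f S * bmu A p g :=
    fun S => bmu_const_mul A p (f S) g
  have h2 : (fun S => bmu A p (fun T => f S * g T)) = fun S => f S * bmu A p g :=
    funext h1
  rw [h2]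
  exact bmu_mul_const A p _ f

lemma bmu2_one_sub {α : Type*} (A : Finset α) (p : ℝ) (F : Finset α → Finset α → ℝ) :
    bmu2 A p (fun S T => 1 - F S T) = 1 - bmu2 A p F := by
  unfold bmu2
  have h1 : ∀ S, bmu A p (fun T => 1 - F S T) = 1 - bmu A p (fun T => F S T) :=
    fun S => bmu_one_sub A p _
  have h2 : (fun S => bmu A p (fun T => 1 - F S T))
      = fun S => 1 - bmu A p (fun T => F S T) := funext h1
  rw [h2]
  exact bmu_one_sub A p _

lemma hasAlt_mono {n : ℕ} {H₁ H₂ H₁' H₂' : Finset (Finset (Fin n))}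
    (s1 : H₁ ⊆ H₁') (s2 : H₂ ⊆ H₂') (h : HasAltCycle H₁ H₂) : HasAltCycle H₁' H₂' := by
  obtain ⟨b, m, v, hm, hinj, hedge⟩ := h
  refine ⟨b, m, v, hm, hinj, fun i hi => ?_⟩
  have := hedge i hi
  by_cases hc : altColour b i = true <;> simp only [hc, if_true, if_false] at this ⊢
  · exact s1 this
  · exact s2 this

noncomputable def cstep {n : ℕ} (G : Finset (Finset (Fin n))) (v : Fin n) : Fin n :=
  if h : ∃ w, w ≠ v ∧ ({v, w} : Finset (Fin n)) ∈ G then h.choose else v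

lemma cstep_spec {n : ℕ} {G : Finset (Finset (Fin n))} {v : Fin n}
    (hG : ∀ e ∈ G, e.card = 2) (hv : ∃ e ∈ G, v ∈ e) :
    cstep G v ≠ v ∧ ({v, cstep G v} : Finset (Fin n)) ∈ G := by
  obtain ⟨e, he, hve⟩ := hv
  obtain ⟨a, b, hab, rfl⟩ := Finset.card_eq_two.mp (hG e he)
  have h : ∃ w, w ≠ v ∧ ({v, w} : Finset (Fin n)) ∈ G := by
    rcases Finset.mem_insert.mp hve with rfl | hb
    · exact ⟨b, Ne.symm hab, he⟩
    · rw [Finset.mem_singleton] at hb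
      subst hb
      exact ⟨a, hab, by rwa [Finset.pair_comm]⟩
  rw [cstep, dif_pos h]
  exact ⟨h.choose_spec.1, h.choose_spec.2⟩

theorem noAlt_covers {n : ℕ} (N : ℕ) : ∀ (H₁ H₂ : Finset (Finset (Fin n))),
    H₁.card + H₂.card ≤ N →
    (∀ e ∈ H₁, e.card = 2) → (∀ e ∈ H₂, e.card = 2) →
    ¬ HasAltCycle H₁ H₂ → DisjointCovers H₁ H₂ := by
  induction N using Nat.strong_induction_on with
  | _ N ih =>
  intro H₁ H₂ hN h₁ h₂ hno
  by_cases hA : ∃ v : Fin n, (∃ e ∈ H₁, v ∈ e) ∧ ∀ e ∈ H₂, v ∉ e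
  · obtain ⟨v, ⟨e₀, he₀, hve₀⟩, hvB⟩ := hA
    set H₁' := H₁.filter (fun e => v ∉ e) with hH₁'
    have hssub : H₁' ⊂ H₁ := by
      refine ⟨Finset.filter_subset _ _, fun hsub => ?_⟩
      have := hsub he₀
      rw [hH₁', Finset.mem_filter] at this
      exact this.2 hve₀
    have hcard : H₁'.card < H₁.card := Finset.card_lt_card hssub
    have hM : H₁'.card + H₂.card < N := by omega
    obtain ⟨C₁, C₂, hdisj, hc1, hc2⟩ :=
      ih _ hM H₁' H₂ (le_refl _) (fun e he => h₁ e (Finset.filter_subset _ _ he)) h₂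
        (fun h => hno (hasAlt_mono (Finset.filter_subset _ _) (le_refl _) h))
    refine ⟨insert v C₁, C₂.erase v, ?_, ?_, ?_⟩
    · rw [Finset.disjoint_left]
      intro a ha ha'
      rcases Finset.mem_insert.mp ha with rfl | haC
      · exact (Finset.mem_erase.mp ha').1 rfl
      · exact Finset.disjoint_left.mp hdisj haC (Finset.mem_erase.mp ha').2
    · intro e he
      by_cases hve : v ∈ e
      · exact ⟨v, hve, Finset.mem_insert_self v C₁⟩
      · obtain ⟨u, hu, huC⟩ := hc1 e (Finset.mem_filter.mpr ⟨he, hve⟩)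
        exact ⟨u, hu, Finset.mem_insert_of_mem huC⟩
    · intro e he
      obtain ⟨u, hu, huC⟩ := hc2 e he
      refine ⟨u, hu, Finset.mem_erase.mpr ⟨?_, huC⟩⟩
      rintro rfl
      exact hvB e he hu
  by_cases hB : ∃ v : Fin n, (∃ e ∈ H₂, v ∈ e) ∧ ∀ e ∈ H₁, v ∉ e
  · obtain ⟨v, ⟨e₀, he₀, hve₀⟩, hvA⟩ := hB
    set H₂' := H₂.filter (fun e => v ∉ e) with hH₂'
    have hssub : H₂' ⊂ H₂ := by
      refine ⟨Finset.filter_subset _ _, fun hsub => ?_⟩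
      have := hsub he₀
      rw [hH₂', Finset.mem_filter] at this
      exact this.2 hve₀
    have hcard : H₂'.card < H₂.card := Finset.card_lt_card hssub
    have hM : H₁.card + H₂'.card < N := by omega
    obtain ⟨C₁, C₂, hdisj, hc1, hc2⟩ :=
      ih _ hM H₁ H₂' (le_refl _) h₁ (fun e he => h₂ e (Finset.filter_subset _ _ he))
        (fun h => hno (hasAlt_mono (le_refl _) (Finset.filter_subset _ _) h))
    refine ⟨C₁.erase v, insert v C₂, ?_, ?_, ?_⟩
    · rw [Finset.disjoint_left]
      intro a ha ha'
      rcases Finset.mem_insert.mp ha' with rfl | haC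
      · exact (Finset.mem_erase.mp ha).1 rfl
      · exact Finset.disjoint_left.mp hdisj (Finset.mem_erase.mp ha).2 haC
    · intro e he
      obtain ⟨u, hu, huC⟩ := hc1 e he
      refine ⟨u, hu, Finset.mem_erase.mpr ⟨?_, huC⟩⟩
      rintro rfl
      exact hvA e he hu
    · intro e he
      by_cases hve : v ∈ e
      · exact ⟨v, hve, Finset.mem_insert_self v C₂⟩
      · obtain ⟨u, hu, huC⟩ := hc2 e (Finset.mem_filter.mpr ⟨he, hve⟩)
        exact ⟨u, hu, Finset.mem_insert_of_mem huC⟩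
  push_neg at hA hB
  by_cases hH1 : H₁ = ∅
  · refine ⟨∅, Finset.univ, Finset.disjoint_left.mpr (by simp), by simp [hH1], ?_⟩
    intro e he
    obtain ⟨a, b, hab, rfl⟩ := Finset.card_eq_two.mp (h₂ e he)
    exact ⟨a, Finset.mem_insert_self a _, Finset.mem_univ a⟩
  -- walk construction
  exfalso
  obtain ⟨e₀, he₀⟩ := Finset.nonempty_iff_ne_empty.mpr hH1
  obtain ⟨u₀, w₀, hu₀w₀, he₀eq⟩ := Finset.card_eq_two.mp (h₁ e₀ he₀)
  set cg : ℕ → Finset (Finset (Fin n)) := fun i => if Even i then H₁ else H₂ with hcg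
  have hcg2 : ∀ i, ∀ e ∈ cg i, e.card = 2 := by
    intro i e he
    rw [hcg] at he
    dsimp at he
    split at he
    · exact h₁ e he
    · exact h₂ e he
  set walk : ℕ → Fin n := fun i => Nat.rec u₀ (fun i vi => cstep (cg i) vi) i with hwalk
  have hwalk0 : walk 0 = u₀ := rfl
  have hwalksucc : ∀ i, walk (i+1) = cstep (cg i) (walk i) := fun i => rfl
  have hswap : ∀ i, ∀ e ∈ cg i, ∀ v : Fin n, v ∈ e → ∃ e' ∈ cg (i+1), v ∈ e' := by
    intro i e he v hv
    have hE : Even (i+1) ↔ ¬ Even i := Nat.even_add_one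
    rw [hcg]
    dsimp
    rw [hcg] at he
    dsimp at he
    by_cases hi : Even i
    · rw [if_pos hi] at he
      rw [if_neg (by rw [hE]; exact fun h => h hi)]
      exact hA v ⟨e, he, hv⟩
    · rw [if_neg hi] at he
      rw [if_pos (hE.mpr hi)]
      exact hB v ⟨e, he, hv⟩
  have hinv : ∀ i, ({walk i, walk (i+1)} : Finset (Fin n)) ∈ cg i ∧ walk (i+1) ≠ walk i := by
    intro i
    induction i with
    | zero =>
      have hu : ∃ e ∈ cg 0, walk 0 ∈ e := by
        refine ⟨e₀, ?_, ?_⟩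
        · rw [hcg]; simp [he₀]
        · rw [hwalk0, he₀eq]; exact Finset.mem_insert_self _ _
      have := cstep_spec (hcg2 0) hu
      rw [← hwalksucc 0] at this
      exact ⟨this.2, this.1⟩
    | succ i ihw =>
      have hu : ∃ e ∈ cg (i+1), walk (i+1) ∈ e :=
        hswap i _ ihw.1 (walk (i+1)) (Finset.mem_insert_of_mem (by simp))
      have := cstep_spec (hcg2 (i+1)) hu
      rw [← hwalksucc (i+1)] at this
      exact ⟨this.2, this.1⟩
  -- pigeonhole
  have hncard : Fintype.card (Fin n) < Fintype.card (Fin (n+1)) := by simp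
  obtain ⟨i1, i2, hne, heq⟩ :=
    Fintype.exists_ne_map_eq_of_card_lt (fun i : Fin (n+1) => walk i) hncard
  have hQ : ∃ j, ∃ i, i < j ∧ walk i = walk j := by
    rcases lt_or_gt_of_ne (show (i1:ℕ) ≠ (i2:ℕ) from fun h => hne (Fin.ext h)) with h | h
    · exact ⟨i2, i1, h, heq⟩
    · exact ⟨i1, i2, h, heq.symm⟩
  set j₀ := Nat.find hQ with hj₀
  obtain ⟨i, hij, hweq⟩ := Nat.find_spec hQ
  have hmin : ∀ j' < j₀, ¬ ∃ i, i < j' ∧ walk i = walk j' := fun j' hj' => Nat.find_min hQ hj'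
  set m := j₀ - i with hm
  have hm2 : 2 ≤ m := by
    have h1 : walk (i+1) ≠ walk i := (hinv i).2
    have hne2 : j₀ ≠ i + 1 := fun hh => h1 (by rw [← hh]; exact hweq.symm)
    omega
  set b : Bool := decide (Even i) with hb
  have hiff : ∀ k, (altColour b k = true) ↔ Even (i + k) := by
    intro k
    rw [altColour, hb]
    by_cases hi : Even i <;> by_cases hk2 : Even k <;>
      simp [hi, hk2, Nat.even_add] <;> tauto
  have hcolor : ∀ k, (if altColour b k then H₁ else H₂) = cg (i+k) := by
    intro k
    rw [hcg]
    dsimp only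
    by_cases hC : altColour b k = true
    · rw [if_pos hC, if_pos ((hiff k).mp hC)]
    · rw [if_neg hC, if_neg (fun h => hC ((hiff k).mpr h))]
  have hedge : ∀ k < m, ({walk (i+k), walk (i + (k+1) % m)} : Finset (Fin n)) ∈
      (if altColour b k then H₁ else H₂) := by
    intro k hk
    rw [hcolor k]
    by_cases hk1 : k + 1 < m
    · rw [Nat.mod_eq_of_lt hk1]
      exact (hinv (i+k)).1
    · have hkm : k + 1 = m := by omega
      rw [hkm, Nat.mod_self, add_zero]
      have h1 : i + k = j₀ - 1 := by omega
      have h2 : ({walk (j₀ - 1), walk j₀} : Finset (Fin n)) ∈ cg (j₀ - 1) := by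
        have := (hinv (j₀ - 1)).1
        rwa [show j₀ - 1 + 1 = j₀ by omega] at this
      rw [h1, hweq]
      exact h2
  apply hno
  refine ⟨b, m, fun k => walk (i + k), hm2, ?_, hedge⟩
  intro k hk l hl hkl
  by_contra hne'
  rcases Nat.lt_or_ge k l with h | h
  · exact hmin (i+l) (by omega) ⟨i+k, by omega, hkl⟩
  · have h' : l < k := by omega
    exact hmin (i+k) (by omega) ⟨i+l, by omega, hkl.symm⟩

variable {n : ℕ}

def vvv (hn0 : 0 < n) (w : Fin n → Fin n) (i : ℕ) : Fin n := w ⟨i % n, Nat.mod_lt i hn0⟩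

def GoodIdx (hn0 : 0 < n) (t : Bool × ℕ × (Fin n → Fin n)) : Prop :=
  (∀ k < t.2.1, ∀ l < t.2.1, vvv hn0 t.2.2 k = vvv hn0 t.2.2 l → k = l) ∧
  (∀ k : Fin n, t.2.1 ≤ (k : ℕ) → t.2.2 k = ⟨0, hn0⟩)

def EdgeOf (hn0 : 0 < n) (t : Bool × ℕ × (Fin n → Fin n)) (i : ℕ) : Finset (Fin n) :=
  {vvv hn0 t.2.2 i, vvv hn0 t.2.2 ((i + 1) % t.2.1)}

def EvIdx (hn0 : 0 < n) (t : Bool × ℕ × (Fin n → Fin n))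
    (S T : Finset (Finset (Fin n))) : Prop :=
  ∀ i < t.2.1, EdgeOf hn0 t i ∈ (if altColour t.1 i then S else T)

noncomputable def FIdx (hn0 : 0 < n) (t : Bool × ℕ × (Fin n → Fin n))
    (S T : Finset (Finset (Fin n))) : ℝ :=
  if GoodIdx hn0 t then cind (¬ EvIdx hn0 t S T) else 1

lemma FIdx_nonneg (hn0 : 0 < n) (t) (S T : Finset (Finset (Fin n))) :
    0 ≤ FIdx hn0 t S T := by
  unfold FIdx; split
  · exact cind_nonneg _
  · norm_num

lemma FIdx_le_one (hn0 : 0 < n) (t) (S T : Finset (Finset (Fin n))) :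
    FIdx hn0 t S T ≤ 1 := by
  unfold FIdx; split
  · exact cind_le_one _
  · norm_num

lemma EvIdx_mono (hn0 : 0 < n) (t : Bool × ℕ × (Fin n → Fin n))
    {S S' T T' : Finset (Finset (Fin n))}
    (hS : S ⊆ S') (hT : T ⊆ T') (h : EvIdx hn0 t S T) : EvIdx hn0 t S' T' := by
  intro i hi
  have := h i hi
  by_cases hc : altColour t.1 i = true <;> simp only [hc, if_true, if_false] at this ⊢
  · exact hS this
  · exact hT this

lemma FIdx_anti (hn0 : 0 < n) (t : Bool × ℕ × (Fin n → Fin n)) :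
    Anti2 (FIdx hn0 t) := by
  intro S S' T T' hS hT
  unfold FIdx
  split
  · exact cind_le (fun h' h'' => h' (EvIdx_mono hn0 t hS hT h''))
  · exact le_refl _

lemma mod_succ_cases {m i : ℕ} (hi : i < m) :
    ((i + 1) % m = i + 1 ∧ i + 1 < m) ∨ ((i + 1) % m = 0 ∧ i + 1 = m) := by
  rcases Nat.lt_or_ge (i + 1) m with h | h
  · exact Or.inl ⟨Nat.mod_eq_of_lt h, h⟩
  · have h' : i + 1 = m := by omega
    exact Or.inr ⟨by rw [h', Nat.mod_self], h'⟩

/-- A cycle yields a good index whose event holds. -/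
lemma cover_lemma (hn0 : 0 < n) {S T : Finset (Finset (Fin n))} (h : HasAltCycle S T) :
    ∃ b m w, 2 ≤ m ∧ m ≤ n ∧ GoodIdx hn0 (b, m, w) ∧ EvIdx hn0 (b, m, w) S T := by
  obtain ⟨b, m, v, hm, hinj, hedge⟩ := h
  have hmn : m ≤ n := by
    have hinj' : Function.Injective (fun k : Fin m => v k) := by
      intro k l hkl
      exact Fin.ext (hinj k k.2 l l.2 hkl)
    have := Fintype.card_le_of_injective _ hinj'
    simpa using this
  set w : Fin n → Fin n := fun k => if h : (k : ℕ) < m then v k else ⟨0, hn0⟩ with hw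
  have hvv : ∀ i < m, vvv hn0 w i = v i := by
    intro i hi
    unfold vvv
    rw [hw]
    have h1 : i % n = i := Nat.mod_eq_of_lt (lt_of_lt_of_le hi hmn)
    simp only [h1]
    rw [dif_pos (show ((⟨i, lt_of_lt_of_le hi hmn⟩ : Fin n) : ℕ) < m from hi)]
  refine ⟨b, m, w, hm, hmn, ⟨?_, ?_⟩, ?_⟩
  · intro k hk l hl hkl
    rw [hvv k hk, hvv l hl] at hkl
    exact hinj k hk l hl hkl
  · intro k hk
    have hk' : m ≤ (k : ℕ) := hk
    rw [hw]
    exact dif_neg (by omega)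
  · intro i hi
    have hlt : (i + 1) % m < m := Nat.mod_lt _ (by omega)
    have : EdgeOf hn0 (b, m, w) i = {v i, v ((i + 1) % m)} := by
      unfold EdgeOf
      rw [show (b, m, w).2.2 = w from rfl]
      rw [hvv i hi, hvv _ hlt]
    rw [this]
    exact hedge i hi

lemma good_count (hn0 : 0 < n) (b : Bool) {m : ℕ} (hmn : m ≤ n) :
    ((Finset.univ : Finset (Fin n → Fin n)).filter
      (fun w => GoodIdx hn0 (b, m, w))).card ≤ n ^ m := by
  have hinj : Set.InjOn (fun (w : Fin n → Fin n) (j : Fin m) => w (Fin.castLE hmn j))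
      ((Finset.univ : Finset (Fin n → Fin n)).filter (fun w => GoodIdx hn0 (b, m, w))) := by
    intro w hw w' hw' h
    rw [Finset.mem_coe, Finset.mem_filter] at hw hw'
    funext k
    by_cases hk : (k : ℕ) < m
    · have h3 : Fin.castLE hmn ⟨(k : ℕ), hk⟩ = k := Fin.ext rfl
      have h2 : w (Fin.castLE hmn ⟨(k : ℕ), hk⟩) = w' (Fin.castLE hmn ⟨(k : ℕ), hk⟩) :=
        congrFun h ⟨(k : ℕ), hk⟩
      rwa [h3] at h2
    · exact (hw.2.2 k (le_of_not_gt hk)).trans (hw'.2.2 k (le_of_not_gt hk)).symm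
  have := Finset.card_le_card_of_injOn _ (fun w _ => Finset.mem_univ _) hinj
  calc _ ≤ (Finset.univ : Finset (Fin m → Fin n)).card := this
    _ = n ^ m := by rw [Finset.card_univ, Fintype.card_fun]; simp

set_option maxHeartbeats 2000000 in
/-- probability of a single cycle event -/
lemma ev_prob (hn0 : 0 < n) (p : ℝ) (b : Bool) {m : ℕ} (hm2 : 2 ≤ m) (hmn : m ≤ n)
    {w : Fin n → Fin n} (hg : GoodIdx hn0 (b, m, w)) :
    bmu2 (allEdges n 2) p (fun S T => cind (EvIdx hn0 (b, m, w) S T))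
      = p ^ m := by
  have hinj' : ∀ k < m, ∀ l < m, vvv hn0 w k = vvv hn0 w l → k = l := hg.1
  have hm0 : 0 < m := by omega
  set x : ℕ → Fin n := vvv hn0 w with hx
  have hmodlt : ∀ i, i < m → (i + 1) % m < m := fun i _ => Nat.mod_lt _ hm0
  have hidxne : ∀ i < m, (i + 1) % m ≠ i := by
    intro i hi h
    rcases mod_succ_cases hi with ⟨h1, h2⟩ | ⟨h1, h2⟩ <;> omega
  have hxne : ∀ i < m, x i ≠ x ((i + 1) % m) := by
    intro i hi h
    exact hidxne i hi (hinj' _ (hmodlt i hi) i hi h.symm)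
  have hEd : ∀ i, EdgeOf hn0 (b, m, w) i = {x i, x ((i + 1) % m)} := fun i => rfl
  have hcard2 : ∀ i < m, (EdgeOf hn0 (b, m, w) i).card = 2 := by
    intro i hi
    rw [hEd]
    exact Finset.card_pair (hxne i hi)
  have hsubA : ∀ i < m, EdgeOf hn0 (b, m, w) i ∈ allEdges n 2 := by
    intro i hi
    rw [allEdges, Finset.mem_filter]
    exact ⟨Finset.mem_univ _, hcard2 i hi⟩
  -- injectivity of edges within a colour class
  have hinjEd : ∀ i < m, ∀ j < m, altColour b i = altColour b j →
      EdgeOf hn0 (b, m, w) i = EdgeOf hn0 (b, m, w) j → i = j := by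
    intro i hi j hj hcol hEdij
    by_contra hne
    rw [hEd, hEd] at hEdij
    have h1 : x i = x j ∨ x i = x ((j + 1) % m) := by
      have : x i ∈ ({x j, x ((j + 1) % m)} : Finset (Fin n)) := by
        rw [← hEdij]; exact Finset.mem_insert_self _ _
      simpa using this
    have h2 : x ((i + 1) % m) = x j ∨ x ((i + 1) % m) = x ((j + 1) % m) := by
      have : x ((i + 1) % m) ∈ ({x j, x ((j + 1) % m)} : Finset (Fin n)) := by
        rw [← hEdij]; exact Finset.mem_insert_of_mem (Finset.mem_singleton_self _)
      simpa using this
    have e1 : i = j ∨ i = (j + 1) % m :=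
      h1.imp (hinj' i hi j hj) (hinj' i hi _ (hmodlt j hj))
    rcases e1 with h | hij1
    · exact hne h
    have e2 : (i + 1) % m = j ∨ (i + 1) % m = (j + 1) % m :=
      h2.imp (hinj' _ (hmodlt i hi) j hj) (hinj' _ (hmodlt i hi) _ (hmodlt j hj))
    rcases e2 with hji1 | h'
    · -- i = (j+1)%m and (i+1)%m = j
      rcases mod_succ_cases hi with ⟨ha, hb⟩ | ⟨ha, hb⟩ <;>
        rcases mod_succ_cases hj with ⟨hc, hd⟩ | ⟨hc, hd⟩
      · omega
      · -- j+1 = m, i = 0, j = 1, m = 2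
        have hi0 : i = 0 := by omega
        have hj1 : j = 1 := by omega
        rw [hi0, hj1] at hcol
        simp [altColour, Nat.even_iff] at hcol
      · -- i+1 = m, j = 0, i = 1, m = 2
        have hj0 : j = 0 := by omega
        have hi1 : i = 1 := by omega
        rw [hi1, hj0] at hcol
        simp [altColour, Nat.even_iff] at hcol
      · omega
    · -- (i+1)%m = (j+1)%m implies i = j
      apply hne
      rcases mod_succ_cases hi with ⟨ha, hb⟩ | ⟨ha, hb⟩ <;>
        rcases mod_succ_cases hj with ⟨hc, hd⟩ | ⟨hc, hd⟩ <;> omega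
  set Sreq := ((Finset.range m).filter (fun i => altColour b i = true)).image
    (EdgeOf hn0 (b, m, w)) with hSreq
  set Treq := ((Finset.range m).filter (fun i => ¬ altColour b i = true)).image
    (EdgeOf hn0 (b, m, w)) with hTreq
  have hSsub : Sreq ⊆ allEdges n 2 := by
    intro e he
    obtain ⟨i, hi, rfl⟩ := Finset.mem_image.mp he
    rw [Finset.mem_filter, Finset.mem_range] at hi
    exact hsubA i hi.1
  have hTsub : Treq ⊆ allEdges n 2 := by
    intro e he
    obtain ⟨i, hi, rfl⟩ := Finset.mem_image.mp he
    rw [Finset.mem_filter, Finset.mem_range] at hi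
    exact hsubA i hi.1
  have hScard : Sreq.card = ((Finset.range m).filter (fun i => altColour b i = true)).card := by
    apply Finset.card_image_of_injOn
    intro i hi j hj h
    rw [Finset.mem_coe, Finset.mem_filter, Finset.mem_range] at hi hj
    exact hinjEd i hi.1 j hj.1 (hi.2.trans hj.2.symm) h
  have hTcard : Treq.card
      = ((Finset.range m).filter (fun i => ¬ altColour b i = true)).card := by
    apply Finset.card_image_of_injOn
    intro i hi j hj h
    rw [Finset.mem_coe, Finset.mem_filter, Finset.mem_range] at hi hj
    have : altColour b i = altColour b j :=
      (Bool.eq_false_iff.mpr hi.2).trans (Bool.eq_false_iff.mpr hj.2).symm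
    exact hinjEd i hi.1 j hj.1 this h
  have hsum : Sreq.card + Treq.card = m := by
    rw [hScard, hTcard, Finset.card_filter_add_card_filter_not, Finset.card_range]
  have hEvIff : ∀ S T : Finset (Finset (Fin n)),
      EvIdx hn0 (b, m, w) S T ↔ (Sreq ⊆ S ∧ Treq ⊆ T) := by
    intro S T
    constructor
    · intro h
      constructor
      · intro e he
        obtain ⟨i, hi, rfl⟩ := Finset.mem_image.mp he
        rw [Finset.mem_filter, Finset.mem_range] at hi
        have := h i hi.1
        rwa [if_pos hi.2] at this
      · intro e he
        obtain ⟨i, hi, rfl⟩ := Finset.mem_image.mp he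
        rw [Finset.mem_filter, Finset.mem_range] at hi
        have := h i hi.1
        rwa [if_neg hi.2] at this
    · rintro ⟨hS, hT⟩ i hi
      by_cases hc : altColour b i = true
      · rw [if_pos hc]
        exact hS (Finset.mem_image.mpr ⟨i, Finset.mem_filter.mpr
          ⟨Finset.mem_range.mpr hi, hc⟩, rfl⟩)
      · rw [if_neg hc]
        exact hT (Finset.mem_image.mpr ⟨i, Finset.mem_filter.mpr
          ⟨Finset.mem_range.mpr hi, hc⟩, rfl⟩)
  have hfun : (fun S T => cind (EvIdx hn0 (b, m, w) S T))
      = fun S T => cind (Sreq ⊆ S) * cind (Treq ⊆ T) := by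
    funext S T
    by_cases h : EvIdx hn0 (b, m, w) S T
    · rw [cind_eq_one h]
      obtain ⟨h1, h2⟩ := (hEvIff S T).mp h
      rw [cind_eq_one h1, cind_eq_one h2, mul_one]
    · rw [cind_eq_zero h]
      rcases not_and_or.mp (fun hc => h ((hEvIff S T).mpr hc)) with h1 | h1
      · rw [cind_eq_zero h1, zero_mul]
      · rw [cind_eq_zero h1, mul_zero]
  rw [hfun, bmu2_factor, bmu_subset_ind _ p hSsub, bmu_subset_ind _ p hTsub,
    ← pow_add, hsum]

lemma one_sub_ge {x : ℝ} (h0 : 0 ≤ x) (h2 : x ≤ 1/2) : Real.exp (-(2*x)) ≤ 1 - x := by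
  have h1 : 1 + 2*x ≤ Real.exp (2*x) := by
    have := Real.add_one_le_exp (2*x)
    linarith
  have hpos : (0:ℝ) < 1 + 2*x := by linarith
  rw [Real.exp_neg]
  have h4 : (Real.exp (2*x))⁻¹ ≤ (1 + 2*x)⁻¹ :=
    inv_anti₀ hpos h1
  refine h4.trans ?_
  rw [inv_eq_one_div, div_le_iff₀ hpos]
  nlinarith

lemma geom_eq (c : ℝ) {n : ℕ} (hn : 1 ≤ n) :
    (∑ m ∈ Finset.Icc 2 n, c ^ m) * (1 - c) = c^2 - c^(n+1) := by
  induction n, hn using Nat.le_induction with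
  | base =>
    rw [show Finset.Icc 2 1 = ∅ from Finset.Icc_eq_empty (by omega)]
    simp
  | succ n hn ih =>
    rw [Finset.sum_Icc_succ_top (by omega : 2 ≤ n+1), add_mul, ih]
    ring

lemma geom_bound (c : ℝ) (hc0 : 0 ≤ c) (hc1 : c < 1) (n : ℕ) :
    ∑ m ∈ Finset.Icc 2 n, c ^ m ≤ c^2 / (1 - c) := by
  rcases Nat.lt_or_ge n 1 with h | h
  · interval_cases n
    rw [show Finset.Icc 2 0 = ∅ from Finset.Icc_eq_empty (by omega)]
    simp
    exact div_nonneg (by positivity) (by linarith)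
  · rw [le_div_iff₀ (by linarith : (0:ℝ) < 1 - c), geom_eq c h]
    have : 0 ≤ c^(n+1) := pow_nonneg hc0 _
    linarith

lemma sum_q_bound {n : ℕ} (hn0 : 0 < n) {p c : ℝ} (hp0 : 0 ≤ p)
    (hnp : (n:ℝ) * p = c) (hc0 : 0 ≤ c) (hc1 : c < 1) :
    ∑ t ∈ ((Finset.univ : Finset Bool) ×ˢ (Finset.Icc 2 n ×ˢ
        (Finset.univ : Finset (Fin n → Fin n)))),
      (if GoodIdx hn0 t then p ^ t.2.1 else 0) ≤ 2 / (1 - c) := by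
  rw [Finset.sum_product]
  have hin : ∀ b : Bool,
      ∑ y ∈ (Finset.Icc 2 n ×ˢ (Finset.univ : Finset (Fin n → Fin n))),
        (if GoodIdx hn0 (b, y) then p ^ (b, y).2.1 else 0) ≤ 1 / (1 - c) := by
    intro b
    rw [Finset.sum_product]
    have hm : ∀ m ∈ Finset.Icc 2 n,
        ∑ w ∈ (Finset.univ : Finset (Fin n → Fin n)),
          (if GoodIdx hn0 (b, m, w) then p ^ (b, (m, w)).2.1 else 0) ≤ c ^ m := by
      intro m hmI
      have hmn : m ≤ n := (Finset.mem_Icc.mp hmI).2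
      have h1 : ∑ w ∈ (Finset.univ : Finset (Fin n → Fin n)),
          (if GoodIdx hn0 (b, m, w) then p ^ (b, (m, w)).2.1 else 0)
          = ∑ w ∈ (Finset.univ : Finset (Fin n → Fin n)).filter
              (fun w => GoodIdx hn0 (b, m, w)), p ^ m :=
        (Finset.sum_filter _ _).symm
      rw [h1, Finset.sum_const, nsmul_eq_mul]
      have hcount := good_count hn0 b hmn
      calc (((Finset.univ : Finset (Fin n → Fin n)).filter
              (fun w => GoodIdx hn0 (b, m, w))).card : ℝ) * p ^ m
          ≤ ((n ^ m : ℕ) : ℝ) * p ^ m := by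
            exact mul_le_mul_of_nonneg_right (Nat.cast_le.mpr hcount) (pow_nonneg hp0 m)
        _ = ((n:ℝ) * p) ^ m := by
            push_cast
            rw [mul_pow]
        _ = c ^ m := by rw [hnp]
    calc ∑ m ∈ Finset.Icc 2 n, ∑ w ∈ (Finset.univ : Finset (Fin n → Fin n)),
          (if GoodIdx hn0 (b, m, w) then p ^ (b, (m, w)).2.1 else 0)
        ≤ ∑ m ∈ Finset.Icc 2 n, c ^ m := Finset.sum_le_sum hm
      _ ≤ c^2 / (1 - c) := geom_bound c hc0 hc1 n
      _ ≤ 1 / (1 - c) := by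
          apply div_le_div_of_nonneg_right ?_ (by linarith)
          · nlinarith
  calc ∑ b ∈ (Finset.univ : Finset Bool),
        ∑ y ∈ (Finset.Icc 2 n ×ˢ (Finset.univ : Finset (Fin n → Fin n))),
          (if GoodIdx hn0 (b, y) then p ^ (b, y).2.1 else 0)
      ≤ ∑ _b ∈ (Finset.univ : Finset Bool), 1 / (1 - c) :=
        Finset.sum_le_sum (fun b _ => hin b)
    _ = 2 / (1 - c) := by
        rw [Finset.sum_const, Finset.card_univ]
        simp
        ring

lemma main_bound (c : ℝ) (hc0 : 0 < c) (hc1 : c < 1) {n : ℕ} (hn : 2 ≤ n) :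
    Real.exp (-4 / (1 - c)) ≤
      bmu2 (allEdges n 2) (c / (n:ℝ)) (fun S T => cind (¬ HasAltCycle S T)) := by
  have hn0 : 0 < n := by omega
  have hnR : (0:ℝ) < n := by exact_mod_cast hn0
  have hnR2 : (2:ℝ) ≤ n := by exact_mod_cast hn
  set p : ℝ := c / n with hp
  have hp0 : 0 ≤ p := div_nonneg hc0.le hnR.le
  have hnp : (n:ℝ) * p = c := by
    rw [hp]
    field_simp
  have hphalf : p ≤ 1/2 := by
    rw [hp, div_le_iff₀ hnR]
    nlinarith
  have hp1 : p ≤ 1 := by linarith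
  set A := allEdges n 2 with hA
  set I : Finset (Bool × ℕ × (Fin n → Fin n)) :=
    (Finset.univ : Finset Bool) ×ˢ (Finset.Icc 2 n ×ˢ
      (Finset.univ : Finset (Fin n → Fin n))) with hI
  have memI : ∀ t : Bool × ℕ × (Fin n → Fin n), t ∈ I ↔ (2 ≤ t.2.1 ∧ t.2.1 ≤ n) := by
    intro t
    rw [hI]
    simp [Finset.mem_product, Finset.mem_Icc]
  have step1 : bmu2 A p (fun S T => ∏ t ∈ I, FIdx hn0 t S T)
      ≤ bmu2 A p (fun S T => cind (¬ HasAltCycle S T)) := by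
    apply bmu2_mono hp0 hp1
    intro S T
    by_cases h : HasAltCycle S T
    · obtain ⟨b, m, w, hm2, hmn, hgood, hev⟩ := cover_lemma hn0 h
      have ht : (b, m, w) ∈ I := (memI _).mpr ⟨hm2, hmn⟩
      have hz : FIdx hn0 (b, m, w) S T = 0 := by
        unfold FIdx
        rw [if_pos hgood, cind_eq_zero (not_not_intro hev)]
      rw [Finset.prod_eq_zero ht hz]
      exact cind_nonneg _
    · rw [cind_eq_one h]
      exact Finset.prod_le_one (fun t _ => FIdx_nonneg hn0 t S T)
        (fun t _ => FIdx_le_one hn0 t S T)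
  have step2 : ∏ t ∈ I, bmu2 A p (FIdx hn0 t)
      ≤ bmu2 A p (fun S T => ∏ t ∈ I, FIdx hn0 t S T) :=
    harris_prod hp0 hp1 A I _ (fun t _ => FIdx_anti hn0 t)
      (fun t _ S T => FIdx_nonneg hn0 t S T)
  have hval : ∀ t ∈ I, bmu2 A p (FIdx hn0 t)
      = if GoodIdx hn0 t then 1 - p ^ t.2.1 else 1 := by
    rintro ⟨b, m, w⟩ ht
    obtain ⟨hm2, hmn⟩ := (memI _).mp ht
    by_cases hgood : GoodIdx hn0 (b, m, w)
    · rw [if_pos hgood]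
      show bmu2 (allEdges n 2) p (FIdx hn0 (b, m, w)) = 1 - p ^ m
      have hfe : FIdx hn0 (b, m, w)
          = fun S T => 1 - cind (EvIdx hn0 (b, m, w) S T) := by
        funext S T
        unfold FIdx
        rw [if_pos hgood, cind_not]
      rw [hfe, bmu2_one_sub, ev_prob hn0 p b hm2 hmn hgood]
    · rw [if_neg hgood]
      have hfe : FIdx hn0 (b, m, w) = fun _ _ => (1:ℝ) := by
        funext S T
        unfold FIdx
        rw [if_neg hgood]
      rw [hfe]
      exact bmu2_total A p
  have hq := sum_q_bound hn0 hp0 hnp hc0.le hc1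
  have step3 : Real.exp (-4 / (1 - c)) ≤ ∏ t ∈ I, bmu2 A p (FIdx hn0 t) := by
    have hfac : ∀ t ∈ I,
        Real.exp (-(2 * (if GoodIdx hn0 t then p ^ t.2.1 else 0)))
          ≤ bmu2 A p (FIdx hn0 t) := by
      intro t ht
      rw [hval t ht]
      obtain ⟨hm2, hmn⟩ := (memI _).mp ht
      by_cases hgood : GoodIdx hn0 t
      · rw [if_pos hgood, if_pos hgood]
        apply one_sub_ge (pow_nonneg hp0 _)
        calc p ^ t.2.1 ≤ p ^ 2 := pow_le_pow_of_le_one hp0 hp1 hm2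
          _ ≤ 1/2 := by nlinarith
      · rw [if_neg hgood, if_neg hgood]
        simp
    calc Real.exp (-4 / (1 - c))
        ≤ Real.exp (∑ t ∈ I, -(2 * (if GoodIdx hn0 t then p ^ t.2.1 else 0))) := by
          apply Real.exp_le_exp.mpr
          have he : ∑ t ∈ I, -(2 * (if GoodIdx hn0 t then p ^ t.2.1 else 0))
              = -2 * ∑ t ∈ I, (if GoodIdx hn0 t then p ^ t.2.1 else 0) := by
            rw [Finset.mul_sum]
            exact Finset.sum_congr rfl fun t _ => by ring
          rw [he, show (-4 : ℝ) / (1 - c) = -2 * (2 / (1 - c)) by ring]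
          have hq' : ∑ t ∈ I, (if GoodIdx hn0 t then p ^ t.2.1 else 0) ≤ 2 / (1 - c) := hq
          linarith
        _ = ∏ t ∈ I, Real.exp (-(2 * (if GoodIdx hn0 t then p ^ t.2.1 else 0))) :=
          Real.exp_sum I _
        _ ≤ ∏ t ∈ I, bmu2 A p (FIdx hn0 t) :=
          Finset.prod_le_prod (fun t _ => (Real.exp_pos _).le) hfac
  exact step3.trans (step2.trans step1)

lemma probPair_eq (n : ℕ) (p : ℝ)
    (P : Finset (Finset (Fin n)) → Finset (Finset (Fin n)) → Prop) :
    probPair n 2 p P = bmu2 (allEdges n 2) p (fun S T => cind (P S T)) := by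
  unfold probPair bmu2 bmu bwt
  refine Finset.sum_congr rfl fun S _ => ?_
  rw [Finset.mul_sum]
  refine Finset.sum_congr rfl fun T _ => ?_
  by_cases h : P S T <;> simp [cind, h] <;> ring

lemma probPair_imp (n : ℕ) (p : ℝ) (hp0 : 0 ≤ p) (hp1 : p ≤ 1)
    (P Q : Finset (Finset (Fin n)) → Finset (Finset (Fin n)) → Prop)
    (h : ∀ S T, S ⊆ allEdges n 2 → T ⊆ allEdges n 2 → P S T → Q S T) :
    probPair n 2 p P ≤ probPair n 2 p Q := by
  unfold probPair
  refine Finset.sum_le_sum fun S hS => Finset.sum_le_sum fun T hT => ?_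
  have h1p : (0:ℝ) ≤ 1 - p := by linarith
  have hw : 0 ≤ (p ^ S.card * (1-p) ^ ((allEdges n 2).card - S.card)) *
      (p ^ T.card * (1-p) ^ ((allEdges n 2).card - T.card)) := by positivity
  by_cases hPST : P S T
  · rw [if_pos hPST,
      if_pos (h S T (Finset.mem_powerset.mp hS) (Finset.mem_powerset.mp hT) hPST)]
  · rw [if_neg hPST]
    split
    · exact hw
    · exact le_refl 0

end Aux

/-- For `0 < c < 1` and two independent random graphs `G(n, c/n)` (red and
blue), for all large `n` the probability that there is no alternating cycle is
at least `exp (−4/(1−c))`, and in particular disjoint covers exist with at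
least this (positive) probability. -/
theorem no_altCycle_positive_prob (c : ℝ) (hc0 : 0 < c) (hc1 : c < 1) :
    0 < Real.exp (-4 / (1 - c)) ∧
    ∃ n₀ : ℕ, ∀ n ≥ n₀,
      Real.exp (-4 / (1 - c)) ≤
        probPair n 2 (c / n) (fun H₁ H₂ => ¬ HasAltCycle H₁ H₂) ∧
      Real.exp (-4 / (1 - c)) ≤
        probPair n 2 (c / n) (fun H₁ H₂ => DisjointCovers H₁ H₂) := by
  refine ⟨Real.exp_pos _, 2, fun n hn => ?_⟩
  have hn0 : 0 < n := by omega
  have hnR : (0:ℝ) < n := by exact_mod_cast hn0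
  have hp0 : 0 ≤ c / n := div_nonneg hc0.le hnR.le
  have hp1 : c / n ≤ 1 := by
    rw [div_le_one hnR]
    have : (1:ℝ) ≤ n := by exact_mod_cast hn0
    linarith
  have h1 : Real.exp (-4 / (1 - c)) ≤
      probPair n 2 (c / n) (fun H₁ H₂ => ¬ HasAltCycle H₁ H₂) := by
    rw [probPair_eq]
    exact main_bound c hc0 hc1 hn
  have h2 : probPair n 2 (c / n) (fun H₁ H₂ => ¬ HasAltCycle H₁ H₂)
      ≤ probPair n 2 (c / n) (fun H₁ H₂ => DisjointCovers H₁ H₂) := by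
    apply probPair_imp n _ hp0 hp1
    intro S T hS hT hno
    refine noAlt_covers (S.card + T.card) S T (le_refl _) ?_ ?_ hno
    · intro e he
      have := hS he
      rw [allEdges, Finset.mem_filter] at this
      exact this.2
    · intro e he
      have := hT he
      rw [allEdges, Finset.mem_filter] at this
      exact this.2
  exact ⟨h1, h1.trans h2⟩
end
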